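/- arXiv:2510.10088 — 8 statements merged into one kernel-verified Lean document; each statement's English description precedes it below -/
import Mathlib

section
/- Let r ≥ 2 be an integer and let x > 0. Then the one-sided limit lim_{t→(1−r)⁺} [ Θ(r,r,t,x) − ζ(r)(1 + x^{r−1})/(t−(1−r)) ] exists and equals x^{r−1} ζ(r)(γ − log x) + γ ζ(r) + x^{r−1} Σ_{k=1}^{r−2} binom(r−1,k) x^{−k} ζ(r−k) ζ(k+1), where the limit is over real t > 1−r. -/
open Real Filter Topology Finset

noncomputable def Theta (r s t x : ℝ) : ℝ :=
  ∑' n : ℕ+, ∑' m : ℕ+, 1 / ((n : ℝ) ^ r * (m : ℝ) ^ s * ((n : ℝ) + (m : ℝ) * x) ^ t)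

noncomputable def zetaR (s : ℝ) : ℝ := ∑' n : ℕ+, 1 / (n : ℝ) ^ s

set_option maxHeartbeats 1000000
lemma pnat_one_le_real (n : ℕ+) : (1 : ℝ) ≤ (n : ℝ) := by exact_mod_cast n.one_le
lemma pnat_pos_real (n : ℕ+) : (0 : ℝ) < (n : ℝ) := lt_of_lt_of_le one_pos (pnat_one_le_real n)

noncomputable def pw (a : ℝ) (n : ℕ+) : ℝ := 1 / (n : ℝ) ^ a

lemma pw_nonneg (a : ℝ) (n : ℕ+) : 0 ≤ pw a n :=
  div_nonneg zero_le_one (Real.rpow_nonneg (pnat_pos_real n).le a)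

lemma pw_mul_sqrt {a : ℝ} (n : ℕ+) : pw a n * Real.sqrt (n : ℝ) = pw (a - 1/2) n := by
  have hn := pnat_pos_real n
  rw [pw, pw, Real.sqrt_eq_rpow,
    show (a : ℝ) = (a - 1/2) + 1/2 by ring, Real.rpow_add hn]
  field_simp
  ring

lemma summable_pw {a : ℝ} (ha : 1 < a) : Summable (pw a) := by
  have h : Summable (fun n : ℕ => 1 / (n : ℝ) ^ a) := Real.summable_one_div_nat_rpow.mpr ha
  have h2 := h.comp_injective (i := ((↑·) : ℕ+ → ℕ)) PNat.coe_injective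
  refine h2.congr fun n => ?_
  rw [pw]; norm_cast

lemma summable_two {a b : ℝ} (ha : 1 < a) (hb : 1 < b) :
    Summable (fun p : ℕ+ × ℕ+ => pw a p.1 * pw b p.2) :=
  Summable.mul_of_nonneg (summable_pw ha) (summable_pw hb)
    (fun n => pw_nonneg a n) (fun n => pw_nonneg b n)

lemma tsum_two {a b : ℝ} (ha : 1 < a) (hb : 1 < b) :
    ∑' p : ℕ+ × ℕ+, pw a p.1 * pw b p.2 = zetaR a * zetaR b :=
  (Summable.tsum_mul_tsum (summable_pw ha) (summable_pw hb) (summable_two ha hb)).symm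

lemma summable_two_scaled (c : ℝ) {a b : ℝ} (ha : 1 < a) (hb : 1 < b) :
    Summable (fun p : ℕ+ × ℕ+ => c * (pw a p.1 * pw b p.2)) :=
  (summable_two ha hb).mul_left c

lemma tsum_two_scaled (c : ℝ) {a b : ℝ} (ha : 1 < a) (hb : 1 < b) :
    ∑' p : ℕ+ × ℕ+, c * (pw a p.1 * pw b p.2) = c * (zetaR a * zetaR b) := by
  rw [tsum_mul_left, tsum_two ha hb]


lemma key_ineq {u v ε : ℝ} (hu : 0 < u) (huv : u ≤ v) (hε : 0 ≤ ε) :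
    u ^ (-ε) - v ^ (-ε) ≤ u ^ (-ε) * (ε * (2 * Real.sqrt ((v - u) / u))) := by
  have hv : 0 < v := lt_of_lt_of_le hu huv
  have hw1 : (1 : ℝ) ≤ v / u := (one_le_div hu).mpr huv
  have h1 : v ^ (-ε) = u ^ (-ε) * (v / u) ^ (-ε) := by
    rw [← Real.mul_rpow hu.le (by positivity)]
    congr 1
    field_simp
  rw [h1]
  have h2 : 1 - (v / u) ^ (-ε) ≤ ε * (2 * Real.sqrt ((v - u) / u)) := by
    have hexp : 1 - ε * Real.log (v / u) ≤ (v / u) ^ (-ε) := by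
      rw [Real.rpow_def_of_pos (by positivity)]
      have := Real.add_one_le_exp (Real.log (v / u) * (-ε))
      linarith
    have hlognn : 0 ≤ Real.log (v / u) := Real.log_nonneg hw1
    have hlog : Real.log (v / u) ≤ 2 * Real.sqrt ((v - u) / u) := by
      have hs : Real.log (v / u) = 2 * Real.log (Real.sqrt (v / u)) := by
        rw [Real.log_sqrt (by positivity)]; ring
      have h3 : Real.log (Real.sqrt (v / u)) ≤ Real.sqrt (v / u) - 1 :=
        Real.log_le_sub_one_of_pos (Real.sqrt_pos.mpr (by positivity))
      have h4 : Real.sqrt (v / u) - 1 ≤ Real.sqrt (v / u - 1) := by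
        have e1 : Real.sqrt (v / u) ^ 2 = v / u := Real.sq_sqrt (by positivity)
        have e2 : Real.sqrt (v / u - 1) ^ 2 = v / u - 1 := Real.sq_sqrt (by linarith)
        have e3 : (1:ℝ) ≤ Real.sqrt (v / u) := by
          rw [show (1:ℝ) = Real.sqrt 1 by simp]
          exact Real.sqrt_le_sqrt hw1
        nlinarith [Real.sqrt_nonneg (v / u - 1), Real.sqrt_nonneg (v / u)]
      have h5 : v / u - 1 = (v - u) / u := by field_simp
      rw [hs, ← h5]
      linarith
    nlinarith [mul_le_mul_of_nonneg_left hlog hε]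
  calc u ^ (-ε) - u ^ (-ε) * (v / u) ^ (-ε) = u ^ (-ε) * (1 - (v / u) ^ (-ε)) := by ring
    _ ≤ u ^ (-ε) * (ε * (2 * Real.sqrt ((v - u) / u))) :=
        mul_le_mul_of_nonneg_left h2 (Real.rpow_nonneg hu.le _)

noncomputable def dterm (x a b ε : ℝ) (p : ℕ+ × ℕ+) : ℝ :=
  pw a p.1 * pw b p.2 * ((p.1 : ℝ) + (p.2 : ℝ) * x) ^ (-ε)

noncomputable def Dsum (x a b ε : ℝ) : ℝ := ∑' p : ℕ+ × ℕ+, dterm x a b ε p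

lemma dterm_nonneg {x : ℝ} (hx : 0 < x) (a b ε : ℝ) (p : ℕ+ × ℕ+) : 0 ≤ dterm x a b ε p := by
  have h1 := pnat_pos_real p.1
  have h2 := pnat_pos_real p.2
  have h3 : (0:ℝ) < (p.1 : ℝ) + (p.2 : ℝ) * x := by nlinarith
  exact mul_nonneg (mul_nonneg (pw_nonneg _ _) (pw_nonneg _ _)) (Real.rpow_nonneg h3.le _)

lemma sandwich {f g h : ℕ+ × ℕ+ → ℝ} (hg : Summable g) (hh : Summable h)
    (h0 : ∀ p, 0 ≤ f p) (h1 : ∀ p, f p ≤ g p) (h2 : ∀ p, g p - f p ≤ h p) :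
    Summable f ∧ |(∑' p, f p) - ∑' p, g p| ≤ ∑' p, h p := by
  have hf : Summable f := Summable.of_nonneg_of_le h0 h1 hg
  refine ⟨hf, ?_⟩
  rw [abs_sub_comm, abs_of_nonneg (sub_nonneg.2 (Summable.tsum_le_tsum h1 hf hg)), ← Summable.tsum_sub hg hf]
  exact Summable.tsum_le_tsum h2 (hg.sub hf) hh

lemma middle_est {x a b : ℝ} (hx : 0 < x) (ha : 2 ≤ a) (hb : 2 ≤ b) {ε : ℝ} (hε : 0 < ε) :
    Summable (dterm x a b ε) ∧
    |Dsum x a b ε - zetaR a * zetaR b| ≤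
      ε * (2 * Real.sqrt (1 + x) * (zetaR (a - 1/2) * zetaR (b - 1/2))) := by
  have key : ∀ p : ℕ+ × ℕ+,
      (pw a p.1 * pw b p.2 - dterm x a b ε p) ≤
        ε * (2 * Real.sqrt (1 + x)) * (pw (a - 1/2) p.1 * pw (b - 1/2) p.2) ∧
      dterm x a b ε p ≤ pw a p.1 * pw b p.2 := by
    intro p
    have hn := pnat_pos_real p.1
    have hn1 := pnat_one_le_real p.1
    have hm := pnat_pos_real p.2
    have hm1 := pnat_one_le_real p.2
    set N := ((p.1 : ℕ+) : ℝ)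
    set M := ((p.2 : ℕ+) : ℝ)
    have hV : (1:ℝ) ≤ N + M * x := by nlinarith
    have hVpos : (0:ℝ) < N + M * x := by linarith
    have hle1 : (N + M * x) ^ (-ε) ≤ 1 :=
      Real.rpow_le_one_of_one_le_of_nonpos hV (by linarith)
    have hge0 : (0:ℝ) ≤ (N + M * x) ^ (-ε) := Real.rpow_nonneg hVpos.le _
    have hpw : 0 ≤ pw a p.1 * pw b p.2 := mul_nonneg (pw_nonneg _ _) (pw_nonneg _ _)
    constructor
    · have hk := key_ineq one_pos hV (le_of_lt hε)
      rw [Real.one_rpow, div_one, one_mul] at hk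
      -- hk : 1 - (N + M*x) ^ (-ε) ≤ ε * (2 * √(N + M*x - 1))
      have hsq : Real.sqrt (N + M * x - 1) ≤ Real.sqrt N * Real.sqrt M * Real.sqrt (1 + x) := by
        rw [← Real.sqrt_mul hn.le, ← Real.sqrt_mul (by positivity)]
        apply Real.sqrt_le_sqrt
        nlinarith [mul_nonneg hn.le (sub_nonneg.2 hm1), mul_nonneg (mul_nonneg hm.le hx.le) (sub_nonneg.2 hn1)]
      have step1 : pw a p.1 * pw b p.2 - dterm x a b ε p
          = pw a p.1 * pw b p.2 * (1 - (N + M * x) ^ (-ε)) := by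
        rw [dterm]; ring
      rw [step1]
      calc pw a p.1 * pw b p.2 * (1 - (N + M * x) ^ (-ε))
          ≤ pw a p.1 * pw b p.2 * (ε * (2 * Real.sqrt (N + M * x - 1))) :=
            mul_le_mul_of_nonneg_left hk hpw
        _ ≤ pw a p.1 * pw b p.2 * (ε * (2 * (Real.sqrt N * Real.sqrt M * Real.sqrt (1 + x)))) := by
            apply mul_le_mul_of_nonneg_left _ hpw
            have : (0:ℝ) ≤ ε * 2 := by linarith
            nlinarith [hsq]
        _ = ε * (2 * Real.sqrt (1 + x)) * ((pw a p.1 * Real.sqrt N) * (pw b p.2 * Real.sqrt M)) := by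
            ring
        _ = ε * (2 * Real.sqrt (1 + x)) * (pw (a - 1/2) p.1 * pw (b - 1/2) p.2) := by
            rw [pw_mul_sqrt, pw_mul_sqrt]
    · calc dterm x a b ε p ≤ pw a p.1 * pw b p.2 * 1 :=
            mul_le_mul_of_nonneg_left hle1 hpw
        _ = pw a p.1 * pw b p.2 := mul_one _
  have hg : Summable (fun p : ℕ+ × ℕ+ => pw a p.1 * pw b p.2) :=
    summable_two (by linarith) (by linarith)
  have hh : Summable (fun p : ℕ+ × ℕ+ =>
      ε * (2 * Real.sqrt (1 + x)) * (pw (a - 1/2) p.1 * pw (b - 1/2) p.2)) :=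
    summable_two_scaled _ (by linarith) (by linarith)
  obtain ⟨hs, hb'⟩ := sandwich hg hh (dterm_nonneg hx a b ε) (fun p => (key p).2) (fun p => (key p).1)
  refine ⟨hs, ?_⟩
  rw [Dsum, show zetaR a * zetaR b = ∑' p : ℕ+ × ℕ+, pw a p.1 * pw b p.2 from (tsum_two (by linarith) (by linarith)).symm]
  calc |(∑' p, dterm x a b ε p) - ∑' p : ℕ+ × ℕ+, pw a p.1 * pw b p.2|
      ≤ ∑' p : ℕ+ × ℕ+, ε * (2 * Real.sqrt (1 + x)) * (pw (a - 1/2) p.1 * pw (b - 1/2) p.2) := hb'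
    _ = ε * (2 * Real.sqrt (1 + x)) * (zetaR (a - 1/2) * zetaR (b - 1/2)) :=
        tsum_two_scaled _ (by linarith) (by linarith)
    _ = ε * (2 * Real.sqrt (1 + x) * (zetaR (a - 1/2) * zetaR (b - 1/2))) := by ring
  -- also need: tsum g inside the abs matches zetaR a * zetaR b

lemma pw_mul_rpow_neg {a ε : ℝ} (n : ℕ+) : pw a n * (n : ℝ) ^ (-ε) = pw (a + ε) n := by
  have hn := pnat_pos_real n
  rw [pw, pw, Real.rpow_add hn, Real.rpow_neg hn.le]
  field_simp

lemma pw_div_sqrt {a : ℝ} (n : ℕ+) : pw a n / Real.sqrt (n : ℝ) = pw (a + 1/2) n := by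
  have hn := pnat_pos_real n
  rw [pw, pw, Real.sqrt_eq_rpow, show (a : ℝ) + 1/2 = a + 1/2 by ring, Real.rpow_add hn]
  field_simp

lemma case0_est {x b : ℝ} (hx : 0 < x) (hb : 2 ≤ b) {ε : ℝ} (hε : 0 < ε) :
    Summable (dterm x 1 b ε) ∧
    |Dsum x 1 b ε - zetaR (1 + ε) * zetaR b| ≤
      ε * (2 * Real.sqrt x * (zetaR (3/2) * zetaR (b - 1/2))) := by
  have key : ∀ p : ℕ+ × ℕ+,
      (pw (1 + ε) p.1 * pw b p.2 - dterm x 1 b ε p) ≤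
        ε * (2 * Real.sqrt x) * (pw (3/2) p.1 * pw (b - 1/2) p.2) ∧
      dterm x 1 b ε p ≤ pw (1 + ε) p.1 * pw b p.2 := by
    intro p
    have hn := pnat_pos_real p.1
    have hn1 := pnat_one_le_real p.1
    have hm := pnat_pos_real p.2
    have hm1 := pnat_one_le_real p.2
    set N := ((p.1 : ℕ+) : ℝ)
    set M := ((p.2 : ℕ+) : ℝ)
    have hNV : N ≤ N + M * x := by nlinarith
    have hVpos : (0:ℝ) < N + M * x := by nlinarith
    have hgsplit : pw (1 + ε) p.1 * pw b p.2 = pw 1 p.1 * pw b p.2 * N ^ (-ε) := by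
      rw [show pw 1 p.1 * pw b p.2 * N ^ (-ε) = pw 1 p.1 * N ^ (-ε) * pw b p.2 by ring,
        pw_mul_rpow_neg]
    have hpw : 0 ≤ pw 1 p.1 * pw b p.2 := mul_nonneg (pw_nonneg _ _) (pw_nonneg _ _)
    constructor
    · have hk := key_ineq hn hNV (le_of_lt hε)
      have hNe : 0 ≤ N ^ (-ε) := Real.rpow_nonneg hn.le _
      have hNe1 : N ^ (-ε) ≤ 1 := Real.rpow_le_one_of_one_le_of_nonpos hn1 (by linarith)
      have hsq : Real.sqrt ((N + M * x - N) / N) ≤ Real.sqrt M * Real.sqrt x / Real.sqrt N := by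
        rw [show (N + M * x - N) / N = M * x / N by ring, ← Real.sqrt_mul hm.le,
          ← Real.sqrt_div (by positivity)]
      have step1 : pw (1 + ε) p.1 * pw b p.2 - dterm x 1 b ε p
          = pw 1 p.1 * pw b p.2 * (N ^ (-ε) - (N + M * x) ^ (-ε)) := by
        rw [hgsplit, dterm]; ring
      rw [step1]
      have hkk : N ^ (-ε) - (N + M * x) ^ (-ε)
          ≤ ε * (2 * (Real.sqrt M * Real.sqrt x / Real.sqrt N)) := by
        refine le_trans hk ?_
        have h2 : N ^ (-ε) * (ε * (2 * Real.sqrt ((N + M * x - N) / N)))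
            ≤ 1 * (ε * (2 * (Real.sqrt M * Real.sqrt x / Real.sqrt N))) := by
          apply mul_le_mul hNe1 _ _ zero_le_one
          · have : (0:ℝ) ≤ ε * 2 := by linarith
            nlinarith [hsq, Real.sqrt_nonneg ((N + M * x - N) / N)]
          · positivity
        linarith [h2]
      calc pw 1 p.1 * pw b p.2 * (N ^ (-ε) - (N + M * x) ^ (-ε))
          ≤ pw 1 p.1 * pw b p.2 * (ε * (2 * (Real.sqrt M * Real.sqrt x / Real.sqrt N))) :=
            mul_le_mul_of_nonneg_left hkk hpw
        _ = ε * (2 * Real.sqrt x) * ((pw 1 p.1 / Real.sqrt N) * (pw b p.2 * Real.sqrt M)) := by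
            ring
        _ = ε * (2 * Real.sqrt x) * (pw (3/2) p.1 * pw (b - 1/2) p.2) := by
            rw [pw_div_sqrt, pw_mul_sqrt]
            norm_num
    · rw [hgsplit, dterm]
      apply mul_le_mul_of_nonneg_left _ hpw
      exact Real.rpow_le_rpow_of_nonpos hn hNV (by linarith)
  have hg : Summable (fun p : ℕ+ × ℕ+ => pw (1 + ε) p.1 * pw b p.2) :=
    summable_two (by linarith) (by linarith)
  have hh : Summable (fun p : ℕ+ × ℕ+ =>
      ε * (2 * Real.sqrt x) * (pw (3/2) p.1 * pw (b - 1/2) p.2)) :=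
    summable_two_scaled _ (by norm_num) (by linarith)
  obtain ⟨hs, hb'⟩ := sandwich hg hh (dterm_nonneg hx 1 b ε) (fun p => (key p).2) (fun p => (key p).1)
  refine ⟨hs, ?_⟩
  rw [Dsum, show zetaR (1 + ε) * zetaR b = ∑' p : ℕ+ × ℕ+, pw (1 + ε) p.1 * pw b p.2 from
    (tsum_two (by linarith) (by linarith)).symm]
  calc |(∑' p, dterm x 1 b ε p) - ∑' p : ℕ+ × ℕ+, pw (1 + ε) p.1 * pw b p.2|
      ≤ ∑' p : ℕ+ × ℕ+, ε * (2 * Real.sqrt x) * (pw (3/2) p.1 * pw (b - 1/2) p.2) := hb'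
    _ = ε * (2 * Real.sqrt x) * (zetaR (3/2) * zetaR (b - 1/2)) :=
        tsum_two_scaled _ (by norm_num) (by linarith)
    _ = ε * (2 * Real.sqrt x * (zetaR (3/2) * zetaR (b - 1/2))) := by ring

lemma caseR_est {x a : ℝ} (hx : 0 < x) (ha : 2 ≤ a) {ε : ℝ} (hε : 0 < ε) (hε1 : ε ≤ 1) :
    Summable (dterm x a 1 ε) ∧
    |Dsum x a 1 ε - x ^ (-ε) * (zetaR a * zetaR (1 + ε))| ≤
      ε * (2 * max 1 x⁻¹ / Real.sqrt x * (zetaR (a - 1/2) * zetaR (3/2))) := by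
  have hxK : x ^ (-ε) ≤ max 1 x⁻¹ := by
    rcases le_or_gt 1 x with h1 | h1
    · exact le_trans (Real.rpow_le_one_of_one_le_of_nonpos h1 (by linarith)) (le_max_left _ _)
    · refine le_trans ?_ (le_max_right _ _)
      rw [show x⁻¹ = x ^ (-1 : ℝ) by rw [Real.rpow_neg_one]]
      exact Real.rpow_le_rpow_of_exponent_ge hx h1.le (by linarith)
  have key : ∀ p : ℕ+ × ℕ+,
      (x ^ (-ε) * (pw a p.1 * pw (1 + ε) p.2) - dterm x a 1 ε p) ≤
        ε * (2 * max 1 x⁻¹ / Real.sqrt x) * (pw (a - 1/2) p.1 * pw (3/2) p.2) ∧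
      dterm x a 1 ε p ≤ x ^ (-ε) * (pw a p.1 * pw (1 + ε) p.2) := by
    intro p
    have hn := pnat_pos_real p.1
    have hn1 := pnat_one_le_real p.1
    have hm := pnat_pos_real p.2
    have hm1 := pnat_one_le_real p.2
    set N := ((p.1 : ℕ+) : ℝ)
    set M := ((p.2 : ℕ+) : ℝ)
    have hMx : (0:ℝ) < M * x := by positivity
    have hMV : M * x ≤ N + M * x := by nlinarith
    have hVpos : (0:ℝ) < N + M * x := by nlinarith
    have hMxe : (M * x) ^ (-ε) = M ^ (-ε) * x ^ (-ε) := Real.mul_rpow hm.le hx.le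
    have hMe1 : M ^ (-ε) ≤ 1 := Real.rpow_le_one_of_one_le_of_nonpos hm1 (by linarith)
    have hMe0 : 0 ≤ M ^ (-ε) := Real.rpow_nonneg hm.le _
    have hxe0 : 0 ≤ x ^ (-ε) := Real.rpow_nonneg hx.le _
    have hgsplit : x ^ (-ε) * (pw a p.1 * pw (1 + ε) p.2)
        = pw a p.1 * pw 1 p.2 * (M * x) ^ (-ε) := by
      rw [hMxe, show pw a p.1 * pw 1 p.2 * (M ^ (-ε) * x ^ (-ε))
        = x ^ (-ε) * (pw a p.1 * (pw 1 p.2 * M ^ (-ε))) by ring, pw_mul_rpow_neg]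
    have hpw : 0 ≤ pw a p.1 * pw 1 p.2 := mul_nonneg (pw_nonneg _ _) (pw_nonneg _ _)
    have hK0 : (0:ℝ) < max 1 x⁻¹ := lt_max_of_lt_left one_pos
    constructor
    · have hk := key_ineq hMx hMV (le_of_lt hε)
      have hsq : Real.sqrt ((N + M * x - M * x) / (M * x))
          = Real.sqrt N / (Real.sqrt M * Real.sqrt x) := by
        rw [show (N + M * x - M * x) / (M * x) = N / (M * x) by ring,
          Real.sqrt_div hn.le, ← Real.sqrt_mul hm.le]
      have hMxK : (M * x) ^ (-ε) ≤ max 1 x⁻¹ := by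
        rw [hMxe]
        calc M ^ (-ε) * x ^ (-ε) ≤ 1 * max 1 x⁻¹ := mul_le_mul hMe1 hxK hxe0 zero_le_one
          _ = max 1 x⁻¹ := one_mul _
      have step1 : x ^ (-ε) * (pw a p.1 * pw (1 + ε) p.2) - dterm x a 1 ε p
          = pw a p.1 * pw 1 p.2 * ((M * x) ^ (-ε) - (N + M * x) ^ (-ε)) := by
        rw [hgsplit, dterm]; ring
      rw [step1]
      have hkk : (M * x) ^ (-ε) - (N + M * x) ^ (-ε)
          ≤ ε * (2 * max 1 x⁻¹ * (Real.sqrt N / (Real.sqrt M * Real.sqrt x))) := by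
        refine le_trans hk ?_
        rw [hsq]
        have h2 : (M * x) ^ (-ε) * (ε * (2 * (Real.sqrt N / (Real.sqrt M * Real.sqrt x))))
            ≤ max 1 x⁻¹ * (ε * (2 * (Real.sqrt N / (Real.sqrt M * Real.sqrt x)))) := by
          apply mul_le_mul_of_nonneg_right hMxK (by positivity)
        calc (M * x) ^ (-ε) * (ε * (2 * (Real.sqrt N / (Real.sqrt M * Real.sqrt x))))
            ≤ max 1 x⁻¹ * (ε * (2 * (Real.sqrt N / (Real.sqrt M * Real.sqrt x)))) := h2
          _ = ε * (2 * max 1 x⁻¹ * (Real.sqrt N / (Real.sqrt M * Real.sqrt x))) := by ring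
      calc pw a p.1 * pw 1 p.2 * ((M * x) ^ (-ε) - (N + M * x) ^ (-ε))
          ≤ pw a p.1 * pw 1 p.2 *
              (ε * (2 * max 1 x⁻¹ * (Real.sqrt N / (Real.sqrt M * Real.sqrt x)))) :=
            mul_le_mul_of_nonneg_left hkk hpw
        _ = ε * (2 * max 1 x⁻¹ / Real.sqrt x) *
              ((pw a p.1 * Real.sqrt N) * (pw 1 p.2 / Real.sqrt M)) := by
            rw [div_eq_mul_inv, div_eq_mul_inv, div_eq_mul_inv, mul_inv]
            ring
        _ = ε * (2 * max 1 x⁻¹ / Real.sqrt x) * (pw (a - 1/2) p.1 * pw (3/2) p.2) := by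
            rw [pw_mul_sqrt, pw_div_sqrt]
            norm_num
    · rw [hgsplit, dterm]
      apply mul_le_mul_of_nonneg_left _ hpw
      exact Real.rpow_le_rpow_of_nonpos hMx hMV (by linarith)
  have hg : Summable (fun p : ℕ+ × ℕ+ => x ^ (-ε) * (pw a p.1 * pw (1 + ε) p.2)) :=
    summable_two_scaled _ (by linarith) (by linarith)
  have hh : Summable (fun p : ℕ+ × ℕ+ =>
      ε * (2 * max 1 x⁻¹ / Real.sqrt x) * (pw (a - 1/2) p.1 * pw (3/2) p.2)) :=
    summable_two_scaled _ (by linarith) (by norm_num)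
  obtain ⟨hs, hb'⟩ := sandwich hg hh (dterm_nonneg hx a 1 ε) (fun p => (key p).2) (fun p => (key p).1)
  refine ⟨hs, ?_⟩
  rw [Dsum, show x ^ (-ε) * (zetaR a * zetaR (1 + ε)) =
    ∑' p : ℕ+ × ℕ+, x ^ (-ε) * (pw a p.1 * pw (1 + ε) p.2) from
    (tsum_two_scaled _ (by linarith) (by linarith)).symm]
  calc |(∑' p, dterm x a 1 ε p) - ∑' p : ℕ+ × ℕ+, x ^ (-ε) * (pw a p.1 * pw (1 + ε) p.2)|
      ≤ ∑' p : ℕ+ × ℕ+, ε * (2 * max 1 x⁻¹ / Real.sqrt x) * (pw (a - 1/2) p.1 * pw (3/2) p.2) := hb'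
    _ = ε * (2 * max 1 x⁻¹ / Real.sqrt x) * (zetaR (a - 1/2) * zetaR (3/2)) :=
        tsum_two_scaled _ (by linarith) (by norm_num)
    _ = ε * (2 * max 1 x⁻¹ / Real.sqrt x * (zetaR (a - 1/2) * zetaR (3/2))) := by ring

lemma dterm_summable {x a b ε : ℝ} (hx : 0 < x) (ha : 1 ≤ a) (hb : 1 ≤ b)
    (hab : 3 ≤ a + b) (hε : 0 < ε) : Summable (dterm x a b ε) := by
  rcases le_or_gt 2 b with hb2 | hb2
  · have hle : ∀ p : ℕ+ × ℕ+, dterm x a b ε p ≤ pw (a + ε) p.1 * pw b p.2 := by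
      intro p
      have hn := pnat_pos_real p.1
      have hm := pnat_pos_real p.2
      have hV : ((p.1:ℝ)) ≤ (p.1:ℝ) + (p.2:ℝ) * x := by nlinarith
      have h1 : ((p.1 : ℝ) + (p.2 : ℝ) * x) ^ (-ε) ≤ (p.1 : ℝ) ^ (-ε) :=
        Real.rpow_le_rpow_of_nonpos hn hV (by linarith)
      calc dterm x a b ε p ≤ pw a p.1 * pw b p.2 * (p.1 : ℝ) ^ (-ε) :=
            mul_le_mul_of_nonneg_left h1 (mul_nonneg (pw_nonneg _ _) (pw_nonneg _ _))
        _ = pw (a + ε) p.1 * pw b p.2 := by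
            rw [show pw a p.1 * pw b p.2 * (p.1 : ℝ) ^ (-ε)
              = pw a p.1 * (p.1 : ℝ) ^ (-ε) * pw b p.2 by ring, pw_mul_rpow_neg]
    exact Summable.of_nonneg_of_le (dterm_nonneg hx a b ε) hle
      (summable_two (by linarith) (by linarith))
  · have ha2 : 1 < a := by linarith
    have hle : ∀ p : ℕ+ × ℕ+, dterm x a b ε p ≤ x ^ (-ε) * (pw a p.1 * pw (b + ε) p.2) := by
      intro p
      have hn := pnat_pos_real p.1
      have hm := pnat_pos_real p.2
      have hMx : (0:ℝ) < (p.2:ℝ) * x := by positivity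
      have hV : ((p.2:ℝ)) * x ≤ (p.1:ℝ) + (p.2:ℝ) * x := by nlinarith
      have h1 : ((p.1 : ℝ) + (p.2 : ℝ) * x) ^ (-ε) ≤ ((p.2 : ℝ) * x) ^ (-ε) :=
        Real.rpow_le_rpow_of_nonpos hMx hV (by linarith)
      calc dterm x a b ε p ≤ pw a p.1 * pw b p.2 * ((p.2 : ℝ) * x) ^ (-ε) :=
            mul_le_mul_of_nonneg_left h1 (mul_nonneg (pw_nonneg _ _) (pw_nonneg _ _))
        _ = x ^ (-ε) * (pw a p.1 * pw (b + ε) p.2) := by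
            rw [Real.mul_rpow hm.le hx.le, show pw a p.1 * pw b p.2 * ((p.2:ℝ) ^ (-ε) * x ^ (-ε))
              = x ^ (-ε) * (pw a p.1 * (pw b p.2 * (p.2:ℝ) ^ (-ε))) by ring, pw_mul_rpow_neg]
    exact Summable.of_nonneg_of_le (dterm_nonneg hx a b ε) hle
      (summable_two_scaled _ (by linarith) (by linarith))

lemma point_expand (r : ℕ) (hr : 2 ≤ r) {x : ℝ} (hx : 0 < x) (ε : ℝ) (n m : ℕ+) :
    1 / ((n : ℝ) ^ (r:ℝ) * (m : ℝ) ^ (r:ℝ) * ((n : ℝ) + (m : ℝ) * x) ^ (1 - (r:ℝ) + ε)) =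
    ∑ k ∈ range r, ((r-1).choose k : ℝ) * x ^ k * dterm x ((k:ℝ)+1) ((r:ℝ)-(k:ℝ)) ε (n, m) := by
  have hn := pnat_pos_real n
  have hm := pnat_pos_real m
  set N := ((n : ℕ+) : ℝ) with hN
  set M := ((m : ℕ+) : ℝ) with hM
  have hP : (0:ℝ) < N + M * x := by nlinarith
  have hsplit : (N + M * x) ^ (1 - (r:ℝ) + ε)
      = ((N + M * x) ^ (r - 1 : ℕ))⁻¹ * ((N + M * x) ^ (ε:ℝ)) := by
    rw [← Real.rpow_natCast (N + M * x) (r-1), ← Real.rpow_neg hP.le, ← Real.rpow_add hP]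
    congr 1
    push_cast [Nat.cast_sub (by omega : 1 ≤ r)]
    ring
  have hbinom : (N + M * x) ^ (r - 1 : ℕ)
      = ∑ k ∈ range r, (M * x) ^ k * N ^ (r - 1 - k) * ((r-1).choose k : ℝ) := by
    rw [show N + M * x = M * x + N by ring, add_pow, show r - 1 + 1 = r by omega]
  have hNr : N ^ (r:ℝ) = N ^ (r:ℕ) := Real.rpow_natCast N r
  have hMr : M ^ (r:ℝ) = M ^ (r:ℕ) := Real.rpow_natCast M r
  have hQ : (0:ℝ) < (N + M * x) ^ (ε:ℝ) := Real.rpow_pos_of_pos hP _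
  have hS : (0:ℝ) < (N + M * x) ^ (r - 1 : ℕ) := pow_pos hP _
  have hNp : (0:ℝ) < N ^ (r:ℕ) := pow_pos hn _
  have hMp : (0:ℝ) < M ^ (r:ℕ) := pow_pos hm _
  rw [hsplit, hNr, hMr,
    show 1 / (N ^ (r:ℕ) * M ^ (r:ℕ) * (((N + M * x) ^ (r - 1 : ℕ))⁻¹ * (N + M * x) ^ (ε:ℝ)))
      = (N + M * x) ^ (r - 1 : ℕ) * (1 / (N ^ (r:ℕ) * M ^ (r:ℕ) * (N + M * x) ^ (ε:ℝ))) by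
        field_simp, hbinom, Finset.sum_mul]
  refine Finset.sum_congr rfl fun k hk => ?_
  have hkr : k < r := Finset.mem_range.mp hk
  have hd : dterm x ((k:ℝ)+1) ((r:ℝ)-(k:ℝ)) ε (n, m)
      = 1 / N ^ (k+1 : ℕ) * (1 / M ^ (r-k : ℕ)) * ((N + M * x) ^ (ε:ℝ))⁻¹ := by
    rw [dterm, pw, pw, Real.rpow_neg hP.le,
      show ((k:ℝ)+1) = ((k+1:ℕ):ℝ) by push_cast; ring,
      show ((r:ℝ)-(k:ℝ)) = ((r-k:ℕ):ℝ) by rw [Nat.cast_sub hkr.le],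
      Real.rpow_natCast, Real.rpow_natCast]
  rw [hd]
  have hNpow : N ^ (k+1:ℕ) * N ^ (r-1-k:ℕ) = N ^ (r:ℕ) := by
    rw [← pow_add]; congr 1; omega
  have hMpow : M ^ (k:ℕ) * M ^ (r-k:ℕ) = M ^ (r:ℕ) := by
    rw [← pow_add]; congr 1; omega
  rw [mul_pow, ← hNpow, ← hMpow]
  have h1 : (0:ℝ) < N ^ (k+1:ℕ) := pow_pos hn _
  have h2 : (0:ℝ) < N ^ (r-1-k:ℕ) := pow_pos hn _
  have h3 : (0:ℝ) < M ^ (k:ℕ) := pow_pos hm _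
  have h4 : (0:ℝ) < M ^ (r-k:ℕ) := pow_pos hm _
  field_simp

lemma theta_expand (r : ℕ) (hr : 2 ≤ r) {x : ℝ} (hx : 0 < x) {ε : ℝ} (hε : 0 < ε) :
    Theta r r (1 - (r:ℝ) + ε) x =
      ∑ k ∈ range r, ((r-1).choose k : ℝ) * x ^ k * Dsum x ((k:ℝ)+1) ((r:ℝ)-(k:ℝ)) ε := by
  have hsum : ∀ k ∈ range r, Summable (fun p : ℕ+ × ℕ+ =>
      ((r-1).choose k : ℝ) * x ^ k * dterm x ((k:ℝ)+1) ((r:ℝ)-(k:ℝ)) ε p) := by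
    intro k hk
    have hkr : k < r := Finset.mem_range.mp hk
    refine Summable.mul_left _ (dterm_summable hx ?_ ?_ ?_ hε)
    · have : (0:ℝ) ≤ (k:ℝ) := Nat.cast_nonneg k
      linarith
    · have : (k:ℝ) ≤ (r:ℝ) - 1 := by
        have : (k:ℝ) + 1 ≤ (r:ℝ) := by exact_mod_cast hkr
        linarith
      linarith
    · have : (2:ℝ) ≤ (r:ℝ) := by exact_mod_cast hr
      linarith
  have hF : Summable (fun p : ℕ+ × ℕ+ => ∑ k ∈ range r,
      ((r-1).choose k : ℝ) * x ^ k * dterm x ((k:ℝ)+1) ((r:ℝ)-(k:ℝ)) ε p) :=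
    summable_sum hsum
  have step1 : Theta r r (1 - (r:ℝ) + ε) x = ∑' p : ℕ+ × ℕ+, ∑ k ∈ range r,
      ((r-1).choose k : ℝ) * x ^ k * dterm x ((k:ℝ)+1) ((r:ℝ)-(k:ℝ)) ε p := by
    rw [Theta, Summable.tsum_prod' hF fun b => hF.prod_factor b]
    refine tsum_congr fun n => tsum_congr fun m => ?_
    exact point_expand r hr hx ε n m
  rw [step1, Summable.tsum_finsetSum hsum]
  refine Finset.sum_congr rfl fun k hk => ?_
  rw [Dsum, tsum_mul_left]

lemma zetaR_eq (s : ℝ) : zetaR s = ∑' n : ℕ, 1 / ((n : ℝ) + 1) ^ s := by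
  rw [zetaR, ← Equiv.pnatEquivNat.symm.tsum_eq]
  congr 1 with n
  congr 2
  simp [Equiv.pnatEquivNat, Nat.succPNat]

lemma zetaR_complex {s : ℝ} (hs : 1 < s) : (zetaR s : ℂ) = riemannZeta s := by
  rw [zeta_eq_tsum_one_div_nat_add_one_cpow (by simpa using hs), zetaR_eq,
    Complex.ofReal_tsum]
  congr 1 with n
  rw [Complex.ofReal_div, Complex.ofReal_one, Complex.ofReal_cpow (by positivity)]
  norm_cast

lemma zetaR_tendsto : Tendsto (fun ε : ℝ => zetaR (1 + ε) - 1 / ε) (𝓝[>] 0)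
    (𝓝 Real.eulerMascheroniConstant) := by
  have h := ZetaAsymptotics.tendsto_riemannZeta_sub_one_div_nhds_right
  have h2 : Tendsto (fun ε : ℝ => (1 : ℝ) + ε) (𝓝[>] (0:ℝ)) (𝓝[>] (1:ℝ)) := by
    apply tendsto_nhdsWithin_of_tendsto_nhds_of_eventually_within
    · have h0 : Tendsto (fun ε : ℝ => (1 : ℝ) + ε) (𝓝 (0:ℝ)) (𝓝 ((1:ℝ)+0)) :=
        (continuous_const.add continuous_id).tendsto 0
      simpa using h0.mono_left nhdsWithin_le_nhds
    · filter_upwards [self_mem_nhdsWithin] with a ha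
      simpa using ha
  have h4 := (Complex.continuous_re.tendsto _).comp (h.comp h2)
  simp only [Function.comp_apply, Complex.ofReal_re] at h4
  refine h4.congr' ?_
  filter_upwards [self_mem_nhdsWithin] with ε (hε : 0 < ε)
  show (riemannZeta ((1 + ε : ℝ)) - 1 / (((1 + ε : ℝ) : ℂ) - 1)).re = zetaR (1 + ε) - 1 / ε
  rw [← zetaR_complex (show (1:ℝ) < 1 + ε by linarith)]
  have : (((1 + ε : ℝ) : ℂ) - 1) = (ε : ℂ) := by push_cast; ring
  rw [this, ← Complex.ofReal_one, ← Complex.ofReal_div, ← Complex.ofReal_sub,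
    Complex.ofReal_re]

lemma tendsto_rpow_neg_one {x : ℝ} (hx : 0 < x) :
    Tendsto (fun ε : ℝ => x ^ (-ε)) (𝓝[>] 0) (𝓝 1) := by
  have hc : Continuous (fun ε : ℝ => Real.exp (Real.log x * -ε)) := by
    exact Real.continuous_exp.comp (continuous_const.mul continuous_neg)
  have h0 : Tendsto (fun ε : ℝ => Real.exp (Real.log x * -ε)) (𝓝 0) (𝓝 1) := by
    have := hc.tendsto 0
    simpa using this
  refine Tendsto.congr ?_ (h0.mono_left nhdsWithin_le_nhds)
  intro ε
  rw [Real.rpow_def_of_pos hx]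

lemma tendsto_rpow_slope {x : ℝ} (hx : 0 < x) :
    Tendsto (fun ε : ℝ => (x ^ (-ε) - 1) / ε) (𝓝[>] 0) (𝓝 (-Real.log x)) := by
  have h1 : HasDerivAt (fun y : ℝ => x ^ y) (Real.log x) 0 := by
    have := (Real.hasStrictDerivAt_const_rpow hx 0).hasDerivAt
    simpa using this
  have h2 : HasDerivAt (fun y : ℝ => x ^ (-y)) (-Real.log x) 0 := by
    have hneg : HasDerivAt (fun y : ℝ => -y) (-1) 0 := (hasDerivAt_id 0).neg
    have h1' : HasDerivAt (fun y : ℝ => x ^ y) (Real.log x) (-(0:ℝ)) := by simpa using h1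
    have := h1'.comp 0 hneg
    simpa [Function.comp_def] using this
  have h3 := hasDerivAt_iff_tendsto_slope.mp h2
  have h4 := h3.mono_left (nhdsWithin_mono 0 (fun y hy => ne_of_gt hy : Set.Ioi (0:ℝ) ⊆ {0}ᶜ))
  refine h4.congr' ?_
  filter_upwards [self_mem_nhdsWithin] with ε (hε : 0 < ε)
  rw [slope_def_field]
  simp [Real.rpow_zero]

theorem stmt0 (r : ℕ) (hr : 2 ≤ r) (x : ℝ) (hx : 0 < x) :
    Tendsto
      (fun t : ℝ => Theta r r t x - zetaR r * (1 + x ^ (r - 1)) / (t - (1 - (r : ℝ))))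
      (𝓝[>] (1 - (r : ℝ)))
      (𝓝 (x ^ (r - 1) * zetaR r * (Real.eulerMascheroniConstant - Real.log x)
          + Real.eulerMascheroniConstant * zetaR r
          + x ^ (r - 1) * ∑ k ∈ Finset.Icc 1 (r - 2),
              ((r - 1).choose k : ℝ) * (x ^ k)⁻¹ * zetaR (r - k) * zetaR (k + 1))) := by
  have h2r : (2:ℝ) ≤ (r:ℝ) := by exact_mod_cast hr
  set γ := Real.eulerMascheroniConstant with hγ
  set L := 𝓝[>] (0:ℝ) with hL
  have hid : Tendsto (fun ε : ℝ => ε) L (𝓝 0) := by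
    exact tendsto_id.mono_right (nhdsWithin_le_nhds (s := Set.Ioi (0:ℝ)) (a := (0:ℝ)))
  have hmulconst : ∀ C : ℝ, Tendsto (fun ε : ℝ => ε * C) L (𝓝 0) := by
    intro C
    simpa using hid.mul_const C
  -- T1
  have hT1 : Tendsto (fun ε : ℝ => Dsum x 1 (r:ℝ) ε - zetaR (1+ε) * zetaR (r:ℝ)) L (𝓝 0) := by
    apply squeeze_zero_norm' (a := fun ε : ℝ => ε * (2 * Real.sqrt x * (zetaR (3/2) * zetaR ((r:ℝ) - 1/2))))
    · filter_upwards [self_mem_nhdsWithin] with ε (hε : 0 < ε)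
      rw [Real.norm_eq_abs]
      exact (case0_est hx h2r hε).2
    · exact hmulconst _
  -- T2
  have hT2 : Tendsto (fun ε : ℝ => Dsum x (r:ℝ) 1 ε - x^(-ε) * (zetaR (r:ℝ) * zetaR (1+ε))) L (𝓝 0) := by
    apply squeeze_zero_norm'
      (a := fun ε : ℝ => ε * (2 * max 1 x⁻¹ / Real.sqrt x * (zetaR ((r:ℝ) - 1/2) * zetaR (3/2))))
    · filter_upwards [Ioo_mem_nhdsGT one_pos] with ε hε
      rw [Real.norm_eq_abs]
      exact (caseR_est hx h2r hε.1 hε.2.le).2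
    · exact hmulconst _
  -- T3 (middle terms)
  have hT3 : ∀ k ∈ Icc 1 (r-2), Tendsto (fun ε : ℝ => Dsum x ((k:ℝ)+1) ((r:ℝ)-(k:ℝ)) ε) L
      (𝓝 (zetaR ((k:ℝ)+1) * zetaR ((r:ℝ)-(k:ℝ)))) := by
    intro k hk
    obtain ⟨hk1, hk2⟩ := Finset.mem_Icc.mp hk
    have ha : (2:ℝ) ≤ (k:ℝ)+1 := by
      have : (1:ℝ) ≤ (k:ℝ) := by exact_mod_cast hk1
      linarith
    have hb : (2:ℝ) ≤ (r:ℝ)-(k:ℝ) := by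
      have : (k:ℝ) + 2 ≤ (r:ℝ) := by exact_mod_cast (by omega : k + 2 ≤ r)
      linarith
    have h0 : Tendsto (fun ε : ℝ => Dsum x ((k:ℝ)+1) ((r:ℝ)-(k:ℝ)) ε
        - zetaR ((k:ℝ)+1) * zetaR ((r:ℝ)-(k:ℝ))) L (𝓝 0) := by
      apply squeeze_zero_norm' (a := fun ε : ℝ => ε * (2 * Real.sqrt (1+x) *
        (zetaR ((k:ℝ)+1 - 1/2) * zetaR ((r:ℝ)-(k:ℝ) - 1/2))))
      · filter_upwards [self_mem_nhdsWithin] with ε (hε : 0 < ε)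
        rw [Real.norm_eq_abs]
        exact (middle_est hx ha hb hε).2
      · exact hmulconst _
    have := h0.add (tendsto_const_nhds (x := zetaR ((k:ℝ)+1) * zetaR ((r:ℝ)-(k:ℝ))) (f := L))
    simpa using this
  have comb : Tendsto (fun ε : ℝ =>
      (Dsum x 1 (r:ℝ) ε - zetaR (1+ε) * zetaR (r:ℝ))
      + x^(r-1) * (Dsum x (r:ℝ) 1 ε - x^(-ε) * (zetaR (r:ℝ) * zetaR (1+ε)))
      + (∑ k ∈ Icc 1 (r-2), ((r-1).choose k : ℝ) * x^k * Dsum x ((k:ℝ)+1) ((r:ℝ)-(k:ℝ)) ε)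
      + zetaR (r:ℝ) * (zetaR (1+ε) - 1/ε)
      + x^(r-1) * zetaR (r:ℝ) * (x^(-ε) * (zetaR (1+ε) - 1/ε) + (x^(-ε)-1)/ε)) L
    (𝓝 (0 + x^(r-1) * 0
      + (∑ k ∈ Icc 1 (r-2), ((r-1).choose k : ℝ) * x^k * (zetaR ((k:ℝ)+1) * zetaR ((r:ℝ)-(k:ℝ))))
      + zetaR (r:ℝ) * γ + x^(r-1) * zetaR (r:ℝ) * (1 * γ + -Real.log x))) := by
    refine ((((hT1.add (hT2.const_mul _)).add ?_).add (zetaR_tendsto.const_mul _)).add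
      ((((tendsto_rpow_neg_one hx).mul zetaR_tendsto).add (tendsto_rpow_slope hx)).const_mul _))
    exact tendsto_finset_sum _ (fun k hk => ((hT3 k hk).const_mul _))
  -- substitution t ↦ ε = t - (1 - r)
  have hφ : Tendsto (fun t : ℝ => t - (1 - (r:ℝ))) (𝓝[>] (1 - (r:ℝ))) L := by
    apply tendsto_nhdsWithin_of_tendsto_nhds_of_eventually_within
    · have h0 : Tendsto (fun t : ℝ => t - (1 - (r:ℝ))) (𝓝 (1 - (r:ℝ))) (𝓝 ((1 - (r:ℝ)) - (1 - (r:ℝ)))) :=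
        (continuous_id.sub continuous_const).tendsto _
      simpa using h0.mono_left nhdsWithin_le_nhds
    · filter_upwards [self_mem_nhdsWithin] with t ht
      simpa [Set.mem_Ioi, sub_pos] using ht
  have final := comb.comp hφ
  -- split of the range sum
  have hsplitsum : ∀ f : ℕ → ℝ, ∑ k ∈ range r, f k
      = f 0 + (∑ k ∈ Icc 1 (r-2), f k) + f (r-1) := by
    intro f
    have e1 : ∑ k ∈ range ((r-1)+1), f k = (∑ k ∈ range (r-1), f k) + f (r-1) :=
      Finset.sum_range_succ f (r-1)
    rw [show (r-1)+1 = r from by omega] at e1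
    have e2 : ∑ k ∈ range ((r-2)+1), f k = (∑ k ∈ range (r-2), f (k+1)) + f 0 :=
      Finset.sum_range_succ' f (r-2)
    rw [show (r-2)+1 = r-1 from by omega] at e2
    have e3 : ∑ k ∈ range (r-2), f (k+1) = ∑ k ∈ Icc 1 (r-2), f k := by
      refine Finset.sum_nbij' (i := fun k => k+1) (j := fun k => k-1) ?_ ?_ ?_ ?_ ?_
      · intro a ha; simp only [Finset.mem_range] at ha; simp only [Finset.mem_Icc]; omega
      · intro a ha; simp only [Finset.mem_Icc] at ha; simp only [Finset.mem_range]; omega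
      · intro a ha; simp only [Finset.mem_range] at ha; omega
      · intro a ha; simp only [Finset.mem_Icc] at ha; omega
      · intro a ha; rfl
    rw [e1, e2, e3]
    ring
  -- eventual equality of the two functions
  have heq : (fun t : ℝ => Theta r r t x - zetaR r * (1 + x ^ (r - 1)) / (t - (1 - (r : ℝ))))
      =ᶠ[𝓝[>] (1 - (r:ℝ))] (fun t : ℝ =>
      (Dsum x 1 (r:ℝ) (t - (1 - (r:ℝ))) - zetaR (1+(t - (1 - (r:ℝ)))) * zetaR (r:ℝ))
      + x^(r-1) * (Dsum x (r:ℝ) 1 (t - (1 - (r:ℝ)))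
          - x^(-(t - (1 - (r:ℝ)))) * (zetaR (r:ℝ) * zetaR (1+(t - (1 - (r:ℝ))))))
      + (∑ k ∈ Icc 1 (r-2), ((r-1).choose k : ℝ) * x^k
          * Dsum x ((k:ℝ)+1) ((r:ℝ)-(k:ℝ)) (t - (1 - (r:ℝ))))
      + zetaR (r:ℝ) * (zetaR (1+(t - (1 - (r:ℝ)))) - 1/(t - (1 - (r:ℝ))))
      + x^(r-1) * zetaR (r:ℝ) * (x^(-(t - (1 - (r:ℝ)))) * (zetaR (1+(t - (1 - (r:ℝ)))) - 1/(t - (1 - (r:ℝ))))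
          + (x^(-(t - (1 - (r:ℝ))))-1)/(t - (1 - (r:ℝ))))) := by
    filter_upwards [self_mem_nhdsWithin] with t ht
    have hε : 0 < t - (1 - (r:ℝ)) := sub_pos.2 ht
    set ε := t - (1 - (r:ℝ)) with hεdef
    have hexp : Theta r r t x = Dsum x 1 (r:ℝ) ε
        + (∑ k ∈ Icc 1 (r-2), ((r-1).choose k : ℝ) * x^k * Dsum x ((k:ℝ)+1) ((r:ℝ)-(k:ℝ)) ε)
        + x^(r-1) * Dsum x (r:ℝ) 1 ε := by
      rw [show t = 1 - (r:ℝ) + ε from by rw [hεdef]; ring]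
      rw [theta_expand r hr hx hε]
      rw [hsplitsum (fun k => ((r-1).choose k : ℝ) * x^k * Dsum x ((k:ℝ)+1) ((r:ℝ)-(k:ℝ)) ε)]
      have er1 : ((r-1:ℕ):ℝ) = (r:ℝ)-1 := by
        push_cast [Nat.cast_sub (show 1 ≤ r by omega)]
        ring
      rw [show (((0:ℕ)):ℝ)+1 = (1:ℝ) by norm_num, show (r:ℝ)-((0:ℕ):ℝ) = (r:ℝ) by norm_num,
          show (((r-1:ℕ)):ℝ)+1 = (r:ℝ) by rw [er1]; ring,
          show (r:ℝ)-(((r-1:ℕ)):ℝ) = (1:ℝ) by rw [er1]; ring]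
      simp only [Nat.choose_self, Nat.choose_zero_right, Nat.cast_one, pow_zero]
      ring
    rw [hexp]
    ring
  -- identify the limit values
  have hreflect : (∑ k ∈ Icc 1 (r-2), ((r-1).choose k : ℝ) * x^k
        * (zetaR ((k:ℝ)+1) * zetaR ((r:ℝ)-(k:ℝ))))
      = ∑ k ∈ Icc 1 (r-2), x^(r-1)
        * (((r-1).choose k : ℝ) * (x^k)⁻¹ * zetaR ((r:ℝ) - (k:ℝ)) * zetaR ((k:ℝ)+1)) := by
    refine Finset.sum_nbij' (i := fun k => r-1-k) (j := fun k => r-1-k) ?_ ?_ ?_ ?_ ?_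
    · intro a ha; simp only [Finset.mem_Icc] at *; omega
    · intro a ha; simp only [Finset.mem_Icc] at *; omega
    · intro a ha; simp only [Finset.mem_Icc] at ha; omega
    · intro a ha; simp only [Finset.mem_Icc] at ha; omega
    · intro a ha
      simp only [Finset.mem_Icc] at ha
      rw [Nat.choose_symm (show a ≤ r-1 by omega)]
      rw [show ((r-1-a:ℕ):ℝ) = (r:ℝ)-1-(a:ℝ) by
        push_cast [Nat.cast_sub (show a ≤ r - 1 by omega), Nat.cast_sub (show 1 ≤ r by omega)]
        ring]
      have hxp : x^(r-1) = x^(r-1-a) * x^a := by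
        rw [← pow_add]; congr 1; omega
      rw [show (r:ℝ) - ((r:ℝ)-1-(a:ℝ)) = (a:ℝ)+1 by ring,
          show (r:ℝ)-1-(a:ℝ)+1 = (r:ℝ)-(a:ℝ) by ring, hxp]
      have hxa : (0:ℝ) < x^a := pow_pos hx a
      have hxra : (0:ℝ) < x^(r-1-a) := pow_pos hx (r-1-a)
      field_simp
  have hval : (0 + x^(r-1) * 0
      + (∑ k ∈ Icc 1 (r-2), ((r-1).choose k : ℝ) * x^k * (zetaR ((k:ℝ)+1) * zetaR ((r:ℝ)-(k:ℝ))))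
      + zetaR (r:ℝ) * γ + x^(r-1) * zetaR (r:ℝ) * (1 * γ + -Real.log x))
      = (x ^ (r - 1) * zetaR r * (γ - Real.log x) + γ * zetaR r
        + x ^ (r - 1) * ∑ k ∈ Finset.Icc 1 (r - 2),
            ((r - 1).choose k : ℝ) * (x ^ k)⁻¹ * zetaR (r - k) * zetaR (k + 1)) := by
    rw [hreflect, ← Finset.mul_sum]
    ring
  rw [← hval]
  exact final.congr' heq.symm
end

section
/- Let r, s, t be real numbers with r+s+t > 2, r+t > 1 and s+t > 1, let x > 0, and let n be a natural number. Then Θ(r,s,t,x) = Σ_{ℓ=0}^{n} binom(n,ℓ) x^ℓ Θ(r−n+ℓ, s−ℓ, t+n, x), where every term Θ(r−n+ℓ, s−ℓ, t+n, x) on the right-hand side is given by an absolutely convergent double series. -/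
open Real Filter Topology Finset

lemma pnat_rpow_summable {a : ℝ} (ha : 1 < a) : Summable (fun n : ℕ+ => (n : ℝ) ^ (-a)) := by
  have h : Summable (fun n : ℕ => (n : ℝ) ^ (-a)) :=
    Real.summable_nat_rpow.mpr (by linarith)
  exact h.comp_injective PNat.coe_injective

lemma prod_rpow_summable {a b : ℝ} (ha : 1 < a) (hb : 1 < b) :
    Summable (fun p : ℕ+ × ℕ+ => (p.1 : ℝ) ^ (-a) * (p.2 : ℝ) ^ (-b)) :=
  (pnat_rpow_summable ha).mul_of_nonneg (pnat_rpow_summable hb)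
    (fun n => rpow_nonneg (by positivity) _) (fun n => rpow_nonneg (by positivity) _)


lemma side_bound (r s t δ : ℝ) (hδ : 0 ≤ δ) {u v c k K : ℝ} (hu : 0 < u) (huv : u ≤ v)
    (hk : 0 < k) (hK : 0 < K) (hlow : v * k ≤ c) (hhigh : c ≤ v * K) :
    u ^ (-r) * v ^ (-s) * c ^ (-t) ≤
      (k ^ (-t) + K ^ (-t)) * (u ^ (-(r + δ)) * v ^ (-(s + t - δ))) := by
  have hv : 0 < v := lt_of_lt_of_le hu huv
  have hc : 0 < c := lt_of_lt_of_le (by positivity) hlow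
  -- bound c^(-t) ≤ (k^(-t)+K^(-t)) * v^(-t)
  have hct : c ^ (-t) ≤ (k ^ (-t) + K ^ (-t)) * v ^ (-t) := by
    rcases le_or_gt 0 t with ht | ht
    · have h1 : c ^ (-t) ≤ (v * k) ^ (-t) :=
        rpow_le_rpow_of_nonpos (by positivity) hlow (by linarith)
      have h2 : (v * k) ^ (-t) = v ^ (-t) * k ^ (-t) := mul_rpow hv.le hk.le
      have h3 : 0 ≤ K ^ (-t) * v ^ (-t) := by positivity
      nlinarith [h1, h2.le, h3]
    · have h1 : c ^ (-t) ≤ (v * K) ^ (-t) :=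
        rpow_le_rpow hc.le hhigh (by linarith)
      have h2 : (v * K) ^ (-t) = v ^ (-t) * K ^ (-t) := mul_rpow hv.le hK.le
      have h3 : 0 ≤ k ^ (-t) * v ^ (-t) := by positivity
      nlinarith [h1, h2.le, h3]
  have hur : u ^ (-r) ≤ u ^ (-(r + δ)) * v ^ δ := by
    have h1 : u ^ (-r) = u ^ (-(r + δ)) * u ^ δ := by
      rw [← rpow_add hu]; ring_nf
    rw [h1]
    exact mul_le_mul_of_nonneg_left (rpow_le_rpow hu.le huv hδ) (by positivity)
  calc u ^ (-r) * v ^ (-s) * c ^ (-t)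
      ≤ (u ^ (-(r + δ)) * v ^ δ) * v ^ (-s) * ((k ^ (-t) + K ^ (-t)) * v ^ (-t)) := by
        apply mul_le_mul (mul_le_mul_of_nonneg_right hur (by positivity)) hct
          (by positivity) (by positivity)
    _ = (k ^ (-t) + K ^ (-t)) * (u ^ (-(r + δ)) * (v ^ δ * v ^ (-s) * v ^ (-t))) := by ring
    _ = (k ^ (-t) + K ^ (-t)) * (u ^ (-(r + δ)) * v ^ (-(s + t - δ))) := by
        rw [← rpow_add hv, ← rpow_add hv]; ring_nf

lemma MT_summable (r s t : ℝ) (h1 : 2 < r + s + t) (h2 : 1 < r + t) (h3 : 1 < s + t)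
    {x : ℝ} (hx : 0 < x) :
    Summable (fun p : ℕ+ × ℕ+ =>
      1 / ((p.1 : ℝ) ^ r * (p.2 : ℝ) ^ s * ((p.1 : ℝ) + (p.2 : ℝ) * x) ^ t)) := by
  set k := min 1 x with hk_def
  have hk : 0 < k := lt_min one_pos hx
  have hK : (0:ℝ) < 1 + x := by linarith
  set C := k ^ (-t) + (1 + x) ^ (-t) with hC_def
  have hC : 0 < C := by positivity
  set δ := (max 0 (1 - r) + (s + t - 1)) / 2 with hδ_def
  set δ' := (max 0 (1 - s) + (r + t - 1)) / 2 with hδ'_def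
  have hmax1 : max 0 (1 - r) < s + t - 1 := by
    rcases max_cases 0 (1-r) with ⟨h, _⟩ | ⟨h, _⟩ <;> rw [h] <;> linarith
  have hmax2 : max 0 (1 - s) < r + t - 1 := by
    rcases max_cases 0 (1-s) with ⟨h, _⟩ | ⟨h, _⟩ <;> rw [h] <;> linarith
  have hδ0 : 0 ≤ δ := by
    have := le_max_left 0 (1 - r); rw [hδ_def]; linarith
  have hδ'0 : 0 ≤ δ' := by
    have := le_max_left 0 (1 - s); rw [hδ'_def]; linarith
  have ha1 : 1 < r + δ := by
    have := le_max_right 0 (1 - r); rw [hδ_def]; linarith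
  have hb1 : 1 < s + t - δ := by rw [hδ_def]; linarith
  have ha2 : 1 < s + δ' := by
    have := le_max_right 0 (1 - s); rw [hδ'_def]; linarith
  have hb2 : 1 < r + t - δ' := by rw [hδ'_def]; linarith
  have hsum : Summable (fun p : ℕ+ × ℕ+ =>
      C * ((p.1 : ℝ) ^ (-(r + δ)) * (p.2 : ℝ) ^ (-(s + t - δ)) +
        (p.1 : ℝ) ^ (-(r + t - δ')) * (p.2 : ℝ) ^ (-(s + δ')))) :=
    (((prod_rpow_summable ha1 hb1).add
      ((prod_rpow_summable hb2 ha2))).mul_left C)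
  apply Summable.of_nonneg_of_le _ _ hsum
  · intro p; positivity
  · rintro ⟨a, b⟩
    have ha : (0:ℝ) < a := by positivity
    have hb : (0:ℝ) < b := by positivity
    have hc : (0:ℝ) < (a:ℝ) + b * x := by positivity
    have hrw : 1 / ((a : ℝ) ^ r * (b : ℝ) ^ s * ((a:ℝ) + b * x) ^ t)
        = (a:ℝ) ^ (-r) * (b:ℝ) ^ (-s) * ((a:ℝ) + b * x) ^ (-t) := by
      rw [rpow_neg ha.le, rpow_neg hb.le, rpow_neg hc.le]
      field_simp
    rw [hrw]
    have hterm2 : 0 ≤ (a : ℝ) ^ (-(r + t - δ')) * (b : ℝ) ^ (-(s + δ')) := by positivity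
    have hterm1 : 0 ≤ (a : ℝ) ^ (-(r + δ)) * (b : ℝ) ^ (-(s + t - δ)) := by positivity
    rcases le_total (a:ℝ) (b:ℝ) with hab | hab
    · have key := side_bound r s t δ hδ0 ha hab hk hK
        (by calc (b:ℝ) * k ≤ (b:ℝ) * x := by
                  exact mul_le_mul_of_nonneg_left (min_le_right 1 x) hb.le
              _ ≤ (a:ℝ) + b * x := by linarith)
        (by rw [mul_add, mul_one]; linarith)
      calc (a:ℝ) ^ (-r) * (b:ℝ) ^ (-s) * ((a:ℝ) + b * x) ^ (-t)
          ≤ C * ((a:ℝ) ^ (-(r + δ)) * (b:ℝ) ^ (-(s + t - δ))) := key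
        _ ≤ _ := mul_le_mul_of_nonneg_left (le_add_of_nonneg_right hterm2) hC.le
    · -- b ≤ a : apply with u = b, v = a, exponents s, r
      have hlow : (a:ℝ) * k ≤ (a:ℝ) + b * x := by
        have h1 : (a:ℝ) * k ≤ (a:ℝ) := mul_le_of_le_one_right ha.le (min_le_left 1 x)
        have h2 : 0 ≤ (b:ℝ) * x := by positivity
        linarith
      have hhigh : (a:ℝ) + b * x ≤ (a:ℝ) * (1 + x) := by
        have h1 : (b:ℝ) * x ≤ (a:ℝ) * x := mul_le_mul_of_nonneg_right hab hx.le
        rw [mul_add, mul_one]; linarith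
      have key := side_bound s r t δ' hδ'0 hb hab hk hK hlow hhigh
      calc (a:ℝ) ^ (-r) * (b:ℝ) ^ (-s) * ((a:ℝ) + b * x) ^ (-t)
          = (b:ℝ) ^ (-s) * (a:ℝ) ^ (-r) * ((a:ℝ) + b * x) ^ (-t) := by ring
        _ ≤ C * ((b:ℝ) ^ (-(s + δ')) * (a:ℝ) ^ (-(r + t - δ'))) := key
        _ ≤ _ := by
          rw [mul_comm ((b:ℝ) ^ (-(s + δ'))) ((a:ℝ) ^ (-(r + t - δ')))]
          exact mul_le_mul_of_nonneg_left (le_add_of_nonneg_left hterm1) hC.le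

lemma pointwise_id (r s t : ℝ) (n : ℕ) {a b x : ℝ} (ha : 0 < a) (hb : 0 < b) (hx : 0 < x) :
    ∑ ℓ ∈ Finset.range (n + 1), (n.choose ℓ : ℝ) * x ^ ℓ *
        (1 / (a ^ (r - n + ℓ) * b ^ (s - (ℓ:ℝ)) * (a + b * x) ^ (t + n)))
      = 1 / (a ^ r * b ^ s * (a + b * x) ^ t) := by
  have hc : 0 < a + b * x := by positivity
  have hterm : ∀ ℓ ∈ Finset.range (n + 1),
      (n.choose ℓ : ℝ) * x ^ ℓ *
        (1 / (a ^ (r - n + ℓ) * b ^ (s - (ℓ:ℝ)) * (a + b * x) ^ (t + n)))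
      = ((n.choose ℓ : ℝ) * (b * x) ^ ℓ * a ^ (n - ℓ)) /
          (a ^ r * b ^ s * ((a + b * x) ^ t * (a + b * x) ^ n)) := by
    intro ℓ hℓ
    have hℓn : ℓ ≤ n := Nat.lt_succ_iff.mp (Finset.mem_range.mp hℓ)
    have e1 : a ^ (r - n + ℓ) = a ^ r / a ^ (n - ℓ) := by
      rw [show r - (n:ℝ) + (ℓ:ℝ) = r - ((n:ℝ) - (ℓ:ℝ)) by ring,
        show (n:ℝ) - (ℓ:ℝ) = ((n - ℓ : ℕ) : ℝ) by push_cast [Nat.cast_sub hℓn]; ring,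
        rpow_sub ha, rpow_natCast]
    have e2 : b ^ (s - (ℓ:ℝ)) = b ^ s / b ^ ℓ := by
      rw [rpow_sub hb, rpow_natCast]
    have e3 : (a + b * x) ^ (t + n) = (a + b * x) ^ t * (a + b * x) ^ n := by
      rw [rpow_add hc, rpow_natCast]
    rw [e1, e2, e3, mul_pow]
    have h1 : a ^ r ≠ 0 := by positivity
    have h2 : b ^ s ≠ 0 := by positivity
    have h3 : (a + b * x) ^ t ≠ 0 := by positivity
    have h4 : (a + b * x) ^ n ≠ 0 := by positivity
    have h5 : a ^ (n - ℓ) ≠ 0 := by positivity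
    have h6 : b ^ ℓ ≠ 0 := by positivity
    field_simp
  rw [Finset.sum_congr rfl hterm, ← Finset.sum_div]
  rw [show ∑ ℓ ∈ Finset.range (n+1), (n.choose ℓ : ℝ) * (b * x) ^ ℓ * a ^ (n - ℓ)
      = (b * x + a) ^ n by
    rw [add_pow]
    exact Finset.sum_congr rfl fun ℓ _ => by ring]
  rw [show b * x + a = a + b * x by ring]
  have h4 : (a + b * x) ^ n ≠ 0 := by positivity
  have h3 : (a ^ r * b ^ s * (a + b * x) ^ t) ≠ 0 := by positivity
  field_simp

lemma Theta_eq_tsum_prod (r s t x : ℝ)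
    (h : Summable (fun p : ℕ+ × ℕ+ =>
      1 / ((p.1 : ℝ) ^ r * (p.2 : ℝ) ^ s * ((p.1 : ℝ) + (p.2 : ℝ) * x) ^ t)) ) :
    Theta r s t x = ∑' p : ℕ+ × ℕ+,
      1 / ((p.1 : ℝ) ^ r * (p.2 : ℝ) ^ s * ((p.1 : ℝ) + (p.2 : ℝ) * x) ^ t) :=
  (Summable.tsum_prod h).symm

theorem stmt3 (r s t : ℝ) (h1 : 2 < r + s + t) (h2 : 1 < r + t) (h3 : 1 < s + t)
    (x : ℝ) (hx : 0 < x) (n : ℕ) :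
    Theta r s t x =
      ∑ ℓ ∈ Finset.range (n + 1),
        (n.choose ℓ : ℝ) * x ^ ℓ * Theta (r - n + ℓ) (s - ℓ) (t + n) x
    ∧ ∀ ℓ ∈ Finset.range (n + 1),
        Summable (fun p : ℕ+ × ℕ+ =>
          1 / ((p.1 : ℝ) ^ (r - n + ℓ) * (p.2 : ℝ) ^ (s - (ℓ : ℝ)) *
            ((p.1 : ℝ) + (p.2 : ℝ) * x) ^ (t + n))) := by
  have hsummand : ∀ ℓ ∈ Finset.range (n + 1),
      Summable (fun p : ℕ+ × ℕ+ =>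
        1 / ((p.1 : ℝ) ^ (r - n + ℓ) * (p.2 : ℝ) ^ (s - (ℓ : ℝ)) *
          ((p.1 : ℝ) + (p.2 : ℝ) * x) ^ (t + n))) := by
    intro ℓ hℓ
    have hℓn : (ℓ : ℝ) ≤ (n : ℝ) := by
      exact_mod_cast Nat.lt_succ_iff.mp (Finset.mem_range.mp hℓ)
    have hℓ0 : (0:ℝ) ≤ (ℓ : ℝ) := Nat.cast_nonneg ℓ
    exact MT_summable (r - n + ℓ) (s - ℓ) (t + n)
      (by linarith) (by linarith) (by linarith) hx
  refine ⟨?_, hsummand⟩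
  have hf := MT_summable r s t h1 h2 h3 hx
  rw [Theta_eq_tsum_prod r s t x hf]
  have step1 : (∑' p : ℕ+ × ℕ+,
      1 / ((p.1 : ℝ) ^ r * (p.2 : ℝ) ^ s * ((p.1 : ℝ) + (p.2 : ℝ) * x) ^ t))
      = ∑' p : ℕ+ × ℕ+, ∑ ℓ ∈ Finset.range (n + 1), (n.choose ℓ : ℝ) * x ^ ℓ *
          (1 / ((p.1 : ℝ) ^ (r - n + ℓ) * (p.2 : ℝ) ^ (s - (ℓ:ℝ)) *
            ((p.1 : ℝ) + (p.2 : ℝ) * x) ^ (t + n))) := by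
    refine tsum_congr fun p => ?_
    exact (pointwise_id r s t n (by positivity) (by positivity) hx).symm
  rw [step1, Summable.tsum_finsetSum (fun ℓ hℓ => by
    simpa [mul_assoc] using ((hsummand ℓ hℓ).mul_left ((n.choose ℓ : ℝ) * x ^ ℓ)))]
  refine Finset.sum_congr rfl fun ℓ hℓ => ?_
  rw [Theta_eq_tsum_prod _ _ _ x (hsummand ℓ hℓ)]
  simp only [mul_assoc]
  rw [← tsum_mul_left, ← tsum_mul_left]
end

section
/- Let r and t be positive integers with r > 1, and let x > 0. Then Θ(r,r,t,x) = Σ_{ℓ=0}^{r} binom(r,ℓ) x^ℓ Θ(ℓ, r−ℓ, t+r, x). -/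
open Real Filter Topology Finset

lemma summable_pnat_pow {a : ℕ} (ha : 2 ≤ a) :
    Summable (fun n : ℕ+ => 1 / ((n : ℕ) : ℝ) ^ a) :=
  (summable_one_div_nat_pow.mpr (by omega)).comp_injective (fun p q h => PNat.coe_injective h)

lemma summable_base {a b : ℕ} (ha : 2 ≤ a) (hb : 2 ≤ b) :
    Summable (fun p : ℕ+ × ℕ+ => (1 / ((p.1 : ℕ) : ℝ) ^ a) * (1 / ((p.2 : ℕ) : ℝ) ^ b)) :=
  (summable_pnat_pow ha).mul_of_nonneg (summable_pnat_pow hb)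
    (fun _ => by positivity) (fun _ => by positivity)

lemma summable_gen (a b c1 c2 : ℕ) {x : ℝ} (hx : 0 < x) (h1 : 2 ≤ a + c1) (h2 : 2 ≤ b + c2) :
    Summable (fun p : ℕ+ × ℕ+ =>
      1 / (((p.1 : ℕ) : ℝ) ^ a * ((p.2 : ℕ) : ℝ) ^ b *
        (((p.1 : ℕ) : ℝ) + ((p.2 : ℕ) : ℝ) * x) ^ (c1 + c2))) := by
  refine Summable.of_nonneg_of_le (fun p => by positivity) ?_
    (((summable_base h1 h2).mul_left (1 / x ^ c2)))
  rintro ⟨n, m⟩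
  have hn : (0 : ℝ) < ((n : ℕ) : ℝ) := by exact_mod_cast n.pos
  have hm : (0 : ℝ) < ((m : ℕ) : ℝ) := by exact_mod_cast m.pos
  set A : ℝ := ((n : ℕ) : ℝ)
  set B : ℝ := ((m : ℕ) : ℝ)
  have key : A ^ c1 * (B * x) ^ c2 ≤ (A + B * x) ^ (c1 + c2) := by
    rw [pow_add]
    have h1 : A ^ c1 ≤ (A + B * x) ^ c1 := by
      apply pow_le_pow_left₀ hn.le
      nlinarith
    have h2 : (B * x) ^ c2 ≤ (A + B * x) ^ c2 := by
      apply pow_le_pow_left₀ (by positivity)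
      nlinarith
    exact mul_le_mul h1 h2 (by positivity) (by positivity)
  rw [div_mul_div_comm, div_mul_div_comm, one_mul, one_mul]
  apply one_div_le_one_div_of_le (by positivity)
  calc x ^ c2 * (A ^ (a + c1) * B ^ (b + c2))
      = A ^ a * B ^ b * (A ^ c1 * (B * x) ^ c2) := by
        rw [pow_add, pow_add, mul_pow]; ring
    _ ≤ A ^ a * B ^ b * (A + B * x) ^ (c1 + c2) := by
        apply mul_le_mul_of_nonneg_left key (by positivity)

lemma key_identity (r t : ℕ) (a b x : ℝ) (ha : 0 < a) (hb : 0 < b) (hx : 0 < x) :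
    1 / (a ^ r * b ^ r * (a + b * x) ^ t) =
      ∑ ℓ ∈ Finset.range (r + 1),
        (r.choose ℓ : ℝ) * x ^ ℓ * (1 / (a ^ ℓ * b ^ (r - ℓ) * (a + b * x) ^ (t + r))) := by
  have hc : (0 : ℝ) < a + b * x := by positivity
  have step : ∀ ℓ ∈ Finset.range (r + 1),
      (r.choose ℓ : ℝ) * x ^ ℓ * (1 / (a ^ ℓ * b ^ (r - ℓ) * (a + b * x) ^ (t + r)))
        = ((b * x) ^ ℓ * a ^ (r - ℓ) * (r.choose ℓ : ℝ)) *
            (1 / (a ^ r * b ^ r * (a + b * x) ^ (t + r))) := by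
    intro ℓ hℓ
    rw [Finset.mem_range, Nat.lt_succ_iff] at hℓ
    have h2 : a ^ ℓ * a ^ (r - ℓ) = a ^ r := by
      rw [← pow_add, Nat.add_sub_cancel' hℓ]
    have h3 : b ^ (r - ℓ) * b ^ ℓ = b ^ r := by
      rw [← pow_add, Nat.sub_add_cancel hℓ]
    rw [mul_one_div, mul_one_div, div_eq_div_iff (by positivity) (by positivity)]
    rw [← h2, ← h3, mul_pow]
    ring
  rw [Finset.sum_congr rfl step, ← Finset.sum_mul, ← add_pow, pow_add]
  have h4 : b * x + a = a + b * x := by ring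
  rw [h4]
  field_simp

lemma theta_eq_tsum_prod (s u v : ℕ) (x : ℝ) (hx : 0 < x)
    (h : Summable (fun p : ℕ+ × ℕ+ =>
      1 / (((p.1 : ℕ) : ℝ) ^ s * ((p.2 : ℕ) : ℝ) ^ u *
        (((p.1 : ℕ) : ℝ) + ((p.2 : ℕ) : ℝ) * x) ^ v))) :
    Theta s u v x = ∑' p : ℕ+ × ℕ+,
      1 / (((p.1 : ℕ) : ℝ) ^ s * ((p.2 : ℕ) : ℝ) ^ u *
        (((p.1 : ℕ) : ℝ) + ((p.2 : ℕ) : ℝ) * x) ^ v) := by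
  rw [Theta, Summable.tsum_prod' h (fun n => h.prod_factor n)]
  apply tsum_congr
  intro n
  apply tsum_congr
  intro m
  have hn : (0 : ℝ) ≤ ((n : ℕ) : ℝ) := by positivity
  have hm : (0 : ℝ) ≤ ((m : ℕ) : ℝ) := by positivity
  rw [Real.rpow_natCast, Real.rpow_natCast, Real.rpow_natCast]

theorem stmt4 (r t : ℕ) (hr : 1 < r) (ht : 0 < t) (x : ℝ) (hx : 0 < x) :
    Theta r r t x =
      ∑ ℓ ∈ Finset.range (r + 1),
        (r.choose ℓ : ℝ) * x ^ ℓ * Theta ℓ ((r : ℝ) - ℓ) ((t : ℝ) + r) x := by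
  have hF : Summable (fun p : ℕ+ × ℕ+ =>
      1 / (((p.1 : ℕ) : ℝ) ^ r * ((p.2 : ℕ) : ℝ) ^ r *
        (((p.1 : ℕ) : ℝ) + ((p.2 : ℕ) : ℝ) * x) ^ t)) := by
    have := summable_gen r r 0 t hx (by omega) (by omega)
    simpa using this
  have hG : ∀ ℓ ∈ Finset.range (r + 1), Summable (fun p : ℕ+ × ℕ+ =>
      1 / (((p.1 : ℕ) : ℝ) ^ ℓ * ((p.2 : ℕ) : ℝ) ^ (r - ℓ) *
        (((p.1 : ℕ) : ℝ) + ((p.2 : ℕ) : ℝ) * x) ^ (t + r))) := by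
    intro ℓ hℓ
    rw [Finset.mem_range, Nat.lt_succ_iff] at hℓ
    have := summable_gen ℓ (r - ℓ) (r - ℓ) (t + ℓ) hx (by omega) (by omega)
    have hE : (r - ℓ) + (t + ℓ) = t + r := by omega
    rwa [hE] at this
  have hcast : ∀ ℓ ∈ Finset.range (r + 1),
      Theta ℓ ((r : ℝ) - ℓ) ((t : ℝ) + r) x = ∑' p : ℕ+ × ℕ+,
        1 / (((p.1 : ℕ) : ℝ) ^ ℓ * ((p.2 : ℕ) : ℝ) ^ (r - ℓ) *
          (((p.1 : ℕ) : ℝ) + ((p.2 : ℕ) : ℝ) * x) ^ (t + r)) := by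
    intro ℓ hℓ
    have hℓ' := hℓ
    rw [Finset.mem_range, Nat.lt_succ_iff] at hℓ'
    have e1 : ((r : ℝ) - ℓ) = (((r - ℓ : ℕ) : ℝ)) := by
      rw [Nat.cast_sub hℓ']
    have e2 : ((t : ℝ) + r) = (((t + r : ℕ) : ℝ)) := by
      push_cast; ring
    rw [e1, e2]
    exact theta_eq_tsum_prod ℓ (r - ℓ) (t + r) x hx (hG ℓ hℓ)
  rw [theta_eq_tsum_prod r r t x hx hF]
  rw [Finset.sum_congr rfl (fun ℓ hℓ => by rw [hcast ℓ hℓ])]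
  have swap : ∑ ℓ ∈ Finset.range (r + 1),
      (r.choose ℓ : ℝ) * x ^ ℓ * (∑' p : ℕ+ × ℕ+,
        1 / (((p.1 : ℕ) : ℝ) ^ ℓ * ((p.2 : ℕ) : ℝ) ^ (r - ℓ) *
          (((p.1 : ℕ) : ℝ) + ((p.2 : ℕ) : ℝ) * x) ^ (t + r)))
      = ∑' p : ℕ+ × ℕ+, ∑ ℓ ∈ Finset.range (r + 1),
        (r.choose ℓ : ℝ) * x ^ ℓ *
        (1 / (((p.1 : ℕ) : ℝ) ^ ℓ * ((p.2 : ℕ) : ℝ) ^ (r - ℓ) *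
          (((p.1 : ℕ) : ℝ) + ((p.2 : ℕ) : ℝ) * x) ^ (t + r))) := by
    rw [Summable.tsum_finsetSum (fun ℓ hℓ => (hG ℓ hℓ).mul_left _)]
    exact Finset.sum_congr rfl (fun ℓ hℓ => (tsum_mul_left).symm)
  rw [swap]
  apply tsum_congr
  rintro ⟨n, m⟩
  have hn : (0 : ℝ) < ((n : ℕ) : ℝ) := by exact_mod_cast n.pos
  have hm : (0 : ℝ) < ((m : ℕ) : ℝ) := by exact_mod_cast m.pos
  exact key_identity r t _ _ x hn hm hx
end

section
/- Let z be an integer with z > 2 and let x > 0. Then x^{z/2} Σ_{j=1}^∞ ψ^{(z−1)}(1 + jx) = x^{−z/2} Σ_{j=1}^∞ ψ^{(z−1)}(1 + j/x), where ψ^{(z−1)} denotes the (z−1)-th derivative of the digamma function; both series converge absolutely. -/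
open Real Filter Topology Finset

noncomputable def psi (y : ℝ) : ℝ := deriv Real.Gamma y / Real.Gamma y

noncomputable def P (k : ℕ) (y : ℝ) : ℝ := ∑' n : ℕ, (((n : ℝ) + y) ^ k)⁻¹

lemma summable_P {k : ℕ} (hk : 2 ≤ k) {y : ℝ} (hy : 0 < y) :
    Summable (fun n : ℕ => (((n : ℝ) + y) ^ k)⁻¹) := by
  set c : ℝ := min y 1 with hc
  have hc0 : 0 < c := lt_min hy one_pos
  have hsum : Summable (fun n : ℕ => (c ^ k)⁻¹ * (((n : ℝ) + 1) ^ 2)⁻¹) := by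
    apply Summable.mul_left
    have := Real.summable_one_div_nat_pow.mpr (le_refl 2)
    have h2 : Summable (fun n : ℕ => 1 / ((n : ℝ) + 1) ^ 2) := by
      simpa using (summable_nat_add_iff 1).mpr this
    simpa [one_div] using h2
  apply hsum.of_nonneg_of_le (fun n => by positivity)
  intro n
  have hny : (0:ℝ) < (n : ℝ) + y := by positivity
  have hle : c * ((n : ℝ) + 1) ≤ (n : ℝ) + y := by
    have h1 : c ≤ 1 := min_le_right _ _
    have h2 : c ≤ y := min_le_left _ _
    nlinarith [Nat.cast_nonneg (α := ℝ) n]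
  have hpow : c ^ k * ((n : ℝ) + 1) ^ 2 ≤ ((n : ℝ) + y) ^ k := by
    calc c ^ k * ((n : ℝ) + 1) ^ 2 ≤ c ^ k * ((n : ℝ) + 1) ^ k := by
          apply mul_le_mul_of_nonneg_left _ (by positivity)
          exact pow_le_pow_right₀ (by linarith [Nat.cast_nonneg (α := ℝ) n]) hk
      _ = (c * ((n : ℝ) + 1)) ^ k := (mul_pow _ _ _).symm
      _ ≤ ((n : ℝ) + y) ^ k := pow_le_pow_left₀ (by positivity) hle k
  rw [← mul_inv]
  exact inv_anti₀ (by positivity) hpow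

lemma term_hasDerivAt {k : ℕ} (hk : 1 ≤ k) (n : ℕ) {w : ℝ} (hw : 0 < w) :
    HasDerivAt (fun w : ℝ => (((n : ℝ) + w) ^ k)⁻¹)
      (-((k : ℝ) * (((n : ℝ) + w) ^ (k + 1))⁻¹)) w := by
  have hnw : (0:ℝ) < (n : ℝ) + w := by positivity
  have h1 : HasDerivAt (fun w : ℝ => ((n : ℝ) + w) ^ k)
      ((k : ℝ) * ((n : ℝ) + w) ^ (k - 1) * 1) w :=
    ((hasDerivAt_id w).const_add (n : ℝ)).pow k
  have h2 := h1.inv (by positivity)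
  refine h2.congr_deriv ?_
  have hne : ((n : ℝ) + w) ≠ 0 := hnw.ne'
  rw [mul_one]
  rw [div_eq_mul_inv]
  rw [show (((n : ℝ) + w) ^ k) ^ 2 = ((n : ℝ) + w) ^ (k - 1) * ((n : ℝ) + w) ^ (k + 1) by
    rw [← pow_add, ← pow_mul]; congr 1; omega]
  rw [mul_inv, neg_mul]
  field_simp

lemma hasDerivAt_P {k : ℕ} (hk : 2 ≤ k) {y : ℝ} (hy : 0 < y) :
    HasDerivAt (P k) (-((k : ℝ) * P (k + 1) y)) y := by
  have key : HasDerivAt (fun z => ∑' n : ℕ, (((n : ℝ) + z) ^ k)⁻¹)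
      (∑' n : ℕ, -((k : ℝ) * (((n : ℝ) + y) ^ (k + 1))⁻¹)) y := by
    apply hasDerivAt_tsum_of_isPreconnected
      (u := fun n : ℕ => (k : ℝ) * (((n : ℝ) + y / 2) ^ (k + 1))⁻¹)
      (((summable_P (by omega) (half_pos hy)).mul_left _))
      isOpen_Ioi (isPreconnected_Ioi (a := y / 2))
      (fun n w hw => term_hasDerivAt (by omega) n (lt_trans (half_pos hy) hw))
      ?_ (Set.mem_Ioi.mpr (by linarith [half_pos hy] : y / 2 < y))
      (summable_P hk hy) (Set.mem_Ioi.mpr (by linarith))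
    · intro n w hw
      rw [norm_neg, norm_mul, Real.norm_natCast, Real.norm_eq_abs]
      have hw2 : (0:ℝ) < y / 2 := half_pos hy
      have h1 : (0:ℝ) < (n : ℝ) + y / 2 := by positivity
      have h2 : (0:ℝ) < (n : ℝ) + w := lt_trans h1 (by simpa using (Set.mem_Ioi.mp hw))
      rw [abs_of_nonneg (by positivity)]
      apply mul_le_mul_of_nonneg_left _ (Nat.cast_nonneg k)
      apply inv_anti₀ (by positivity)
      apply pow_le_pow_left₀ h1.le
      have := Set.mem_Ioi.mp hw
      linarith
  rw [tsum_neg, tsum_mul_left] at key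
  exact key


lemma summable_D {y : ℝ} (hy : 0 < y) :
    Summable (fun n : ℕ => (((n : ℝ) + 1)⁻¹ - ((n : ℝ) + y)⁻¹)) := by
  set c : ℝ := min y 1 with hc
  have hc0 : 0 < c := lt_min hy one_pos
  have hsum : Summable (fun n : ℕ => |y - 1| * c⁻¹ * (((n : ℝ) + 1) ^ 2)⁻¹) := by
    apply Summable.mul_left
    have := Real.summable_one_div_nat_pow.mpr (le_refl 2)
    have h2 : Summable (fun n : ℕ => 1 / ((n : ℝ) + 1) ^ 2) := by
      simpa using (summable_nat_add_iff 1).mpr this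
    simpa [one_div] using h2
  apply Summable.of_norm_bounded hsum
  intro n
  have h1 : (0:ℝ) < (n : ℝ) + 1 := by positivity
  have h2 : (0:ℝ) < (n : ℝ) + y := by positivity
  have heq : ((n : ℝ) + 1)⁻¹ - ((n : ℝ) + y)⁻¹
      = (y - 1) * (((n : ℝ) + 1)⁻¹ * ((n : ℝ) + y)⁻¹) := by
    field_simp
    ring
  rw [heq, Real.norm_eq_abs, abs_mul,
    abs_of_nonneg (show (0:ℝ) ≤ ((n : ℝ) + 1)⁻¹ * ((n : ℝ) + y)⁻¹ by positivity)]
  rw [mul_assoc]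
  apply mul_le_mul_of_nonneg_left _ (abs_nonneg _)
  have hle : c * ((n : ℝ) + 1) ≤ (n : ℝ) + y := by
    have := min_le_right y 1
    have := min_le_left y 1
    nlinarith [Nat.cast_nonneg (α := ℝ) n]
  have : ((n:ℝ) + y)⁻¹ ≤ (c * ((n:ℝ)+1))⁻¹ := inv_anti₀ (by positivity) hle
  calc ((n : ℝ) + 1)⁻¹ * ((n : ℝ) + y)⁻¹ ≤ ((n : ℝ) + 1)⁻¹ * (c * ((n:ℝ)+1))⁻¹ :=
        mul_le_mul_of_nonneg_left this (by positivity)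
    _ = c⁻¹ * (((n : ℝ) + 1) ^ 2)⁻¹ := by rw [mul_inv, sq, mul_inv]; ring

lemma psi_eq {y : ℝ} (hy : 0 < y) :
    psi y = -Real.eulerMascheroniConstant
      + ∑' n : ℕ, (((n : ℝ) + 1)⁻¹ - ((n : ℝ) + y)⁻¹) := by
  set γ := Real.eulerMascheroniConstant
  set f : ℝ → ℝ := Real.log ∘ Real.Gamma with hf
  have hder : ∀ {x : ℝ}, 0 < x → DifferentiableAt ℝ f x := by
    intro x hx
    refine ((Real.differentiableAt_Gamma ?_).log (Real.Gamma_ne_zero ?_)) <;>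
      exact fun m => ((neg_nonpos.mpr (Nat.cast_nonneg m)).trans_lt hx).ne'
  have hc : ConvexOn ℝ (Set.Ioi 0) f := Real.convexOn_log_Gamma
  have h_rec : ∀ x : ℝ, 0 < x → f (x + 1) = f x + Real.log x := by
    intro x hx
    simp only [f, Function.comp_apply, Real.Gamma_add_one hx.ne',
      Real.log_mul hx.ne' (Real.Gamma_pos_of_pos hx).ne', add_comm]
  have hfd : ∀ {x : ℝ}, 0 < x → deriv f x = psi x := by
    intro x hx
    rw [hf, Function.comp_def, deriv.log
      (Real.differentiableAt_Gamma
        (fun m => ((neg_nonpos.mpr (Nat.cast_nonneg m)).trans_lt hx).ne'))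
      (Real.Gamma_pos_of_pos hx).ne']
    rfl
  have hder_rec : ∀ x : ℝ, 0 < x → deriv f (x + 1) = deriv f x + x⁻¹ := by
    intro x hx
    rw [← deriv_comp_add_const, ← Real.deriv_log,
      ← deriv_add (hder (by positivity)) (Real.differentiableAt_log hx.ne')]
    apply Filter.EventuallyEq.deriv_eq
    filter_upwards [eventually_gt_nhds hx] using h_rec
  have hN : ∀ N : ℕ, deriv f (y + N) = deriv f y + ∑ n ∈ range N, ((n : ℝ) + y)⁻¹ := by
    intro N
    induction N with
    | zero => simp
    | succ N ih =>
      have : y + (N + 1 : ℕ) = (y + N) + 1 := by push_cast; ring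
      rw [this, hder_rec _ (by have := Nat.cast_nonneg (α := ℝ) N; linarith), ih,
        Finset.sum_range_succ, add_comm y (N:ℝ)]
      ring
  -- convexity bounds
  have derivLB : ∀ t : ℝ, 0 < t → Real.log t ≤ deriv f (t + 1) := by
    intro t ht
    refine (le_of_eq ?_).trans <| hc.slope_le_deriv (Set.mem_Ioi.mpr ht)
      (Set.mem_Ioi.mpr (by linarith)) (by linarith) (hder (by linarith))
    rw [slope_def_field, show t + 1 - t = (1:ℝ) by ring, div_one, h_rec t ht,
      add_sub_cancel_left]
  have derivUB : ∀ t : ℝ, 0 < t → deriv f (t + 1) ≤ Real.log (t + 1) := by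
    intro t ht
    refine (hc.deriv_le_slope (Set.mem_Ioi.mpr (by linarith : (0:ℝ) < t + 1))
      (Set.mem_Ioi.mpr (by linarith : (0:ℝ) < t + 2)) (by linarith)
      (hder (by linarith))).trans (le_of_eq ?_)
    rw [slope_def_field, show t + 2 - (t + 1) = (1:ℝ) by ring, div_one,
      show t + 2 = (t + 1) + 1 by ring, h_rec (t + 1) (by linarith), add_sub_cancel_left]
  -- limit of log shifts
  have logshift : ∀ c : ℝ, Tendsto (fun N : ℕ => Real.log ((N : ℝ) + c) - Real.log N)
      atTop (𝓝 0) := by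
    intro c
    have h1 : Tendsto (fun N : ℕ => 1 + c / (N : ℝ)) atTop (𝓝 1) := by
      have := Tendsto.div_atTop (tendsto_const_nhds (x := c)) tendsto_natCast_atTop_atTop
      simpa using tendsto_const_nhds.add this
    have h2 : Tendsto (fun N : ℕ => Real.log (1 + c / (N : ℝ))) atTop (𝓝 0) := by
      have := (Real.continuousAt_log one_ne_zero).tendsto.comp h1
      simpa [Function.comp_def] using this
    apply h2.congr'
    filter_upwards [eventually_gt_atTop (max 1 (Nat.ceil (|c| + 1)))] with N hN
    have hN1 : (1:ℝ) ≤ (N : ℝ) := by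
      have : 1 ≤ N := le_of_lt (lt_of_le_of_lt (le_max_left _ _) hN)
      exact_mod_cast this
    have hNc : |c| + 1 ≤ (N : ℝ) := by
      have : Nat.ceil (|c| + 1) ≤ N := le_of_lt (lt_of_le_of_lt (le_max_right _ _) hN)
      calc |c| + 1 ≤ (Nat.ceil (|c| + 1) : ℝ) := Nat.le_ceil _
        _ ≤ N := by exact_mod_cast this
    have hNpos : (0:ℝ) < N := by linarith
    have hNcpos : (0:ℝ) < (N : ℝ) + c := by
      have := neg_abs_le c
      linarith
    rw [show 1 + c / (N:ℝ) = ((N:ℝ) + c) / N by field_simp,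
      Real.log_div hNcpos.ne' hNpos.ne']
  -- main limit assembly
  have hharm : ∀ N : ℕ, ((harmonic N : ℚ) : ℝ) = ∑ n ∈ range N, ((n : ℝ) + 1)⁻¹ := by
    intro N
    rw [harmonic]
    push_cast
    rfl
  set D : ℝ := ∑' n : ℕ, (((n : ℝ) + 1)⁻¹ - ((n : ℝ) + y)⁻¹) with hD
  have limit1 : Tendsto (fun N : ℕ => deriv f (y + N) - Real.log N) atTop (𝓝 0) := by
    apply tendsto_of_tendsto_of_tendsto_of_le_of_le' (logshift (y - 1)) (logshift y)
    · filter_upwards [eventually_ge_atTop 1] with N hN1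
      have ht : (0:ℝ) < y + N - 1 := by
        have : (1:ℝ) ≤ N := by exact_mod_cast hN1
        linarith
      have := derivLB _ ht
      rw [show y + (N:ℝ) - 1 + 1 = y + N by ring] at this
      have heq : (N:ℝ) + (y - 1) = y + N - 1 := by ring
      rw [heq]
      linarith
    · filter_upwards [eventually_ge_atTop 1] with N hN1
      have ht : (0:ℝ) < y + N - 1 := by
        have : (1:ℝ) ≤ N := by exact_mod_cast hN1
        linarith
      have := derivUB _ ht
      rw [show y + (N:ℝ) - 1 + 1 = y + N by ring] at this
      rw [show (N:ℝ) + y = y + N by ring]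
      linarith
  have limit2 : Tendsto (fun N : ℕ => ((harmonic N : ℚ) : ℝ) - Real.log N) atTop (𝓝 γ) :=
    Real.tendsto_harmonic_sub_log
  have limit3 : Tendsto (fun N : ℕ => ∑ n ∈ range N, (((n:ℝ)+1)⁻¹ - ((n:ℝ)+y)⁻¹))
      atTop (𝓝 D) := (summable_D hy).hasSum.tendsto_sum_nat
  have key : Tendsto (fun N : ℕ => deriv f (y + N) - ∑ n ∈ range N, ((n:ℝ)+y)⁻¹)
      atTop (𝓝 (0 - γ + D)) := by
    refine ((limit1.sub limit2).add limit3).congr (fun N => ?_)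
    rw [hharm N, Finset.sum_sub_distrib]
    ring
  have const : ∀ N : ℕ, deriv f (y + N) - ∑ n ∈ range N, ((n:ℝ)+y)⁻¹ = deriv f y := by
    intro N; rw [hN N]; ring
  have hfin : deriv f y = 0 - γ + D :=
    tendsto_nhds_unique (tendsto_const_nhds (x := deriv f y) (f := atTop (α := ℕ)))
      (by simpa [const] using key)
  rw [← hfd hy, hfin]
  ring








set_option maxHeartbeats 1000000 in
lemma hasDerivAt_D {y : ℝ} (hy : 0 < y) :
    HasDerivAt (fun w => ∑' n : ℕ, (((n : ℝ) + 1)⁻¹ - ((n : ℝ) + w)⁻¹)) (P 2 y) y := by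
  have key : HasDerivAt (fun w => ∑' n : ℕ, (((n : ℝ) + 1)⁻¹ - ((n : ℝ) + w)⁻¹))
      (∑' n : ℕ, (((n : ℝ) + y) ^ 2)⁻¹) y := by
    refine hasDerivAt_tsum_of_isPreconnected
      (u := fun n : ℕ => (((n : ℝ) + y / 2) ^ 2)⁻¹)
      (g' := fun (n : ℕ) (w : ℝ) => (((n : ℝ) + w) ^ 2)⁻¹)
      (summable_P (le_refl 2) (half_pos hy))
      isOpen_Ioi (isPreconnected_Ioi (a := y / 2))
      ?_ ?_ (Set.mem_Ioi.mpr (by linarith [half_pos hy] : y / 2 < y))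
      (summable_D hy) (Set.mem_Ioi.mpr (by linarith))
    · intro n w hw
      have hw0 : 0 < w := lt_trans (half_pos hy) (Set.mem_Ioi.mp hw)
      have := (term_hasDerivAt (le_refl 1) n hw0).const_sub (((n : ℝ) + 1)⁻¹)
      simpa using this
    · intro n w hw
      have hw2 : (0:ℝ) < y / 2 := half_pos hy
      have h1 : (0:ℝ) < (n : ℝ) + y / 2 := by positivity
      have h2 : (0:ℝ) < (n : ℝ) + w := lt_trans h1 (by simpa using Set.mem_Ioi.mp hw)
      rw [Real.norm_eq_abs, abs_of_nonneg (by positivity)]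
      apply inv_anti₀ (by positivity)
      apply pow_le_pow_left₀ h1.le
      have := Set.mem_Ioi.mp hw
      linarith
  exact key

lemma hasDerivAt_psi {y : ℝ} (hy : 0 < y) : HasDerivAt psi (P 2 y) y := by
  have hD : HasDerivAt
      (fun w => -Real.eulerMascheroniConstant
        + ∑' n : ℕ, (((n : ℝ) + 1)⁻¹ - ((n : ℝ) + w)⁻¹)) (P 2 y) y :=
    (hasDerivAt_D hy).const_add _
  refine hD.congr_of_eventuallyEq ?_
  filter_upwards [isOpen_Ioi.mem_nhds (Set.mem_Ioi.mpr hy)] with w hw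
  exact psi_eq hw

lemma iteratedDeriv_psi (m : ℕ) : ∀ {y : ℝ}, 0 < y →
    iteratedDeriv (m + 1) psi y = (-1) ^ m * ((m + 1).factorial : ℝ) * P (m + 2) y := by
  induction m with
  | zero =>
    intro y hy
    rw [iteratedDeriv_one]
    simp [(hasDerivAt_psi hy).deriv]
  | succ m ih =>
    intro y hy
    rw [iteratedDeriv_succ]
    have h1 : deriv (iteratedDeriv (m + 1) psi) y
        = deriv (fun w => (-1:ℝ) ^ m * ((m + 1).factorial : ℝ) * P (m + 2) w) y := by
      apply Filter.EventuallyEq.deriv_eq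
      filter_upwards [isOpen_Ioi.mem_nhds (Set.mem_Ioi.mpr hy)] with w hw
      exact ih hw
    rw [h1, (HasDerivAt.const_mul ((-1:ℝ) ^ m * ((m + 1).factorial : ℝ))
      (hasDerivAt_P (by omega) hy)).deriv]
    have h2 : P (m + 2 + 1) y = P (m + 1 + 2) y := by norm_num
    rw [h2, Nat.factorial_succ (m + 1)]
    push_cast
    ring


lemma P_reindex (k : ℕ) (t : ℝ) :
    P k (1 + t) = ∑' m : ℕ+, (((m : ℝ) + t) ^ k)⁻¹ := by
  rw [P, ← Equiv.pnatEquivNat.tsum_eq (fun n : ℕ => (((n : ℝ) + (1 + t)) ^ k)⁻¹)]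
  apply tsum_congr
  intro m
  have : ((Equiv.pnatEquivNat m : ℕ) : ℝ) + (1 + t) = (m : ℝ) + t := by
    rw [Equiv.pnatEquivNat_apply]
    have h1 : (m.natPred : ℕ) + 1 = (m : ℕ) := PNat.natPred_add_one m
    have : ((m.natPred : ℕ) : ℝ) + 1 = ((m : ℕ) : ℝ) := by exact_mod_cast congrArg Nat.cast h1
    linarith
  rw [this]

lemma summable_g : Summable (fun j : ℕ+ => ((Real.sqrt j) ^ 3)⁻¹) := by
  have h0 : Summable (fun n : ℕ => (((n : ℝ) ^ (3/2 : ℝ)))⁻¹) :=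
    Real.summable_nat_rpow_inv.mpr (by norm_num)
  have h1 : Summable ((fun n : ℕ => (((n : ℝ) ^ (3/2 : ℝ)))⁻¹) ∘ (fun j : ℕ+ => (j : ℕ))) :=
    h0.comp_injective PNat.coe_injective
  apply h1.congr
  intro j
  simp only [Function.comp_apply]
  congr 1
  rw [Real.sqrt_eq_rpow, ← Real.rpow_natCast (((j:ℕ) : ℝ) ^ ((1:ℝ)/2)) 3,
    ← Real.rpow_mul (Nat.cast_nonneg _)]
  norm_num

lemma sqrt_mul_sqrt_le {a b : ℝ} (ha : 0 ≤ a) (hb : 0 ≤ b) :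
    Real.sqrt a * Real.sqrt b ≤ a + b := by
  rw [← Real.sqrt_mul ha]
  calc Real.sqrt (a * b) ≤ Real.sqrt ((a + b) ^ 2) :=
        Real.sqrt_le_sqrt (by nlinarith)
    _ = a + b := Real.sqrt_sq (by linarith)

set_option maxHeartbeats 1000000 in
lemma summable_F {k : ℕ} (hk : 3 ≤ k) {x : ℝ} (hx : 0 < x) :
    Summable (fun p : ℕ+ × ℕ+ => (((p.2 : ℝ) + (p.1 : ℝ) * x) ^ k)⁻¹) := by
  set c : ℝ := min 1 x with hc
  have hc0 : 0 < c := lt_min one_pos hx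
  have hg := summable_g
  have hprod : Summable (fun p : ℕ+ × ℕ+ =>
      ((Real.sqrt p.1) ^ 3)⁻¹ * ((Real.sqrt p.2) ^ 3)⁻¹) :=
    hg.mul_of_nonneg hg (fun j => by positivity) (fun j => by positivity)
  refine Summable.of_nonneg_of_le (fun p => by positivity) ?_ (hprod.mul_left ((c ^ k)⁻¹))
  rintro ⟨j, m⟩
  simp only
  have hj1 : (1 : ℝ) ≤ (j : ℝ) := by exact_mod_cast j.one_le
  have hm1 : (1 : ℝ) ≤ (m : ℝ) := by exact_mod_cast m.one_le
  have hj0 : (0:ℝ) ≤ (j:ℝ) := by linarith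
  have hm0 : (0:ℝ) ≤ (m:ℝ) := by linarith
  have hsj : (1:ℝ) ≤ Real.sqrt j := by
    rw [show (1:ℝ) = Real.sqrt 1 by simp]; exact Real.sqrt_le_sqrt hj1
  have hsm : (1:ℝ) ≤ Real.sqrt m := by
    rw [show (1:ℝ) = Real.sqrt 1 by simp]; exact Real.sqrt_le_sqrt hm1
  -- m + j x ≥ c (m + j) ≥ c √m √j
  have h1 : c * (Real.sqrt m * Real.sqrt j) ≤ (m : ℝ) + (j : ℝ) * x := by
    have h2 : Real.sqrt m * Real.sqrt j ≤ (m : ℝ) + (j : ℝ) := sqrt_mul_sqrt_le hm0 hj0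
    have h3 : c * ((m : ℝ) + (j : ℝ)) ≤ (m : ℝ) + (j : ℝ) * x := by
      have := min_le_left 1 x
      have := min_le_right 1 x
      nlinarith
    nlinarith [Real.sqrt_nonneg (m:ℝ), Real.sqrt_nonneg (j:ℝ)]
  have hkey : (c * (Real.sqrt m * Real.sqrt j)) ^ k ≤ ((m : ℝ) + (j : ℝ) * x) ^ k :=
    pow_le_pow_left₀ (by positivity) h1 k
  have hexp : c ^ k * ((Real.sqrt j) ^ 3 * (Real.sqrt m) ^ 3)
      ≤ (c * (Real.sqrt m * Real.sqrt j)) ^ k := by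
    rw [mul_pow, mul_pow]
    apply mul_le_mul_of_nonneg_left _ (by positivity)
    have h4 : (Real.sqrt m) ^ 3 ≤ (Real.sqrt m) ^ k := pow_le_pow_right₀ hsm hk
    have h5 : (Real.sqrt j) ^ 3 ≤ (Real.sqrt j) ^ k := pow_le_pow_right₀ hsj hk
    calc (Real.sqrt j) ^ 3 * (Real.sqrt m) ^ 3
        ≤ (Real.sqrt j) ^ k * (Real.sqrt m) ^ k := by
          apply mul_le_mul h5 h4 (by positivity) (by positivity)
      _ = (Real.sqrt m) ^ k * (Real.sqrt j) ^ k := by ring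
  calc (((m : ℝ) + (j : ℝ) * x) ^ k)⁻¹
      ≤ (c ^ k * ((Real.sqrt j) ^ 3 * (Real.sqrt m) ^ 3))⁻¹ := by
        apply inv_anti₀ (by positivity)
        exact le_trans hexp hkey
    _ = (c ^ k)⁻¹ * (((Real.sqrt j) ^ 3)⁻¹ * ((Real.sqrt m) ^ 3)⁻¹) := by
        rw [mul_inv, mul_inv]

theorem stmt8 (z : ℕ) (hz : 2 < z) (x : ℝ) (hx : 0 < x) :
    x ^ ((z : ℝ) / 2) * (∑' j : ℕ+, iteratedDeriv (z - 1) psi (1 + (j : ℝ) * x))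
      = x ^ (-((z : ℝ) / 2)) * (∑' j : ℕ+, iteratedDeriv (z - 1) psi (1 + (j : ℝ) / x))
    ∧ Summable (fun j : ℕ+ => iteratedDeriv (z - 1) psi (1 + (j : ℝ) * x))
    ∧ Summable (fun j : ℕ+ => iteratedDeriv (z - 1) psi (1 + (j : ℝ) / x)) := by
  obtain ⟨m, rfl⟩ : ∃ m, z = m + 3 := ⟨z - 3, by omega⟩
  have hk3 : 3 ≤ m + 3 := by omega
  set C : ℝ := (-1) ^ (m + 1) * ((m + 2).factorial : ℝ) with hC
  have hxinv : 0 < x⁻¹ := inv_pos.mpr hx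
  -- pointwise identification
  have hpt : ∀ (w : ℝ), 0 < w → ∀ j : ℕ+,
      iteratedDeriv (m + 3 - 1) psi (1 + (j : ℝ) * w)
        = C * ∑' mm : ℕ+, (((mm : ℝ) + (j : ℝ) * w) ^ (m + 3))⁻¹ := by
    intro w hw j
    have hj0 : (0:ℝ) < (j : ℝ) := by exact_mod_cast j.pos
    have hjw : 0 < (j : ℝ) * w := mul_pos hj0 hw
    rw [show m + 3 - 1 = (m + 1) + 1 from by omega,
      iteratedDeriv_psi (m + 1) (by linarith : (0:ℝ) < 1 + (j:ℝ) * w),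
      show m + 1 + 2 = m + 3 from by omega, P_reindex,
      show m + 1 + 1 = m + 2 from by omega]
  have hF : ∀ {w : ℝ}, 0 < w →
      Summable (fun p : ℕ+ × ℕ+ => (((p.2:ℝ) + (p.1:ℝ) * w) ^ (m+3))⁻¹) :=
    fun hw => summable_F hk3 hw
  have hQ : ∀ {w : ℝ}, 0 < w →
      Summable (fun j : ℕ+ => ∑' mm : ℕ+, (((mm:ℝ) + (j:ℝ) * w) ^ (m+3))⁻¹) :=
    fun hw => ((summable_prod_of_nonneg (fun p => by positivity)).mp (hF hw)).2
  have hptinv : ∀ j : ℕ+, iteratedDeriv (m + 3 - 1) psi (1 + (j:ℝ) / x)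
      = C * ∑' mm : ℕ+, (((mm:ℝ) + (j:ℝ) * x⁻¹) ^ (m+3))⁻¹ := by
    intro j
    rw [div_eq_mul_inv]
    exact hpt x⁻¹ hxinv j
  refine ⟨?_, ?_, ?_⟩
  · -- main equality
    have hL : (∑' j : ℕ+, iteratedDeriv (m + 3 - 1) psi (1 + (j:ℝ) * x))
        = C * ∑' p : ℕ+ × ℕ+, (((p.2:ℝ) + (p.1:ℝ) * x) ^ (m+3))⁻¹ := by
      rw [tsum_congr (hpt x hx), tsum_mul_left, Summable.tsum_prod (hF hx)]
    have hR : (∑' j : ℕ+, iteratedDeriv (m + 3 - 1) psi (1 + (j:ℝ) / x))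
        = C * (x ^ (m+3) * ∑' p : ℕ+ × ℕ+, (((p.2:ℝ) + (p.1:ℝ) * x) ^ (m+3))⁻¹) := by
      rw [tsum_congr hptinv, tsum_mul_left]
      congr 1
      rw [← Summable.tsum_prod (hF hxinv)]
      have h1 : ∀ p : ℕ+ × ℕ+, (((p.2:ℝ) + (p.1:ℝ) * x⁻¹) ^ (m+3))⁻¹
          = x ^ (m+3) * ((((p.2:ℝ) * x + (p.1:ℝ))) ^ (m+3))⁻¹ := by
        intro p
        rw [show ((p.2:ℝ) + (p.1:ℝ) * x⁻¹) = ((p.2:ℝ) * x + (p.1:ℝ)) / x from by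
          field_simp]
        rw [div_pow, inv_div, div_eq_mul_inv]
      rw [tsum_congr h1, tsum_mul_left]
      congr 1
      rw [← (Equiv.prodComm ℕ+ ℕ+).tsum_eq
        (fun q : ℕ+ × ℕ+ => (((q.2:ℝ) + (q.1:ℝ) * x) ^ (m+3))⁻¹)]
      apply tsum_congr
      intro p
      simp only [Equiv.prodComm_apply, Prod.snd_swap, Prod.fst_swap]
      rw [add_comm]
    rw [hL, hR, ← Real.rpow_natCast x (m + 3),
      show x ^ (((m+3 : ℕ) : ℝ) / 2) = x ^ (-(((m+3:ℕ):ℝ) / 2)) * x ^ (((m+3:ℕ)):ℝ) from by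
        rw [← Real.rpow_add hx]; congr 1; ring]
    ring
  · exact (((hQ hx).mul_left C).congr (fun j => (hpt x hx j).symm))
  · exact (((hQ hxinv).mul_left C).congr (fun j => (hptinv j).symm))
end

section
/- Let x > 0. Then x Σ_{j=1}^∞ ( ψ'(1 + jx) − 1/(jx) ) − (1/2) log x = (1/x) Σ_{j=1}^∞ ( ψ'(1 + j/x) − x/j ) − (1/2) log(1/x), where ψ' is the derivative (trigamma function) of the digamma function; both series converge absolutely. -/
open Real Filter Topology Finset

noncomputable def Tg (y : ℝ) : ℝ := ∑' k : ℕ, 1 / (y + k)^2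

lemma summable_aux {c : ℝ} (hc : 0 < c) : Summable (fun k : ℕ => 1/((c + k)^2)) := by
  have hsum : Summable (fun k : ℕ => 1/(((k:ℝ)+1)^2)) := by
    have := (summable_nat_add_iff (f := fun n : ℕ => 1/(n:ℝ)^2) 1).2
      (summable_one_div_nat_pow.2 one_lt_two)
    simpa using this
  refine (summable_nat_add_iff 1).1 (Summable.of_nonneg_of_le (fun k => by positivity)
    (fun k => ?_) hsum)
  have h2 : ((k:ℝ)+1)^2 ≤ (c + ((k:ℕ)+1:ℕ))^2 := by push_cast; nlinarith [k.cast_nonneg (α := ℝ)]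
  exact one_div_le_one_div_of_le (by positivity) h2

lemma hasSum_tele {c : ℝ} (hc : 0 < c) :
    HasSum (fun k : ℕ => 1/(c+k) - 1/(c+k+1)) (1/c) := by
  have hnn : ∀ k : ℕ, 0 ≤ 1/(c+(k:ℝ)) - 1/(c+k+1) := by
    intro k
    have h1 : (0:ℝ) < c + k := by positivity
    have := one_div_le_one_div_of_le h1 (by linarith : c + (k:ℝ) ≤ c + k + 1)
    linarith
  rw [hasSum_iff_tendsto_nat_of_nonneg hnn]
  have h : ∀ n : ℕ, ∑ k ∈ Finset.range n, (1/(c+(k:ℝ)) - 1/(c+k+1)) = 1/c - 1/(c+n) := by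
    intro n
    have hs := Finset.sum_range_sub' (fun k => 1/(c+(k:ℝ))) n
    push_cast at hs
    simp only [add_zero] at hs
    rw [← hs]
    exact Finset.sum_congr rfl fun k _ => by ring
  simp only [h]
  have : Tendsto (fun n : ℕ => 1/(c+(n:ℝ))) atTop (𝓝 0) := by
    simp only [one_div]
    exact (tendsto_atTop_add_const_left _ c tendsto_natCast_atTop_atTop).inv_tendsto_atTop
  simpa using tendsto_const_nhds.sub this

lemma hasSum_Tg {y : ℝ} (hy : 0 < y) : HasSum (fun k : ℕ => 1/((y+k)^2)) (Tg y) :=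
  (summable_aux hy).hasSum

lemma Tg_le {t : ℝ} (ht : 0 < t) : Tg (1+t) ≤ 1/t := by
  rw [← (hasSum_tele ht).tsum_eq]
  refine Summable.tsum_le_tsum (fun k => ?_) (summable_aux (by linarith)) (hasSum_tele ht).summable
  have h1 : 1/(t+(k:ℝ)) - 1/(t+k+1) = 1/((t+k)*(t+k+1)) := by
    rw [div_sub_div _ _ (by positivity) (by positivity)]
    congr 1; ring
  rw [h1]
  exact one_div_le_one_div_of_le (by positivity) (by nlinarith [k.cast_nonneg (α := ℝ)])

lemma le_Tg {t : ℝ} (ht : 0 < t) : 1/(1+t) ≤ Tg (1+t) := by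
  rw [← (hasSum_tele (by linarith : (0:ℝ) < 1+t)).tsum_eq]
  refine Summable.tsum_le_tsum (fun k => ?_) (hasSum_tele (by linarith)).summable (summable_aux (by linarith))
  have h1 : 1/((1+t)+(k:ℝ)) - 1/((1+t)+k+1) = 1/(((1+t)+k)*((1+t)+k+1)) := by
    rw [div_sub_div _ _ (by positivity) (by positivity)]
    congr 1; ring
  rw [h1]
  exact one_div_le_one_div_of_le (by positivity) (by nlinarith [k.cast_nonneg (α := ℝ)])

lemma Tg_shift {t : ℝ} (ht : 0 < t) (N : ℕ) :
    Tg (1+t) = (∑ m ∈ Finset.range N, 1/((t+(m+1))^2)) + Tg (1+(t+N)) := by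
  have hs := summable_aux (show (0:ℝ) < 1+t by linarith)
  rw [Tg, ← Summable.sum_add_tsum_nat_add N hs]
  congr 1
  · exact Finset.sum_congr rfl fun m _ => by push_cast; ring_nf
  · rw [Tg]; exact (tsum_congr fun m => by push_cast; ring_nf).symm

noncomputable def Dg (y : ℝ) : ℝ :=
  -Real.eulerMascheroniConstant - 1/y + ∑' k : ℕ, (1/((k:ℝ)+1) - 1/(y+(k+1)))
noncomputable def Lf (n : ℕ) (y : ℝ) : ℝ :=
  y * Real.log n + Real.log (n.factorial) - ∑ k ∈ Finset.range (n+1), Real.log (y + k)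
noncomputable def Lf' (n : ℕ) (y : ℝ) : ℝ := Real.log n - ∑ k ∈ Finset.range (n+1), 1/(y + k)
noncomputable def Lf'' (n : ℕ) (y : ℝ) : ℝ := ∑ k ∈ Finset.range (n+1), 1/((y + k)^2)

lemma hasDerivAt_Lf (n : ℕ) {x : ℝ} (hx : 0 < x) : HasDerivAt (Lf n) (Lf' n x) x := by
  have h1 : ∀ k ∈ Finset.range (n+1), HasDerivAt (fun y => Real.log (y + (k:ℝ))) (1/(x + k)) x := by
    intro k _
    have hpos : 0 < x + (k:ℝ) := add_pos_of_pos_of_nonneg hx k.cast_nonneg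
    have h := ((hasDerivAt_id x).add_const (k:ℝ)).log hpos.ne'
    simpa using h
  have h2 := HasDerivAt.fun_sum h1
  have h3 : HasDerivAt (fun y => y * Real.log n + Real.log (n.factorial)) (Real.log n) x :=
    (hasDerivAt_mul_const (Real.log n)).add_const _
  have e : Lf n = fun y => y * Real.log n + Real.log (n.factorial)
      - ∑ k ∈ Finset.range (n+1), Real.log (y + k) := rfl
  rw [e, Lf']
  exact h3.sub h2

lemma hasDerivAt_Lf' (n : ℕ) {x : ℝ} (hx : 0 < x) : HasDerivAt (Lf' n) (Lf'' n x) x := by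
  have h1 : ∀ k ∈ Finset.range (n+1), HasDerivAt (fun y => 1/(y + (k:ℝ))) (-(1/((x+k)^2))) x := by
    intro k _
    have hpos : 0 < x + (k:ℝ) := add_pos_of_pos_of_nonneg hx k.cast_nonneg
    have h := ((hasDerivAt_id x).add_const (k:ℝ)).inv hpos.ne'
    simpa [one_div, neg_div, Pi.inv_def] using h
  have h2 := HasDerivAt.fun_sum h1
  have h3 := (hasDerivAt_const x (Real.log n)).sub h2
  have e : Lf' n = fun y : ℝ => Real.log n - ∑ k ∈ Finset.range (n+1), 1/(y + k) := rfl
  rw [e, Lf'']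
  simpa [Finset.sum_neg_distrib, one_div, Pi.sub_def] using h3

lemma tendsto_Lf {x : ℝ} (hx : 0 < x) :
    Tendsto (fun n => Lf n x) atTop (𝓝 (Real.log (Real.Gamma x))) := by
  have h := (Real.continuousAt_log (Real.Gamma_pos_of_pos hx).ne').tendsto.comp
      (Real.GammaSeq_tendsto_Gamma x)
  apply h.congr'
  filter_upwards [eventually_ge_atTop 1] with n hn
  have hn0 : (0:ℝ) < n := by exact_mod_cast hn
  have hprod : ∀ j ∈ Finset.range (n+1), x + (j:ℝ) ≠ 0 :=
    fun j _ => (add_pos_of_pos_of_nonneg hx j.cast_nonneg).ne'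
  rw [Function.comp_apply, Real.GammaSeq, Real.log_div (by positivity)
      (Finset.prod_ne_zero_iff.2 hprod),
    Real.log_mul (Real.rpow_pos_of_pos hn0 x).ne' (by exact_mod_cast n.factorial_ne_zero),
    Real.log_rpow hn0, Real.log_prod hprod, Lf]

lemma Lf'_eq (n : ℕ) {x : ℝ} (hx : 0 < x) :
    Lf' n x = (Real.log n - (harmonic n : ℝ)) +
      (∑ k ∈ Finset.range n, (1/((k:ℝ)+1) - 1/(x+(k+1))) + (-(1/x))) := by
  have hsplit : ∑ k ∈ Finset.range (n+1), 1/(x+(k:ℝ)) =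
      1/x + ∑ k ∈ Finset.range n, 1/(x+((k:ℝ)+1)) := by
    rw [Finset.sum_range_succ' (fun k => 1/(x+(k:ℝ))) n]
    push_cast
    simp only [add_zero]
    ring
  have hh : (harmonic n : ℝ) = ∑ k ∈ Finset.range n, 1/((k:ℝ)+1) := by
    rw [harmonic]; push_cast; simp [one_div]
  rw [Lf', hsplit, hh, Finset.sum_sub_distrib]
  ring

lemma summable_sq_succ : Summable (fun k : ℕ => 1/(((k:ℝ)+1)^2)) := by
  have := (summable_nat_add_iff (f := fun n : ℕ => 1/(n:ℝ)^2) 1).2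
    (summable_one_div_nat_pow.2 one_lt_two)
  simpa using this

lemma tendstoUniformlyOn_shift {F : ℕ → ℝ → ℝ} {g : ℝ → ℝ} {s : Set ℝ}
    (h : TendstoUniformlyOn F g atTop s) :
    TendstoUniformlyOn (fun n => F (n+1)) g atTop s := by
  rw [Metric.tendstoUniformlyOn_iff] at h ⊢
  intro ε hε
  exact (tendsto_add_atTop_nat 1).eventually (h ε hε)

lemma tendstoUniformlyOn_of_tendsto_const {c : ℕ → ℝ} {L : ℝ}
    (h : Tendsto c atTop (𝓝 L)) (s : Set ℝ) :
    TendstoUniformlyOn (fun n (_ : ℝ) => c n) (fun _ => L) atTop s := by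
  rw [Metric.tendstoUniformlyOn_iff]
  intro ε hε
  filter_upwards [Metric.tendsto_nhds.1 h ε hε] with n hn x _
  rwa [dist_comm]

lemma tendstoUniformlyOn_of_const (f : ℝ → ℝ) (s : Set ℝ) :
    TendstoUniformlyOn (fun (_ : ℕ) => f) f atTop s := by
  rw [Metric.tendstoUniformlyOn_iff]
  intro ε hε
  filter_upwards with n x _
  simpa using hε

lemma unif_Lf' {a b : ℝ} (ha : 0 < a) :
    TendstoUniformlyOn Lf' Dg atTop (Set.Ioo a b) := by
  have h1 : TendstoUniformlyOn (fun (n : ℕ) (_ : ℝ) => Real.log (n : ℝ) - (harmonic n : ℝ))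
      (fun _ => -Real.eulerMascheroniConstant) atTop (Set.Ioo a b) := by
    apply tendstoUniformlyOn_of_tendsto_const
    have := Real.tendsto_harmonic_sub_log.neg
    simpa [neg_sub] using this
  have h2 : TendstoUniformlyOn
      (fun (n:ℕ) (x:ℝ) => ∑ k ∈ Finset.range n, (1/((k:ℝ)+1) - 1/(x+(k+1))))
      (fun x => ∑' k : ℕ, (1/((k:ℝ)+1) - 1/(x+(k+1)))) atTop (Set.Ioo a b) := by
    have hu : Summable (fun k:ℕ => b/(((k:ℝ)+1)^2)) := by
      simpa [div_eq_mul_inv] using summable_sq_succ.mul_left b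
    refine tendstoUniformlyOn_tsum_nat hu ?_
    intro k x hx
    have hx0 : 0 < x := lt_trans ha hx.1
    have hxb : x < b := hx.2
    have hk : (0:ℝ) < (k:ℝ)+1 := by positivity
    have heq : 1/((k:ℝ)+1) - 1/(x+((k:ℝ)+1)) = x/(((k:ℝ)+1)*(x+((k:ℝ)+1))) := by
      rw [div_sub_div _ _ hk.ne' (by positivity)]
      congr 1
      ring
    rw [heq, Real.norm_eq_abs, abs_of_nonneg (by positivity)]
    rw [div_le_div_iff₀ (by positivity) (by positivity)]
    have hb : 0 < b := lt_trans hx0 hxb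
    have t1 : x * (((k:ℝ)+1)^2) ≤ b * (((k:ℝ)+1)^2) := by nlinarith
    have t2 : b * (((k:ℝ)+1)^2) ≤ b * (((k:ℝ)+1)*(x+((k:ℝ)+1))) := by
      have h0 : 0 ≤ b*((k:ℝ)+1)*x := by positivity
      nlinarith [h0]
    linarith
  have h3 := tendstoUniformlyOn_of_const (fun x:ℝ => -(1/x)) (Set.Ioo a b)
  have hsum := h1.add (h2.add h3)
  refine (hsum.congr ?_).congr_right ?_
  · filter_upwards with n
    intro x hx
    simp only [Pi.add_apply]
    exact (Lf'_eq n (lt_trans ha hx.1)).symm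
  · intro x _
    simp only [Pi.add_apply, Dg]
    ring

lemma unif_Lf'' {a b : ℝ} (ha : 0 < a) :
    TendstoUniformlyOn Lf'' Tg atTop (Set.Ioo a b) := by
  have h : TendstoUniformlyOn (fun (n:ℕ) (x:ℝ) => ∑ k ∈ Finset.range n, 1/((x+(k:ℝ))^2))
      (fun x => ∑' k : ℕ, 1/((x+(k:ℝ))^2)) atTop (Set.Ioo a b) := by
    refine tendstoUniformlyOn_tsum_nat (summable_aux ha) ?_
    intro k x hx
    have h2 : (a+(k:ℝ))^2 ≤ (x+(k:ℝ))^2 := by nlinarith [k.cast_nonneg (α := ℝ), hx.1]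
    rw [Real.norm_eq_abs, abs_of_nonneg (by positivity)]
    exact one_div_le_one_div_of_le (by positivity) h2
  exact tendstoUniformlyOn_shift h

lemma psi_eq_Dg {y : ℝ} (hy : 0 < y) : psi y = Dg y := by
  have hmem : y ∈ Set.Ioo (y/2) (y+1) := ⟨by linarith, by linarith⟩
  have ha : 0 < y/2 := by linarith
  have hd : HasDerivAt (fun t => Real.log (Real.Gamma t)) (Dg y) y := by
    refine hasDerivAt_of_tendstoUniformlyOn (f := Lf) isOpen_Ioo (unif_Lf' ha) ?_ ?_ hmem
    · filter_upwards with n t ht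
      exact hasDerivAt_Lf n (lt_trans ha ht.1)
    · intro t ht
      exact tendsto_Lf (lt_trans ha ht.1)
  have hney : ∀ m : ℕ, y ≠ -(m:ℝ) :=
    fun m => ((neg_nonpos.2 m.cast_nonneg).trans_lt hy).ne'
  have hg : HasDerivAt Real.Gamma (deriv Real.Gamma y) y :=
    (Real.differentiableAt_Gamma hney).hasDerivAt
  have hψ : HasDerivAt (fun t => Real.log (Real.Gamma t)) (deriv Real.Gamma y / Real.Gamma y) y :=
    hg.log (Real.Gamma_pos_of_pos hy).ne'
  exact hψ.unique hd

lemma hasDerivAt_Dg {y : ℝ} (hy : 0 < y) : HasDerivAt Dg (Tg y) y := by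
  have ha : 0 < y/2 := by linarith
  have hmem : y ∈ Set.Ioo (y/2) (y+1) := ⟨by linarith, by linarith⟩
  refine hasDerivAt_of_tendstoUniformlyOn (f := Lf') isOpen_Ioo (unif_Lf'' ha) ?_ ?_ hmem
  · filter_upwards with n t ht
    exact hasDerivAt_Lf' n (lt_trans ha ht.1)
  · intro t ht
    exact (unif_Lf' ha).tendsto_at ht

lemma deriv_psi {y : ℝ} (hy : 0 < y) : deriv psi y = Tg y := by
  have hev : psi =ᶠ[𝓝 y] Dg := by
    filter_upwards [Ioi_mem_nhds hy] with t ht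
    exact psi_eq_Dg ht
  rw [hev.deriv_eq, (hasDerivAt_Dg hy).deriv]

lemma sum_xTg_le {c : ℝ} (hc : 0 < c) {N : ℕ} (hN : 1 ≤ N) :
    ∑ j ∈ Finset.range N, c * Tg (1 + ((N:ℝ) + ((j:ℝ)+1)*c)) ≤ Real.log (1+c) := by
  have hNpos : (0:ℝ) < N := by exact_mod_cast hN
  set F : ℕ → ℝ := fun j => Real.log ((N:ℝ) + (j:ℝ)*c) with hF
  have step : ∀ j ∈ Finset.range N, c * Tg (1 + ((N:ℝ) + ((j:ℝ)+1)*c)) ≤ F (j+1) - F j := by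
    intro j _
    simp only [hF]
    push_cast
    have hj0 : (0:ℝ) ≤ j := j.cast_nonneg
    have ht : 0 < (N:ℝ) + ((j:ℝ)+1)*c := by nlinarith
    have ha : 0 < (N:ℝ) + (j:ℝ)*c := by nlinarith
    have h1 : c * Tg (1 + ((N:ℝ) + ((j:ℝ)+1)*c)) ≤ c * (1/((N:ℝ) + ((j:ℝ)+1)*c)) :=
      mul_le_mul_of_nonneg_left (Tg_le ht) hc.le
    have h2 : Real.log (((N:ℝ) + (j:ℝ)*c)/((N:ℝ) + ((j:ℝ)+1)*c))
        ≤ ((N:ℝ) + (j:ℝ)*c)/((N:ℝ) + ((j:ℝ)+1)*c) - 1 :=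
      Real.log_le_sub_one_of_pos (by positivity)
    rw [Real.log_div ha.ne' ht.ne'] at h2
    have h3 : c * (1/((N:ℝ) + ((j:ℝ)+1)*c)) = 1 - ((N:ℝ) + (j:ℝ)*c)/((N:ℝ) + ((j:ℝ)+1)*c) := by
      field_simp
      ring
    linarith
  calc ∑ j ∈ Finset.range N, c * Tg (1 + ((N:ℝ) + ((j:ℝ)+1)*c))
      ≤ ∑ j ∈ Finset.range N, (F (j+1) - F j) := Finset.sum_le_sum step
    _ = F N - F 0 := Finset.sum_range_sub F N
    _ = Real.log (1+c) := by
        simp only [hF]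
        push_cast
        rw [zero_mul, add_zero, show (N:ℝ) + (N:ℝ)*c = (N:ℝ)*(1+c) by ring,
          Real.log_mul hNpos.ne' (by positivity)]
        ring

lemma le_sum_xTg {c : ℝ} (hc : 0 < c) {N : ℕ} (hN : 1 ≤ N) :
    Real.log (1+c) - 2*c/N ≤ ∑ j ∈ Finset.range N, c * Tg (1 + ((N:ℝ) + ((j:ℝ)+1)*c)) := by
  have hNpos : (0:ℝ) < N := by exact_mod_cast hN
  set F : ℕ → ℝ := fun j => Real.log ((N:ℝ) + ((j:ℝ)+1)*c) with hF
  have step : ∀ j ∈ Finset.range N,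
      F (j+1) - F j - c/(N:ℝ)^2 ≤ c * Tg (1 + ((N:ℝ) + ((j:ℝ)+1)*c)) := by
    intro j _
    simp only [hF]
    push_cast
    have hj0 : (0:ℝ) ≤ j := j.cast_nonneg
    have ht : 0 < (N:ℝ) + ((j:ℝ)+1)*c := by nlinarith
    have htN : (N:ℝ) ≤ (N:ℝ) + ((j:ℝ)+1)*c := by nlinarith
    have h1 : c * (1/(1+((N:ℝ) + ((j:ℝ)+1)*c))) ≤ c * Tg (1 + ((N:ℝ) + ((j:ℝ)+1)*c)) :=
      mul_le_mul_of_nonneg_left (le_Tg ht) hc.le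
    have h2 : Real.log ((((N:ℝ) + ((j:ℝ)+1)*c)+c)/((N:ℝ) + ((j:ℝ)+1)*c))
        ≤ (((N:ℝ) + ((j:ℝ)+1)*c)+c)/((N:ℝ) + ((j:ℝ)+1)*c) - 1 :=
      Real.log_le_sub_one_of_pos (by positivity)
    rw [Real.log_div (by positivity) ht.ne'] at h2
    have h3 : (((N:ℝ) + ((j:ℝ)+1)*c)+c)/((N:ℝ) + ((j:ℝ)+1)*c) - 1
        = c/((N:ℝ) + ((j:ℝ)+1)*c) := by
      field_simp
      ring
    have h4 : c/((N:ℝ) + ((j:ℝ)+1)*c) - c*(1/(1+((N:ℝ) + ((j:ℝ)+1)*c))) ≤ c/(N:ℝ)^2 := by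
      rw [mul_one_div, div_sub_div _ _ ht.ne' (by positivity),
        show c*(1+((N:ℝ) + ((j:ℝ)+1)*c)) - ((N:ℝ) + ((j:ℝ)+1)*c)*c = c by ring]
      rw [div_le_div_iff₀ (by positivity) (by positivity)]
      have hNt : (N:ℝ)^2 ≤ ((N:ℝ) + ((j:ℝ)+1)*c)^2 := by nlinarith
      nlinarith [mul_le_mul_of_nonneg_left hNt hc.le, mul_pos hc ht]
    have h5 : Real.log ((N:ℝ) + ((j:ℝ)+1+1)*c) - Real.log ((N:ℝ) + ((j:ℝ)+1)*c)
        ≤ c/((N:ℝ) + ((j:ℝ)+1)*c) := by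
      rw [show (N:ℝ) + ((j:ℝ)+1+1)*c = ((N:ℝ) + ((j:ℝ)+1)*c)+c by ring]
      linarith
    linarith
  have hsum : ∑ j ∈ Finset.range N, (F (j+1) - F j - c/(N:ℝ)^2)
      = F N - F 0 - (N:ℝ)*(c/(N:ℝ)^2) := by
    rw [show (fun j => F (j+1) - F j - c/(N:ℝ)^2) = (fun j => (F (j+1) - F j) - c/(N:ℝ)^2) from rfl,
      Finset.sum_sub_distrib, Finset.sum_range_sub F N, Finset.sum_const, Finset.card_range,
      nsmul_eq_mul]
  have hFN : Real.log (N:ℝ) + Real.log (1+c) ≤ F N := by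
    simp only [hF]
    rw [← Real.log_mul hNpos.ne' (by positivity)]
    apply Real.log_le_log (by positivity)
    nlinarith
  have hF0 : F 0 ≤ Real.log (N:ℝ) + c/(N:ℝ) := by
    simp only [hF]
    push_cast
    have h2 : Real.log (((N:ℝ)+c)/(N:ℝ)) ≤ ((N:ℝ)+c)/(N:ℝ) - 1 :=
      Real.log_le_sub_one_of_pos (by positivity)
    rw [Real.log_div (by positivity) hNpos.ne'] at h2
    have h3 : ((N:ℝ)+c)/(N:ℝ) - 1 = c/(N:ℝ) := by field_simp; ring
    have h4 : (N:ℝ) + ((0:ℝ)+1)*c = (N:ℝ)+c := by ring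
    rw [h4]
    linarith
  have hNc : (N:ℝ)*(c/(N:ℝ)^2) = c/(N:ℝ) := by
    field_simp
  have := Finset.sum_le_sum step
  rw [hsum, hNc] at this
  have h2cN : c/(N:ℝ) + c/(N:ℝ) = 2*c/(N:ℝ) := by ring
  linarith

lemma AB_eq {x : ℝ} (hx : 0 < x) (N : ℕ) :
    ∑ j ∈ Finset.range N, (x * Tg (1 + ((j:ℝ)+1)*x) - x⁻¹ * Tg (1 + ((j:ℝ)+1)*x⁻¹))
    = ∑ j ∈ Finset.range N, x * Tg (1 + ((N:ℝ) + ((j:ℝ)+1)*x))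
      - ∑ j ∈ Finset.range N, x⁻¹ * Tg (1 + ((N:ℝ) + ((j:ℝ)+1)*x⁻¹)) := by
  have hx' : 0 < x⁻¹ := inv_pos.2 hx
  have h1 : ∀ j : ℕ, x * Tg (1 + ((j:ℝ)+1)*x)
      = (∑ m ∈ Finset.range N, x/((((j:ℝ)+1)*x+((m:ℝ)+1))^2))
        + x * Tg (1 + ((N:ℝ) + ((j:ℝ)+1)*x)) := by
    intro j
    have ht : 0 < ((j:ℝ)+1)*x := by positivity
    rw [Tg_shift ht N, mul_add, Finset.mul_sum, add_comm (((j:ℝ)+1)*x) (N:ℝ)]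
    congr 1
    exact Finset.sum_congr rfl fun m _ => by rw [mul_one_div]
  have h2 : ∀ j : ℕ, x⁻¹ * Tg (1 + ((j:ℝ)+1)*x⁻¹)
      = (∑ m ∈ Finset.range N, x/((((m:ℝ)+1)*x+((j:ℝ)+1))^2))
        + x⁻¹ * Tg (1 + ((N:ℝ) + ((j:ℝ)+1)*x⁻¹)) := by
    intro j
    have ht : 0 < ((j:ℝ)+1)*x⁻¹ := by positivity
    rw [Tg_shift ht N, mul_add, Finset.mul_sum, add_comm (((j:ℝ)+1)*x⁻¹) (N:ℝ)]
    congr 1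
    refine Finset.sum_congr rfl fun m _ => ?_
    rw [mul_one_div]
    rw [div_eq_div_iff (by positivity) (by positivity)]
    field_simp
    ring
  have e1 : ∑ j ∈ Finset.range N, x * Tg (1 + ((j:ℝ)+1)*x)
      = (∑ j ∈ Finset.range N, ∑ m ∈ Finset.range N, x/((((j:ℝ)+1)*x+((m:ℝ)+1))^2))
        + ∑ j ∈ Finset.range N, x * Tg (1 + ((N:ℝ) + ((j:ℝ)+1)*x)) := by
    rw [← Finset.sum_add_distrib]
    exact Finset.sum_congr rfl fun j _ => h1 j
  have e2 : ∑ j ∈ Finset.range N, x⁻¹ * Tg (1 + ((j:ℝ)+1)*x⁻¹)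
      = (∑ j ∈ Finset.range N, ∑ m ∈ Finset.range N, x/((((m:ℝ)+1)*x+((j:ℝ)+1))^2))
        + ∑ j ∈ Finset.range N, x⁻¹ * Tg (1 + ((N:ℝ) + ((j:ℝ)+1)*x⁻¹)) := by
    rw [← Finset.sum_add_distrib]
    exact Finset.sum_congr rfl fun j _ => h2 j
  have hcomm : (∑ j ∈ Finset.range N, ∑ m ∈ Finset.range N, x/((((m:ℝ)+1)*x+((j:ℝ)+1))^2))
      = ∑ j ∈ Finset.range N, ∑ m ∈ Finset.range N, x/((((j:ℝ)+1)*x+((m:ℝ)+1))^2) :=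
    Finset.sum_comm
  rw [Finset.sum_sub_distrib, e1, e2, hcomm]
  ring

lemma summable_a {x : ℝ} (hx : 0 < x) :
    Summable (fun j : ℕ => x * Tg (1 + ((j:ℝ)+1)*x) - 1/((j:ℝ)+1)) := by
  have hg : Summable (fun j : ℕ => 1/((j:ℝ)+1) - x * Tg (1 + ((j:ℝ)+1)*x)) := by
    refine Summable.of_nonneg_of_le (fun j => ?_) (fun j => ?_) (summable_sq_succ.mul_left x⁻¹)
    · have ht : 0 < ((j:ℝ)+1)*x := by positivity
      have h1 : x * Tg (1 + ((j:ℝ)+1)*x) ≤ x * (1/(((j:ℝ)+1)*x)) :=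
        mul_le_mul_of_nonneg_left (Tg_le ht) hx.le
      have h2 : x * (1/(((j:ℝ)+1)*x)) = 1/((j:ℝ)+1) := by
        field_simp
      linarith
    · have ht : 0 < ((j:ℝ)+1)*x := by positivity
      have h1 : x * (1/(1+((j:ℝ)+1)*x)) ≤ x * Tg (1 + ((j:ℝ)+1)*x) :=
        mul_le_mul_of_nonneg_left (le_Tg ht) hx.le
      have key : 1/((j:ℝ)+1) - x * (1/(1+((j:ℝ)+1)*x)) ≤ x⁻¹ * (1/(((j:ℝ)+1)^2)) := by
        have expand : 1/((j:ℝ)+1) - x*(1/(1+((j:ℝ)+1)*x))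
            = 1/(((j:ℝ)+1)*(1+((j:ℝ)+1)*x)) := by
          field_simp
          ring
        have hr : x⁻¹ * (1/(((j:ℝ)+1)^2)) = 1/(x*((j:ℝ)+1)^2) := by
          rw [mul_one_div, inv_eq_one_div, div_div]
        rw [expand, hr]
        have hj0 : (0:ℝ) ≤ j := j.cast_nonneg
        refine one_div_le_one_div_of_le (by positivity) ?_
        nlinarith [mul_pos hx (show (0:ℝ) < ((j:ℝ)+1)^2 by positivity)]
      linarith
  refine hg.neg.congr (fun j => ?_)
  ring

lemma tendsto_AB {x : ℝ} (hx : 0 < x) :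
    Tendsto (fun N : ℕ => ∑ j ∈ Finset.range N,
        (x * Tg (1 + ((j:ℝ)+1)*x) - x⁻¹ * Tg (1 + ((j:ℝ)+1)*x⁻¹)))
      atTop (𝓝 (Real.log x)) := by
  have hx' : 0 < x⁻¹ := inv_pos.2 hx
  have hlog : Real.log (1+x) - Real.log (1+x⁻¹) = Real.log x := by
    rw [show (1:ℝ)+x⁻¹ = (1+x)/x by field_simp; ring, Real.log_div (by positivity) hx.ne']
    ring
  apply tendsto_of_tendsto_of_tendsto_of_le_of_le' (g := fun N:ℕ => Real.log x - 2*x/N)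
    (h := fun N:ℕ => Real.log x + 2*x⁻¹/N)
  · simpa using (tendsto_const_div_atTop_nhds_zero_nat (2*x)).const_sub (Real.log x)
  · simpa using (tendsto_const_div_atTop_nhds_zero_nat (2*x⁻¹)).const_add (Real.log x)
  · filter_upwards [eventually_ge_atTop 1] with N hN
    rw [AB_eq hx N]
    have l1 := le_sum_xTg hx hN
    have l2 := sum_xTg_le hx' hN
    linarith
  · filter_upwards [eventually_ge_atTop 1] with N hN
    rw [AB_eq hx N]
    have l1 := sum_xTg_le hx hN
    have l2 := le_sum_xTg hx' hN
    linarith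

theorem stmt9 (x : ℝ) (hx : 0 < x) :
    x * (∑' j : ℕ+, (deriv psi (1 + (j : ℝ) * x) - 1 / ((j : ℝ) * x))) - (1 / 2) * Real.log x
      = (1 / x) * (∑' j : ℕ+, (deriv psi (1 + (j : ℝ) / x) - x / (j : ℝ)))
          - (1 / 2) * Real.log (1 / x)
    ∧ Summable (fun j : ℕ+ => deriv psi (1 + (j : ℝ) * x) - 1 / ((j : ℝ) * x))
    ∧ Summable (fun j : ℕ+ => deriv psi (1 + (j : ℝ) / x) - x / (j : ℝ)) := by
  have hx' : 0 < x⁻¹ := inv_pos.2 hx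
  set A : ℕ → ℝ := fun j => x * Tg (1 + ((j:ℝ)+1)*x) - 1/((j:ℝ)+1) with hA
  set B : ℕ → ℝ := fun j => x⁻¹ * Tg (1 + ((j:ℝ)+1)*x⁻¹) - 1/((j:ℝ)+1) with hB
  have hSA : Summable A := summable_a hx
  have hSB : Summable B := summable_a hx'
  have hdiff : (∑' j, A j) - (∑' j, B j) = Real.log x := by
    have h1 : Tendsto (fun N => ∑ j ∈ Finset.range N, A j - ∑ j ∈ Finset.range N, B j)
        atTop (𝓝 ((∑' j, A j) - (∑' j, B j))) :=
      (hSA.hasSum.tendsto_sum_nat).sub (hSB.hasSum.tendsto_sum_nat)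
    have h2 : (fun N => ∑ j ∈ Finset.range N, A j - ∑ j ∈ Finset.range N, B j)
        = fun N => ∑ j ∈ Finset.range N,
            (x * Tg (1 + ((j:ℝ)+1)*x) - x⁻¹ * Tg (1 + ((j:ℝ)+1)*x⁻¹)) := by
      funext N
      rw [← Finset.sum_sub_distrib]
      exact Finset.sum_congr rfl fun j _ => by simp only [hA, hB]; ring
    rw [h2] at h1
    exact tendsto_nhds_unique h1 (tendsto_AB hx)
  set e : ℕ ≃ ℕ+ := Equiv.pnatEquivNat.symm with he
  have hcast : ∀ n : ℕ, ((e n : ℕ+) : ℝ) = (n:ℝ)+1 := by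
    intro n
    simp [he, Equiv.pnatEquivNat, Nat.succPNat]
  set f : ℕ+ → ℝ := fun j => deriv psi (1 + (j : ℝ) * x) - 1 / ((j : ℝ) * x) with hf
  set g : ℕ+ → ℝ := fun j => deriv psi (1 + (j : ℝ) / x) - x / (j : ℝ) with hg
  have hfe : (fun n : ℕ => f (e n)) = fun n : ℕ => x⁻¹ * A n := by
    funext n
    simp only [hf, hA]
    rw [hcast n, deriv_psi (show (0:ℝ) < 1 + ((n:ℝ)+1)*x by positivity)]
    field_simp
  have hge : (fun n : ℕ => g (e n)) = fun n : ℕ => x * B n := by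
    funext n
    simp only [hg, hB]
    rw [hcast n, show ((n:ℝ)+1)/x = ((n:ℝ)+1)*x⁻¹ by rw [div_eq_mul_inv],
      deriv_psi (show (0:ℝ) < 1 + ((n:ℝ)+1)*x⁻¹ by positivity)]
    field_simp
  have hsf : Summable f := by
    refine e.summable_iff.mp ?_
    have : Summable (fun n : ℕ => x⁻¹ * A n) := hSA.mul_left x⁻¹
    exact this.congr (fun n => (congrFun hfe n).symm)
  have hsg : Summable g := by
    refine e.summable_iff.mp ?_
    have : Summable (fun n : ℕ => x * B n) := hSB.mul_left x
    exact this.congr (fun n => (congrFun hge n).symm)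
  have htf : x * (∑' j, f j) = ∑' n, A n := by
    have h1 : ∑' j, f j = ∑' n : ℕ, x⁻¹ * A n := by
      rw [← e.tsum_eq f]
      exact tsum_congr fun n => congrFun hfe n
    rw [h1, tsum_mul_left, ← mul_assoc, mul_inv_cancel₀ hx.ne', one_mul]
  have htg : x⁻¹ * (∑' j, g j) = ∑' n, B n := by
    have h1 : ∑' j, g j = ∑' n : ℕ, x * B n := by
      rw [← e.tsum_eq g]
      exact tsum_congr fun n => congrFun hge n
    rw [h1, tsum_mul_left, ← mul_assoc, inv_mul_cancel₀ hx.ne', one_mul]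
  refine ⟨?_, hsf, hsg⟩
  rw [show (1:ℝ)/x = x⁻¹ by rw [one_div], htf, htg, one_div, Real.log_inv]
  linarith
end

section
/- Let x > 0, let r ≥ 1 be an integer, and let t be a complex number with Re(t) > 0. Then ∫_0^∞ y^{t−1} e^{−xy} Li_r(e^{−y}) dy = Γ(t) Σ_{n=1}^∞ 1/( n^r (x+n)^t ), where the integral converges absolutely and the series on the right converges absolutely. -/
open Real Filter Topology Finset

noncomputable def polylog (r : ℕ) (z : ℝ) : ℝ := ∑' u : ℕ+, z ^ (u : ℕ) / (u : ℝ) ^ r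

open MeasureTheory Set Complex in
/-- Integrability of `y ^ (s-1) * exp (-(c*y))` on `Ioi 0`. -/
lemma aux_integrable_cpow_exp {s : ℂ} (hs : 0 < s.re) {c : ℝ} (hc : 0 < c) :
    IntegrableOn (fun y : ℝ => (y : ℂ) ^ (s - 1) * Complex.exp (-((c * y : ℝ) : ℂ)))
      (Ioi 0) := by
  have h := Complex.GammaIntegral_convergent hs
  rw [← mul_zero c, ← integrableOn_Ioi_comp_mul_left_iff _ _ hc] at h
  refine IntegrableOn.congr_fun (h.const_mul ((1 / (c : ℂ)) ^ (s - 1)))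
    (fun y (hy : 0 < y) => ?_) measurableSet_Ioi
  have hc0 : ((c : ℝ) : ℂ) ^ (s - 1) ≠ 0 := by
    rw [Ne, Complex.cpow_eq_zero_iff, not_and_or]
    exact Or.inl (Complex.ofReal_ne_zero.mpr hc.ne')
  have h1 : ((c * y : ℝ) : ℂ) ^ (s - 1) = (c : ℂ) ^ (s - 1) * (y : ℂ) ^ (s - 1) := by
    rw [Complex.ofReal_mul, mul_cpow_ofReal_nonneg hc.le hy.le]
  have h2 : ((1 / (c : ℂ))) ^ (s - 1) = ((c : ℂ) ^ (s - 1))⁻¹ := by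
    rw [one_div,
      Complex.inv_cpow _ _ (by rw [Complex.arg_ofReal_of_nonneg hc.le]; exact pi_pos.ne)]
  have h3 : ((rexp (-(c * y)) : ℝ) : ℂ) = Complex.exp (-((c * y : ℝ) : ℂ)) := by
    rw [Complex.ofReal_exp, Complex.ofReal_neg]
  simp only [h1, h2, h3]
  field_simp

open MeasureTheory in
/-- Integrability of a series with summable integrals of norms. -/
lemma aux_integrable_tsum {α : Type*} [MeasurableSpace α] {μ : Measure α}
    {F : ℕ+ → α → ℂ} (hF_int : ∀ i, Integrable (F i) μ)
    (hF_sum : Summable fun i => ∫ a, ‖F i a‖ ∂μ) :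
    Integrable (fun a => ∑' i, F i a) μ := by
  have hf'' : ∀ i, AEMeasurable (fun x => (‖F i x‖₊ : ENNReal)) μ :=
    fun i => (hF_int i).aestronglyMeasurable.enorm
  have h1 : ∀ i, ∫⁻ a, ‖F i a‖₊ ∂μ = ENNReal.ofReal (∫ a, ‖F i a‖ ∂μ) :=
    fun i => (ofReal_integral_norm_eq_lintegral_enorm (hF_int i)).symm
  have hf' : ∑' i, ∫⁻ a, ‖F i a‖₊ ∂μ ≠ ⊤ := by
    simp_rw [h1]
    rw [← ENNReal.ofReal_tsum_of_nonneg (fun i => integral_nonneg fun a => norm_nonneg _)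
      hF_sum]
    exact ENNReal.ofReal_ne_top
  have hhh : ∀ᵐ a ∂μ, Summable fun n : ℕ+ => (‖F n a‖₊ : ℝ) := by
    rw [← lintegral_tsum hf''] at hf'
    refine (ae_lt_top' (AEMeasurable.ennreal_tsum hf'') hf').mono fun x hx => ?_
    rw [← ENNReal.tsum_coe_ne_top_iff_summable_coe]
    exact hx.ne
  constructor
  · refine aestronglyMeasurable_of_tendsto_ae (atTop : Filter ℕ)
      (f := fun N a => ∑ n ∈ Finset.range N, F (Equiv.pnatEquivNat.symm n) a)
      (fun N => (Finset.range N).aestronglyMeasurable_fun_sum fun n _ => (hF_int _).1) ?_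
    filter_upwards [hhh] with a ha
    have hsa : Summable fun n : ℕ+ => F n a := by
      apply Summable.of_norm
      simpa only [coe_nnnorm] using ha
    have h2 : HasSum (fun n : ℕ => F (Equiv.pnatEquivNat.symm n) a) (∑' i, F i a) :=
      (Equiv.pnatEquivNat.symm.hasSum_iff).mpr hsa.hasSum
    exact h2.tendsto_sum_nat
  · have hlt : ∫⁻ a, ∑' n, (‖F n a‖₊ : ENNReal) ∂μ < ⊤ := by
      rwa [lintegral_tsum hf'', lt_top_iff_ne_top]
    refine lt_of_le_of_lt (lintegral_mono fun a => ?_) hlt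
    by_cases h : Summable fun n : ℕ+ => ‖F n a‖₊
    · calc (‖∑' i, F i a‖₊ : ENNReal) ≤ ((∑' i, ‖F i a‖₊ : NNReal) : ENNReal) :=
            ENNReal.coe_le_coe.mpr (nnnorm_tsum_le h)
        _ = ∑' i, (‖F i a‖₊ : ENNReal) := ENNReal.coe_tsum h
    · have : ∑' n, (‖F n a‖₊ : ENNReal) = ⊤ := by
        by_contra htop
        exact h (ENNReal.tsum_coe_ne_top_iff_summable.mp htop)
      simp [this]

theorem stmt12 (x : ℝ) (hx : 0 < x) (r : ℕ) (hr : 1 ≤ r) (t : ℂ) (ht : 0 < t.re) :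
    (∫ y in Set.Ioi (0 : ℝ),
        (y : ℂ) ^ (t - 1) * Complex.exp (-((x * y : ℝ) : ℂ)) * (polylog r (Real.exp (-y)) : ℂ))
      = Complex.Gamma t * ∑' n : ℕ+, 1 / ((n : ℂ) ^ r * ((x : ℂ) + (n : ℂ)) ^ t)
    ∧ MeasureTheory.IntegrableOn
        (fun y : ℝ =>
          (y : ℂ) ^ (t - 1) * Complex.exp (-((x * y : ℝ) : ℂ)) * (polylog r (Real.exp (-y)) : ℂ))
        (Set.Ioi 0)
    ∧ Summable (fun n : ℕ+ => 1 / ((n : ℂ) ^ r * ((x : ℂ) + (n : ℂ)) ^ t)) := by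
  classical
  set μ := MeasureTheory.volume.restrict (Set.Ioi (0:ℝ)) with hμ
  set G : ℕ+ → ℝ → ℂ := fun n y =>
    ((1 / (n : ℝ) ^ r : ℝ) : ℂ) *
      ((y : ℂ) ^ (t - 1) * Complex.exp (-(((x + n) * y : ℝ) : ℂ))) with hG
  have hcn : ∀ n : ℕ+, 0 < x + (n : ℝ) := fun n => by positivity
  have hn1 : ∀ n : ℕ+, (1:ℝ) ≤ (n:ℝ) := fun n => by exact_mod_cast n.one_le
  -- key summability
  have key : Summable fun n : ℕ+ => 1 / (n : ℝ) ^ r / (x + (n : ℝ)) ^ t.re := by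
    have hsum : Summable fun n : ℕ+ => ((n : ℝ) ^ (1 + t.re))⁻¹ := by
      have : Summable fun n : ℕ => ((n : ℝ) ^ (1 + t.re))⁻¹ :=
        (Real.summable_nat_rpow_inv).mpr (by linarith)
      exact this.comp_injective PNat.coe_injective
    refine Summable.of_nonneg_of_le (fun n => by positivity) (fun n => ?_) hsum
    have h1 : (n:ℝ) ≤ (n:ℝ) ^ r := le_self_pow₀ (hn1 n) (by omega)
    have h2 : (n:ℝ) ^ t.re ≤ (x + n) ^ t.re :=
      Real.rpow_le_rpow (by positivity) (by linarith [hcn n]) ht.le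
    have h3 : (n:ℝ) * (n:ℝ) ^ t.re ≤ (n:ℝ) ^ r * (x + n) ^ t.re :=
      mul_le_mul h1 h2 (Real.rpow_nonneg (by positivity) _) (by positivity)
    rw [Real.rpow_add (by positivity : (0:ℝ) < (n:ℝ)), Real.rpow_one, div_div]
    rw [one_div, inv_le_inv₀ (by positivity) (by positivity)]
    exact h3
  -- each G n is integrable
  have hF_int : ∀ n : ℕ+, MeasureTheory.Integrable (G n) μ := fun n =>
    (aux_integrable_cpow_exp ht (hcn n)).const_mul _
  -- norm integral of G n
  have hnormint : ∀ n : ℕ+, ∫ y, ‖G n y‖ ∂μ =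
      (1 / (n : ℝ) ^ r) * ((1 / (x + n)) ^ t.re * Real.Gamma t.re) := by
    intro n
    have hre := Real.integral_rpow_mul_exp_neg_mul_Ioi ht (hcn n)
    have hstep : ∫ y, ‖G n y‖ ∂μ = ∫ y in Set.Ioi (0:ℝ),
        (1 / (n:ℝ) ^ r) * (y ^ (t.re - 1) * Real.exp (-((x + n) * y))) := by
      refine MeasureTheory.setIntegral_congr_fun measurableSet_Ioi fun y (hy : 0 < y) => ?_
      simp only [hG, norm_mul, Complex.norm_real, Real.norm_eq_abs,
        Complex.norm_cpow_eq_rpow_re_of_pos hy, Complex.norm_exp,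
        Complex.sub_re, Complex.one_re, Complex.neg_re, Complex.ofReal_re]
      rw [abs_of_nonneg (by positivity : (0:ℝ) ≤ 1 / (n:ℝ) ^ r)]
    rw [hstep, MeasureTheory.integral_const_mul, hre]
  have hF_sum : Summable fun n : ℕ+ => ∫ y, ‖G n y‖ ∂μ := by
    refine ((key.mul_right (Real.Gamma t.re)).congr fun n => ?_)
    rw [hnormint n, one_div (x + (n:ℝ)), Real.inv_rpow (hcn n).le]
    field_simp
  -- pointwise sum
  have hpoly : ∀ y ∈ Set.Ioi (0:ℝ), HasSum (fun n : ℕ+ => G n y)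
      ((y : ℂ) ^ (t - 1) * Complex.exp (-((x * y : ℝ) : ℂ)) *
        (polylog r (Real.exp (-y)) : ℂ)) := by
    intro y hy
    rw [Set.mem_Ioi] at hy
    have hz : Real.exp (-y) < 1 := Real.exp_lt_one_iff.mpr (by linarith)
    have hz0 : 0 ≤ Real.exp (-y) := (Real.exp_pos _).le
    have hsummable : Summable fun u : ℕ+ => Real.exp (-y) ^ (u : ℕ) / (u : ℝ) ^ r := by
      refine Summable.of_nonneg_of_le (fun u => by positivity) (fun u => ?_)
        ((summable_geometric_of_lt_one hz0 hz).comp_injective PNat.coe_injective)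
      calc Real.exp (-y) ^ (u : ℕ) / (u : ℝ) ^ r
          ≤ Real.exp (-y) ^ (u : ℕ) / 1 := by
            apply div_le_div_of_nonneg_left (by positivity) one_pos
            exact one_le_pow₀ (hn1 u)
        _ = Real.exp (-y) ^ (u : ℕ) := div_one _
    have h1 : HasSum (fun u : ℕ+ => Real.exp (-y) ^ (u : ℕ) / (u : ℝ) ^ r)
        (polylog r (Real.exp (-y))) := by
      unfold polylog; exact hsummable.hasSum
    have h2 := (Complex.hasSum_ofReal.mpr h1).mul_left
      ((y : ℂ) ^ (t - 1) * Complex.exp (-((x * y : ℝ) : ℂ)))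
    refine h2.congr_fun fun n => ?_
    have er : Real.exp (-((x + (n:ℝ)) * y)) = Real.exp (-(x*y)) * Real.exp (-y) ^ (n:ℕ) := by
      rw [← Real.exp_nat_mul, ← Real.exp_add]
      congr 1
      ring
    simp only [hG, ← Complex.ofReal_neg, ← Complex.ofReal_exp, er]
    push_cast
    ring
  -- a.e. equality
  have haeeq : (fun y : ℝ =>
        (y : ℂ) ^ (t - 1) * Complex.exp (-((x * y : ℝ) : ℂ)) *
          (polylog r (Real.exp (-y)) : ℂ)) =ᵐ[μ] fun y => ∑' n, G n y := by
    filter_upwards [MeasureTheory.ae_restrict_mem measurableSet_Ioi] with y hy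
    exact (hpoly y hy).tsum_eq.symm
  -- integrability
  have hInt : MeasureTheory.IntegrableOn
      (fun y : ℝ => (y : ℂ) ^ (t - 1) * Complex.exp (-((x * y : ℝ) : ℂ)) *
        (polylog r (Real.exp (-y)) : ℂ)) (Set.Ioi 0) :=
    (aux_integrable_tsum hF_int hF_sum).congr haeeq.symm
  -- value of each integral
  have hval : ∀ n : ℕ+, ∫ y, G n y ∂μ =
      Complex.Gamma t * (1 / ((n : ℂ) ^ r * ((x : ℂ) + (n : ℂ)) ^ t)) := by
    intro n
    have h := Complex.integral_cpow_mul_exp_neg_mul_Ioi ht (hcn n)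
    have heq : ∫ y, ((y : ℂ) ^ (t - 1) * Complex.exp (-(((x + n) * y : ℝ) : ℂ))) ∂μ =
        (1 / ((x + (n:ℝ) : ℝ) : ℂ)) ^ t * Complex.Gamma t := by
      rw [← h]
      refine MeasureTheory.setIntegral_congr_fun measurableSet_Ioi fun y (hy : 0 < y) => ?_
      push_cast
      ring_nf
    have hGsplit : ∫ y, G n y ∂μ = ((1 / (n : ℝ) ^ r : ℝ) : ℂ) *
        ∫ y, ((y : ℂ) ^ (t - 1) * Complex.exp (-(((x + n) * y : ℝ) : ℂ))) ∂μ := by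
      rw [← MeasureTheory.integral_const_mul]
    rw [hGsplit, heq]
    have hinv : (1 / (((x + (n:ℝ) : ℝ)) : ℂ)) ^ t = ((((x + (n:ℝ) : ℝ)) : ℂ) ^ t)⁻¹ := by
      rw [one_div, Complex.inv_cpow _ _
        (by rw [Complex.arg_ofReal_of_nonneg (hcn n).le]; exact pi_pos.ne)]
    have hcast : ((x + (n : ℝ) : ℝ) : ℂ) = (x : ℂ) + (n : ℂ) := by push_cast; ring
    have hcast2 : (((1 / (n : ℝ) ^ r : ℝ)) : ℂ) = 1 / (n : ℂ) ^ r := by push_cast; ring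
    rw [hinv, hcast, hcast2]
    ring
  -- summability of the complex series
  have hsumC : Summable fun n : ℕ+ => 1 / ((n : ℂ) ^ r * ((x : ℂ) + (n : ℂ)) ^ t) := by
    apply Summable.of_norm
    refine key.congr fun n => ?_
    have hb : (x : ℂ) + (n : ℂ) = ((x + (n:ℝ) : ℝ) : ℂ) := by push_cast; ring
    have h1 : ‖((x : ℂ) + (n : ℂ)) ^ t‖ = (x + (n:ℝ)) ^ t.re := by
      rw [hb, Complex.norm_cpow_eq_rpow_re_of_pos (hcn n)]
    have h2 : ‖((n : ℂ)) ^ r‖ = (n : ℝ) ^ r := by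
      rw [norm_pow]
      norm_cast
    rw [norm_div, norm_one, norm_mul, h1, h2, div_div]
  -- conclusion
  have hhs := MeasureTheory.hasSum_integral_of_summable_integral_norm hF_int hF_sum
  have hint_eq : ∫ y, (∑' n, G n y) ∂μ =
      ∫ y in Set.Ioi (0:ℝ), (y : ℂ) ^ (t - 1) * Complex.exp (-((x * y : ℝ) : ℂ)) *
        (polylog r (Real.exp (-y)) : ℂ) :=
    MeasureTheory.integral_congr_ae haeeq.symm
  refine ⟨?_, hInt, hsumC⟩
  rw [← hint_eq, ← hhs.tsum_eq, tsum_congr hval, tsum_mul_left]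
end

section
/- Let r ≥ 2 be an integer and let y > 0. Then Σ_{n=1}^∞ Σ_{m=1}^∞ y / ( n · m^{r−1} · (n + m y) ) = γ ζ(r) + Σ_{m=1}^∞ ψ(my + 1)/m^r, where all series converge absolutely. -/
open Real Filter Topology Finset

local notation "γ" => Real.eulerMascheroniConstant

lemma psi_tendsto (x : ℝ) (hx : 0 < x) :
    Tendsto (fun N : ℕ => ∑ k ∈ range N, (1 / ((k : ℝ) + 1) - 1 / (((k : ℝ) + 1) + x)))
      atTop (𝓝 (psi (x + 1) + γ)) := by
  classical
  set f : ℝ → ℝ := Real.log ∘ Real.Gamma with hf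
  have hc : ConvexOn ℝ (Set.Ioi 0) f := Real.convexOn_log_Gamma
  have hder : ∀ {z : ℝ}, 0 < z → DifferentiableAt ℝ f z := by
    intro z hz
    exact (Real.differentiableAt_Gamma
        (fun m => ((neg_nonpos.mpr m.cast_nonneg).trans_lt hz).ne')).log
      (Real.Gamma_ne_zero (fun m => ((neg_nonpos.mpr m.cast_nonneg).trans_lt hz).ne'))
  have hderiv_eq : ∀ {z : ℝ}, 0 < z → deriv f z = psi z := by
    intro z hz
    simpa [hf, Function.comp_def, psi] using
      deriv.log (Real.differentiableAt_Gamma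
        (fun m => ((neg_nonpos.mpr m.cast_nonneg).trans_lt hz).ne'))
        (Real.Gamma_pos_of_pos hz).ne'
  -- recurrence for deriv f
  have hder_rec : ∀ {z : ℝ}, 0 < z → deriv f (z + 1) = deriv f z + 1 / z := by
    intro z hz
    have h_rec : ∀ w : ℝ, 0 < w → f (w + 1) = f w + Real.log w := fun w hw => by
      simp only [hf, Function.comp_apply, Real.Gamma_add_one hw.ne',
        Real.log_mul hw.ne' (Real.Gamma_pos_of_pos hw).ne', add_comm]
    rw [← deriv_comp_add_const, one_div, ← Real.deriv_log,
      ← deriv_add (hder (by positivity)) (Real.differentiableAt_log hz.ne')]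
    apply Filter.EventuallyEq.deriv_eq
    filter_upwards [eventually_gt_nhds hz] using h_rec
  -- value at naturals
  have hfn : ∀ n : ℕ, deriv f ((n : ℝ) + 1) = -γ + harmonic n := by
    intro n
    rw [hderiv_eq (by positivity), psi, Real.deriv_Gamma_nat n,
      show (n : ℝ) + 1 = ((n : ℕ) : ℝ) + 1 by push_cast; ring, Real.Gamma_nat_eq_factorial]
    rw [mul_comm, mul_div_assoc, div_self (by positivity : ((n.factorial : ℝ)) ≠ 0), mul_one]
  -- telescoping
  have hstep : ∀ N : ℕ, deriv f (x + N + 1) =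
      deriv f (x + 1) + ∑ k ∈ range N, 1 / (x + k + 1) := by
    intro N
    induction N with
    | zero => simp
    | succ N ih =>
        have : x + (N + 1 : ℕ) + 1 = (x + N + 1) + 1 := by push_cast; ring
        rw [this, hder_rec (by positivity), ih, sum_range_succ]
        push_cast; ring
  -- monotonicity of deriv f
  have hmono : ∀ {a b : ℝ}, 0 < a → a ≤ b → deriv f a ≤ deriv f b := by
    intro a b ha hab
    rcases eq_or_lt_of_le hab with rfl | h
    · exact le_rfl
    · exact (hc.deriv_le_slope (Set.mem_Ioi.mpr ha) (Set.mem_Ioi.mpr (ha.trans h)) h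
        (hder ha)).trans (hc.slope_le_deriv (Set.mem_Ioi.mpr ha)
        (Set.mem_Ioi.mpr (ha.trans h)) h (hder (ha.trans h)))
  -- growth bound
  have hgrow : ∀ (M : ℕ) (z : ℝ), 0 < z → deriv f (z + M) ≤ deriv f z + M / z := by
    intro M
    induction M with
    | zero => intro z hz; simp
    | succ M ih =>
        intro z hz
        have h1 : z + (M + 1 : ℕ) = (z + M) + 1 := by push_cast; ring
        rw [h1, hder_rec (by positivity)]
        have h2 : 1 / (z + M) ≤ 1 / z := by
          apply one_div_le_one_div_of_le hz; linarith [Nat.cast_nonneg (α := ℝ) M]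
        calc deriv f (z + M) + 1 / (z + M) ≤ deriv f z + M / z + 1 / z := by
              linarith [ih z hz]
          _ = deriv f z + (M + 1 : ℕ) / z := by push_cast; ring
  set M : ℕ := ⌈x⌉₊ with hM
  have hxM : x ≤ M := Nat.le_ceil x
  -- epsilon bound
  have heps : ∀ N : ℕ, deriv f (x + N + 1) - deriv f ((N : ℝ) + 1) ∈
      Set.Icc (0 : ℝ) (M / (N + 1)) := by
    intro N
    constructor
    · have := hmono (by positivity : (0:ℝ) < (N:ℝ) + 1) (by linarith : (N : ℝ) + 1 ≤ x + N + 1)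
      linarith
    · have h1 : deriv f (x + N + 1) ≤ deriv f (((N : ℝ) + 1) + M) :=
        hmono (by positivity) (by linarith)
      have h2 := hgrow M ((N : ℝ) + 1) (by positivity)
      linarith
  -- express partial sums
  have hP : ∀ N : ℕ, ∑ k ∈ range N, (1 / ((k : ℝ) + 1) - 1 / (((k : ℝ) + 1) + x)) =
      deriv f (x + 1) + γ - (deriv f (x + N + 1) - deriv f ((N : ℝ) + 1)) := by
    intro N
    have h1 : ∑ k ∈ range N, (1 / ((k : ℝ) + 1)) = (harmonic N : ℝ) := by
      rw [harmonic]; push_cast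
      exact sum_congr rfl fun k _ => (one_div _)
    have h2 : ∑ k ∈ range N, (1 / (((k : ℝ) + 1) + x)) = ∑ k ∈ range N, 1 / (x + k + 1) := by
      apply sum_congr rfl; intro k _; ring_nf
    rw [sum_sub_distrib, h1, h2, hfn N, hstep N]
    ring
  have hlim : Tendsto (fun N : ℕ => deriv f (x + N + 1) - deriv f ((N : ℝ) + 1))
      atTop (𝓝 0) := by
    apply squeeze_zero (fun N => (heps N).1) (fun N => (heps N).2)
    have := (tendsto_const_div_atTop_nhds_zero_nat (M:ℝ)).comp (tendsto_add_atTop_nat 1)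
    apply this.congr
    intro n; simp only [Function.comp_apply]; push_cast; ring_nf
  have : Tendsto (fun N : ℕ => deriv f (x + 1) + γ -
      (deriv f (x + N + 1) - deriv f ((N : ℝ) + 1))) atTop (𝓝 (deriv f (x + 1) + γ)) := by
    simpa using (tendsto_const_nhds.sub hlim)
  rw [show psi (x + 1) + γ = deriv f (x + 1) + γ by rw [hderiv_eq (by positivity)]]
  exact Tendsto.congr (fun N => (hP N).symm) this


lemma pnat_summable_of_nat {f : ℕ → ℝ} (h : Summable f) :
    Summable (fun n : ℕ+ => f n) :=
  h.comp_injective PNat.coe_injective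

lemma summable_pnat_rpow {p : ℝ} (hp : p < -1) :
    Summable (fun n : ℕ+ => (n : ℝ) ^ p) :=
  pnat_summable_of_nat (Real.summable_nat_rpow.mpr hp)

lemma term_nonneg (x : ℝ) (hx : 0 < x) (n : ℕ+) :
    0 ≤ 1 / (n : ℝ) - 1 / ((n : ℝ) + x) := by
  have hn : (0:ℝ) < (n : ℝ) := by exact_mod_cast n.pos
  rw [sub_nonneg]
  apply one_div_le_one_div_of_le hn; linarith

lemma term_le (x : ℝ) (hx : 0 < x) (n : ℕ+) :
    1 / (n : ℝ) - 1 / ((n : ℝ) + x) ≤ Real.sqrt x * (n : ℝ) ^ (-(3/2) : ℝ) := by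
  have hn : (0:ℝ) < (n : ℝ) := by exact_mod_cast n.pos
  have h1 : 1 / (n : ℝ) - 1 / ((n : ℝ) + x) = x / ((n : ℝ) * ((n : ℝ) + x)) := by
    field_simp
    ring
  have hsq : Real.sqrt x * Real.sqrt (n : ℝ) ≤ (n : ℝ) + x := by
    have := two_mul_le_add_sq (Real.sqrt x) (Real.sqrt (n:ℝ))
    rw [Real.sq_sqrt hx.le, Real.sq_sqrt hn.le] at this
    nlinarith [Real.sqrt_nonneg x, Real.sqrt_nonneg (n:ℝ)]
  have hrpow : (n : ℝ) ^ (-(3/2) : ℝ) = 1 / ((n:ℝ) * Real.sqrt (n:ℝ)) := by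
    rw [Real.rpow_neg hn.le, Real.sqrt_eq_rpow,
      show ((n:ℝ) * (n:ℝ) ^ ((1:ℝ)/2)) = (n:ℝ) ^ ((1:ℝ)) * (n:ℝ) ^ ((1:ℝ)/2) by
        rw [Real.rpow_one],
      ← Real.rpow_add hn, one_div]
    norm_num
  rw [h1, hrpow]
  rw [div_le_iff₀ (by positivity)]
  have hx' : x = Real.sqrt x * Real.sqrt x := (Real.mul_self_sqrt hx.le).symm
  calc x = Real.sqrt x * Real.sqrt x := hx'
    _ ≤ Real.sqrt x * (1 / ((n:ℝ) * Real.sqrt (n:ℝ)) * ((n:ℝ) * ((n:ℝ) + x))) := by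
        apply mul_le_mul_of_nonneg_left _ (Real.sqrt_nonneg x)
        rw [one_div, mul_comm ((n:ℝ) * Real.sqrt (n:ℝ))⁻¹, mul_comm (n:ℝ) ((n:ℝ)+x),
          ← div_eq_mul_inv, le_div_iff₀ (by positivity)]
        calc Real.sqrt x * ((n:ℝ) * Real.sqrt (n:ℝ))
            = (Real.sqrt x * Real.sqrt (n:ℝ)) * (n:ℝ) := by ring
          _ ≤ ((n:ℝ) + x) * (n:ℝ) := by
              apply mul_le_mul_of_nonneg_right hsq hn.le
    _ = Real.sqrt x * (1 / ((n:ℝ) * Real.sqrt (n:ℝ))) * ((n:ℝ) * ((n:ℝ) + x)) := by ring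

lemma key_hasSum (x : ℝ) (hx : 0 < x) :
    HasSum (fun n : ℕ+ => 1 / (n : ℝ) - 1 / ((n : ℝ) + x)) (psi (x + 1) + γ) := by
  have hsummN : Summable (fun k : ℕ => 1 / ((k : ℝ) + 1) - 1 / (((k : ℝ) + 1) + x)) := by
    apply Summable.of_nonneg_of_le (f := fun k : ℕ => Real.sqrt x * ((k+1 : ℕ) : ℝ) ^ (-(3/2) : ℝ))
    · intro k
      have := term_nonneg x hx ⟨k + 1, k.succ_pos⟩
      simpa using this
    · intro k
      have := term_le x hx ⟨k + 1, k.succ_pos⟩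
      simpa using this
    · exact ((summable_nat_add_iff 1).mpr (Real.summable_nat_rpow.mpr (by norm_num))).mul_left _
  have htsum : ∑' k : ℕ, (1 / ((k : ℝ) + 1) - 1 / (((k : ℝ) + 1) + x)) = psi (x + 1) + γ :=
    tendsto_nhds_unique hsummN.hasSum.tendsto_sum_nat (psi_tendsto x hx)
  have hN : HasSum (fun k : ℕ => 1 / ((k : ℝ) + 1) - 1 / (((k : ℝ) + 1) + x))
      (psi (x + 1) + γ) := htsum ▸ hsummN.hasSum
  have hcomp : (fun n : ℕ => (fun m : ℕ+ => 1 / (m : ℝ) - 1 / ((m : ℝ) + x))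
      (Equiv.pnatEquivNat.symm n)) = fun k : ℕ => 1 / ((k : ℝ) + 1) - 1 / (((k : ℝ) + 1) + x) := by
    funext n
    simp only [Equiv.pnatEquivNat, Equiv.coe_fn_symm_mk, Nat.succPNat]
    norm_num
  apply Equiv.pnatEquivNat.symm.hasSum_iff.mp
  show HasSum (fun n : ℕ => (fun m : ℕ+ => 1 / (m : ℝ) - 1 / ((m : ℝ) + x))
      (Equiv.pnatEquivNat.symm n)) (psi (x + 1) + γ)
  rw [hcomp]; exact hN

theorem stmt13 (r : ℕ) (hr : 2 ≤ r) (y : ℝ) (hy : 0 < y) :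
    (∑' n : ℕ+, ∑' m : ℕ+, y / ((n : ℝ) * (m : ℝ) ^ (r - 1) * ((n : ℝ) + (m : ℝ) * y)))
      = Real.eulerMascheroniConstant * zetaR r + ∑' m : ℕ+, psi ((m : ℝ) * y + 1) / (m : ℝ) ^ r
    ∧ Summable (fun p : ℕ+ × ℕ+ =>
        y / ((p.1 : ℝ) * (p.2 : ℝ) ^ (r - 1) * ((p.1 : ℝ) + (p.2 : ℝ) * y)))
    ∧ Summable (fun m : ℕ+ => psi ((m : ℝ) * y + 1) / (m : ℝ) ^ r) := by
  have hmpos : ∀ m : ℕ+, (0:ℝ) < (m:ℝ) := fun m => by exact_mod_cast m.pos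
  have hm1 : ∀ m : ℕ+, (1:ℝ) ≤ (m:ℝ) := fun m => by exact_mod_cast m.one_le
  have hmy : ∀ m : ℕ+, 0 < (m:ℝ) * y := fun m => mul_pos (hmpos m) hy
  set K : ℝ := ∑' n : ℕ+, (n : ℝ) ^ (-(3/2) : ℝ) with hK
  have hK0 : 0 ≤ K := tsum_nonneg (fun n => Real.rpow_nonneg (hmpos n).le _)
  have hKsumm : Summable (fun n : ℕ+ => (n : ℝ) ^ (-(3/2) : ℝ)) :=
    summable_pnat_rpow (by norm_num)
  -- per-m HasSum
  have hpow : ∀ m : ℕ+, (m:ℝ) ^ r = (m:ℝ) ^ (r-1) * (m:ℝ) := by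
    intro m
    rw [← pow_succ, Nat.sub_add_cancel (le_trans one_le_two hr)]
  have hasm : ∀ m : ℕ+, HasSum
      (fun n : ℕ+ => y / ((n : ℝ) * (m : ℝ) ^ (r - 1) * ((n : ℝ) + (m : ℝ) * y)))
      ((psi ((m:ℝ) * y + 1) + γ) / (m:ℝ) ^ r) := by
    intro m
    have h := (key_hasSum ((m:ℝ) * y) (hmy m)).mul_left (1 / (m:ℝ) ^ r)
    have heq : (fun n : ℕ+ => (1 / (m:ℝ) ^ r) * (1 / (n:ℝ) - 1 / ((n:ℝ) + (m:ℝ) * y)))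
        = fun n : ℕ+ => y / ((n : ℝ) * (m : ℝ) ^ (r - 1) * ((n : ℝ) + (m : ℝ) * y)) := by
      funext n
      have h1 : (0:ℝ) < (n:ℝ) := by exact_mod_cast n.pos
      have h2 : (0:ℝ) < (n:ℝ) + (m:ℝ) * y := by positivity
      have hsub : 1/(n:ℝ) - 1/((n:ℝ) + (m:ℝ)*y)
          = ((m:ℝ)*y) / ((n:ℝ)*((n:ℝ) + (m:ℝ)*y)) := by
        field_simp
        ring
      rw [hsub, one_div, inv_mul_eq_div, div_div, div_eq_div_iff (by positivity) (by positivity),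
        hpow m]
      ring
    rw [heq, one_div, inv_mul_eq_div] at h
    exact h
  -- nonneg and bound for psi sums
  have hpsipos : ∀ m : ℕ+, 0 ≤ psi ((m:ℝ) * y + 1) + γ := by
    intro m
    exact hasSum_le (fun n => term_nonneg _ (hmy m) n) hasSum_zero (key_hasSum _ (hmy m))
  have hpsile : ∀ m : ℕ+, psi ((m:ℝ) * y + 1) + γ ≤ Real.sqrt ((m:ℝ) * y) * K := by
    intro m
    exact hasSum_le (fun n => term_le _ (hmy m) n) (key_hasSum _ (hmy m))
      (hKsumm.hasSum.mul_left _)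
  -- summability of S
  set S : ℕ+ → ℝ := fun m => (psi ((m:ℝ) * y + 1) + γ) / (m:ℝ) ^ r with hSdef
  have hSle : ∀ m : ℕ+, S m ≤ (K * Real.sqrt y) * (m:ℝ) ^ (-(3/2) : ℝ) := by
    intro m
    have h2 : (m:ℝ) ^ (-(3/2) : ℝ) = Real.sqrt (m:ℝ) / (m:ℝ) ^ 2 := by
      rw [show (-(3/2) : ℝ) = (1/2 : ℝ) - 2 by norm_num, Real.rpow_sub (hmpos m),
        Real.sqrt_eq_rpow, show ((2:ℝ)) = ((2:ℕ):ℝ) by norm_num, Real.rpow_natCast]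
    have hb : S m ≤ (Real.sqrt ((m:ℝ)*y) * K) / (m:ℝ) ^ r :=
      div_le_div_of_nonneg_right (hpsile m) (by positivity) |>.trans_eq rfl
    refine hb.trans ?_
    rw [Real.sqrt_mul (hmpos m).le, h2]
    have hpowle : (m:ℝ) ^ 2 ≤ (m:ℝ) ^ r := pow_le_pow_right₀ (hm1 m) hr
    calc Real.sqrt (m:ℝ) * Real.sqrt y * K / (m:ℝ) ^ r
        ≤ Real.sqrt (m:ℝ) * Real.sqrt y * K / (m:ℝ) ^ 2 := by
          exact div_le_div_of_nonneg_left
            (mul_nonneg (mul_nonneg (Real.sqrt_nonneg _) (Real.sqrt_nonneg _)) hK0)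
            (by positivity) hpowle
      _ = K * Real.sqrt y * (Real.sqrt (m:ℝ) / (m:ℝ) ^ 2) := by ring
  have hSnonneg : ∀ m : ℕ+, 0 ≤ S m := fun m => div_nonneg (hpsipos m) (by positivity)
  have hSsumm : Summable S :=
    Summable.of_nonneg_of_le hSnonneg hSle (hKsumm.mul_left _)
  -- product summability (m first)
  set G : ℕ+ × ℕ+ → ℝ := fun p =>
    y / ((p.2 : ℝ) * (p.1 : ℝ) ^ (r - 1) * ((p.2 : ℝ) + (p.1 : ℝ) * y)) with hGdef
  have hGnonneg : 0 ≤ G := by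
    intro p
    have := hmpos p.1; have := hmpos p.2
    have : (0:ℝ) < (p.2:ℝ) + (p.1:ℝ) * y := by positivity
    positivity
  have hGsumm : Summable G := by
    rw [summable_prod_of_nonneg hGnonneg]
    constructor
    · intro m; exact (hasm m).summable
    · apply hSsumm.congr
      intro m
      exact ((hasm m).tsum_eq).symm
  have hFsumm : Summable (fun p : ℕ+ × ℕ+ =>
      y / ((p.1 : ℝ) * (p.2 : ℝ) ^ (r - 1) * ((p.1 : ℝ) + (p.2 : ℝ) * y))) := hGsumm.prod_symm
  -- psi summability
  have hgam : Summable (fun m : ℕ+ => γ / (m:ℝ) ^ r) := by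
    have h := (pnat_summable_of_nat (f := fun k : ℕ => 1 / (k:ℝ) ^ r)
      (Real.summable_one_div_nat_pow.mpr (by omega))).mul_left γ
    apply h.congr
    intro m
    rw [mul_one_div]
  have hpsisumm : Summable (fun m : ℕ+ => psi ((m : ℝ) * y + 1) / (m : ℝ) ^ r) := by
    apply (hSsumm.sub hgam).congr
    intro m
    simp only [hSdef]
    rw [div_sub_div_same, add_sub_cancel_right]
  refine ⟨?_, hFsumm, hpsisumm⟩
  -- the equality
  have hswap : (∑' n : ℕ+, ∑' m : ℕ+, y / ((n : ℝ) * (m : ℝ) ^ (r - 1) * ((n : ℝ) + (m : ℝ) * y)))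
      = ∑' m : ℕ+, ∑' n : ℕ+, y / ((n : ℝ) * (m : ℝ) ^ (r - 1) * ((n : ℝ) + (m : ℝ) * y)) := by
    have hunc : Summable (Function.uncurry (fun n m : ℕ+ =>
        y / ((n : ℝ) * (m : ℝ) ^ (r - 1) * ((n : ℝ) + (m : ℝ) * y)))) := hFsumm
    exact (Summable.tsum_comm' hunc (fun n => hunc.prod_factor n)
      (fun m => (hasm m).summable)).symm
  rw [hswap]
  have h1 : ∑' m : ℕ+, ∑' n : ℕ+, y / ((n : ℝ) * (m : ℝ) ^ (r - 1) * ((n : ℝ) + (m : ℝ) * y))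
      = ∑' m : ℕ+, S m := by
    apply tsum_congr; intro m; exact (hasm m).tsum_eq
  rw [h1]
  have h2 : ∀ m : ℕ+, S m = γ * (1 / (m:ℝ) ^ r) + psi ((m : ℝ) * y + 1) / (m : ℝ) ^ r := by
    intro m
    simp only [hSdef]
    rw [add_div]; ring
  rw [tsum_congr h2, Summable.tsum_add (by
      exact (pnat_summable_of_nat (f := fun k : ℕ => 1 / (k:ℝ) ^ r)
        (Real.summable_one_div_nat_pow.mpr (by omega))).mul_left γ) hpsisumm,
    tsum_mul_left]
  congr 2
  rw [zetaR]
  apply tsum_congr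
  intro n
  rw [Real.rpow_natCast]
end

section
/- Let r ≥ 2 be an integer and let x > 0. Then lim_{s→1⁺} [ Σ_{m=1}^∞ ζ(s, mx+1)/m^r − ζ(r)/(s−1) ] = − Σ_{m=1}^∞ ψ(mx+1)/m^r, the limit being over real s > 1. -/
open Real Filter Topology Finset

noncomputable def hzeta (s a : ℝ) : ℝ := ∑' n : ℕ, 1 / ((n : ℝ) + a) ^ s

local notation "γ" => Real.eulerMascheroniConstant

lemma ne_neg_nat {y : ℝ} (hy : 0 < y) : ∀ m : ℕ, y ≠ -m :=
  fun m ↦ ne_of_gt (by have := Nat.cast_nonneg (α := ℝ) m; linarith)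

lemma lg_diff {y : ℝ} (hy : 0 < y) : DifferentiableAt ℝ (Real.log ∘ Real.Gamma) y :=
  (Real.differentiableAt_Gamma (ne_neg_nat hy)).log (Real.Gamma_ne_zero (ne_neg_nat hy))

lemma psi_eq_s14 {y : ℝ} (hy : 0 < y) : psi y = deriv (Real.log ∘ Real.Gamma) y := by
  rw [Function.comp_def, deriv.log (Real.differentiableAt_Gamma (ne_neg_nat hy))
    (Real.Gamma_pos_of_pos hy).ne', psi]

lemma psi_rec {y : ℝ} (hy : 0 < y) : psi (y + 1) = psi y + 1 / y := by
  rw [psi_eq_s14 (by positivity), psi_eq_s14 hy]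
  rw [← deriv_comp_add_const, one_div, ← Real.deriv_log,
    ← deriv_add (lg_diff hy) (Real.differentiableAt_log hy.ne')]
  apply Filter.EventuallyEq.deriv_eq
  filter_upwards [eventually_gt_nhds hy] with t ht
  simp only [Function.comp_apply, Real.Gamma_add_one ht.ne',
    Real.log_mul ht.ne' (Real.Gamma_pos_of_pos ht).ne', add_comm, Pi.add_apply]

lemma psi_nat (n : ℕ) : psi (n + 1) = -γ + harmonic n := by
  rw [psi, Real.deriv_Gamma_nat n, Real.Gamma_nat_eq_factorial]
  field_simp

lemma psi_mono : MonotoneOn psi (Set.Ioi 0) := by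
  have h := Real.convexOn_log_Gamma.monotoneOn_deriv (fun y hy ↦ lg_diff hy)
  intro a ha b hb hab
  rw [psi_eq_s14 ha, psi_eq_s14 hb]
  exact h ha hb hab


lemma harm_real (n : ℕ) : (harmonic n : ℝ) = ∑ j ∈ range n, 1/((j:ℝ)+1) := by
  rw [harmonic]; push_cast; simp [one_div]

lemma psi_add_sum {a : ℝ} (ha : 0 < a) (n : ℕ) :
    psi (a + n) = psi a + ∑ j ∈ range n, 1 / (a + j) := by
  induction n with
  | zero => simp
  | succ n ih =>
    have h : a + ((n:ℕ)+1 : ℕ) = (a + n) + 1 := by push_cast; ring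
    rw [h, psi_rec (by positivity), ih, sum_range_succ]
    ring

lemma u_eq {a : ℝ} (ha : 1 ≤ a) (j : ℕ) :
    1/((j:ℝ)+1) - 1/((j:ℝ)+a) = (a-1)/(((j:ℝ)+1)*((j:ℝ)+a)) := by
  have h1 : (0:ℝ) < (j:ℝ)+1 := by positivity
  have h2 : (0:ℝ) < (j:ℝ)+a := by positivity
  field_simp
  ring

lemma u_nonneg {a : ℝ} (ha : 1 ≤ a) (j : ℕ) : 0 ≤ 1/((j:ℝ)+1) - 1/((j:ℝ)+a) := by
  rw [u_eq ha]
  have h1 : (0:ℝ) < (j:ℝ)+1 := by positivity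
  have h2 : (0:ℝ) < (j:ℝ)+a := by positivity
  have := sub_nonneg.mpr ha
  positivity

lemma u_summable {a : ℝ} (ha : 1 ≤ a) :
    Summable (fun j : ℕ ↦ 1/((j:ℝ)+1) - 1/((j:ℝ)+a)) := by
  have hs : Summable (fun j : ℕ ↦ (a-1)/((j:ℝ)+1)^2) := by
    apply Summable.mul_left
    have := (summable_nat_add_iff 1).mpr (Real.summable_one_div_nat_pow.mpr one_lt_two)
    apply this.congr
    intro j; push_cast; ring_nf
  apply hs.of_nonneg_of_le (u_nonneg ha)
  intro j
  rw [u_eq ha]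
  have h1 : (0:ℝ) < (j:ℝ)+1 := by positivity
  have h2 : (0:ℝ) < (j:ℝ)+a := by positivity
  apply div_le_div_of_nonneg_left (by linarith) (by positivity)
  · nlinarith

theorem hasSum_psi {a : ℝ} (ha : 1 ≤ a) :
    HasSum (fun j : ℕ ↦ 1/((j:ℝ)+1) - 1/((j:ℝ)+a)) (psi a + γ) := by
  have ha0 : (0:ℝ) < a := by linarith
  set u := fun j : ℕ ↦ 1/((j:ℝ)+1) - 1/((j:ℝ)+a) with hu
  set N := Nat.floor a with hNdef
  have hN1 : 1 ≤ N := Nat.le_floor (by exact_mod_cast ha)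
  have hNa : (N:ℝ) ≤ a := Nat.floor_le ha0.le
  have haN : a < N + 1 := Nat.lt_floor_add_one a
  -- key identity
  have hT : ∀ n : ℕ, psi a + γ - ∑ j ∈ range n, u j = psi (a + n) + γ - harmonic n := by
    intro n
    rw [psi_add_sum ha0, harm_real]
    have h2 : ∑ j ∈ range n, u j
        = ∑ j ∈ range n, 1/((j:ℝ)+1) - ∑ j ∈ range n, 1/(a+(j:ℝ)) := by
      rw [← sum_sub_distrib]
      exact sum_congr rfl fun j _ ↦ by rw [add_comm a (j:ℝ)]
    rw [h2]
    ring
  have hmem : ∀ b : ℝ, 0 < b → b ∈ Set.Ioi (0:ℝ) := fun b hb ↦ hb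
  have hlow : ∀ n : ℕ, 0 ≤ psi a + γ - ∑ j ∈ range n, u j := by
    intro n
    rw [hT n]
    have hcast : ((N + n - 1 : ℕ) : ℝ) + 1 = (N:ℝ) + n := by
      have : 1 ≤ N + n := by omega
      push_cast [Nat.cast_sub this]
      ring
    have hmono := psi_mono (hmem _ (by positivity : (0:ℝ) < ((N+n-1:ℕ):ℝ)+1))
      (hmem _ (by positivity)) (by rw [hcast]; linarith : ((N+n-1:ℕ):ℝ)+1 ≤ a + n)
    rw [psi_nat (N+n-1)] at hmono
    have hharm : (harmonic n : ℝ) ≤ harmonic (N+n-1) := by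
      rw [harm_real, harm_real]
      apply sum_le_sum_of_subset_of_nonneg
      · exact range_subset_range.mpr (by omega)
      · intro i _ _; positivity
    linarith
  have hup : ∀ n : ℕ, psi a + γ - ∑ j ∈ range n, u j ≤ N / ((n:ℝ)+1) := by
    intro n
    rw [hT n]
    have hmono := psi_mono (hmem _ (by positivity : (0:ℝ) < a + n))
      (hmem _ (by positivity : (0:ℝ) < ((N+n:ℕ):ℝ)+1))
      (by push_cast; linarith : a + n ≤ ((N+n:ℕ):ℝ)+1)
    rw [psi_nat (N+n)] at hmono
    have hharm : (harmonic (N+n) : ℝ) - harmonic n ≤ N / ((n:ℝ)+1) := by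
      rw [harm_real, harm_real, ← Finset.sum_Ico_eq_sub _ (by omega : n ≤ N + n)]
      calc ∑ j ∈ Ico n (N+n), 1/((j:ℝ)+1) ≤ ∑ j ∈ Ico n (N+n), 1/((n:ℝ)+1) := by
            apply sum_le_sum
            intro i hi
            have : (n:ℝ) ≤ i := Nat.cast_le.mpr (mem_Ico.mp hi).1
            apply one_div_le_one_div_of_le (by positivity) (by linarith)
        _ = N / ((n:ℝ)+1) := by
            rw [sum_const, Nat.card_Ico]
            simp [Nat.add_sub_cancel_left  ]
            ring
    linarith
  -- squeeze
  have hsq : Tendsto (fun n : ℕ ↦ ∑ j ∈ range n, u j) atTop (𝓝 (psi a + γ)) := by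
    have h0 : Tendsto (fun n : ℕ ↦ psi a + γ - N / ((n:ℝ)+1)) atTop (𝓝 (psi a + γ)) := by
      have : Tendsto (fun n : ℕ ↦ (N:ℝ) / ((n:ℝ)+1)) atTop (𝓝 0) := by
        apply Tendsto.div_atTop tendsto_const_nhds
        exact tendsto_atTop_add_const_right _ _ tendsto_natCast_atTop_atTop
      simpa using tendsto_const_nhds.sub this
    apply tendsto_of_tendsto_of_tendsto_of_le_of_le h0 tendsto_const_nhds
    · intro n; dsimp only; linarith [hup n]
    · intro n; dsimp only; linarith [hlow n]
  have hsummable : Summable u := u_summable ha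
  have h2 := hsummable.hasSum
  have h3 : Tendsto (fun n ↦ ∑ j ∈ range n, u j) atTop (𝓝 (∑' j, u j)) := h2.tendsto_sum_nat
  rwa [tendsto_nhds_unique h3 hsq] at h2


lemma psi_ge {a : ℝ} (ha : 1 ≤ a) : 0 ≤ psi a + γ := by
  have h := psi_mono (Set.mem_Ioi.mpr one_pos) (Set.mem_Ioi.mpr (by linarith : (0:ℝ) < a)) ha
  have h1 : psi 1 = -γ := by
    have := psi_nat 0
    simpa using this
  linarith

lemma harmonic_le {n : ℕ} (hn : 1 ≤ n) : (harmonic n : ℝ) ≤ 1 + Real.log n := by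
  have h := Real.strictAnti_eulerMascheroniSeq'.antitone (hn : 1 ≤ n)
  rw [Real.eulerMascheroniSeq'_one] at h
  rw [Real.eulerMascheroniSeq'] at h
  rw [if_neg (by omega : n ≠ 0)] at h
  linarith

lemma psi_le {a : ℝ} (ha : 1 ≤ a) : psi a + γ ≤ 1 + Real.log (a + 1) := by
  set N := Nat.floor a with hN
  have hN1 : 1 ≤ N := Nat.le_floor (by exact_mod_cast ha)
  have h0 : (0:ℝ) < a := by linarith
  have haN : a ≤ (N:ℝ) + 1 := (Nat.lt_floor_add_one a).le
  have hmono := psi_mono (Set.mem_Ioi.mpr h0) (Set.mem_Ioi.mpr (by positivity : (0:ℝ) < (N:ℝ)+1)) haN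
  rw [psi_nat N] at hmono
  have h2 : (harmonic N : ℝ) ≤ 1 + Real.log N := harmonic_le hN1
  have h3 : Real.log N ≤ Real.log (a+1) := by
    apply Real.log_le_log (by exact_mod_cast hN1)
    linarith [Nat.floor_le h0.le]
  linarith

lemma quad_aux {t w : ℝ} (ht : t ≤ 1) (h : t*t ≤ w) : 1 - w ≤ 2*(1-t) := by
  nlinarith [mul_self_nonneg (1-t)]

lemma key_ineq_s14 {a s : ℝ} (ha : 1 ≤ a) (hs1 : 1 ≤ s) (hs2 : s ≤ 2) (n : ℕ) :
    |1/((n:ℝ)+a)^s - 1/((n:ℝ)+1)^s| ≤ 2*(1/((n:ℝ)+1) - 1/((n:ℝ)+a)) := by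
  set u : ℝ := (n:ℝ)+1 with hu
  set v : ℝ := (n:ℝ)+a with hv
  have hu1 : 1 ≤ u := by rw [hu]; linarith [Nat.cast_nonneg (α := ℝ) n]
  have hu0 : 0 < u := by linarith
  have hv0 : 0 < v := by rw [hv]; have := Nat.cast_nonneg (α := ℝ) n; linarith
  have huv : u ≤ v := by rw [hu, hv]; linarith
  have hus : 0 < u ^ s := Real.rpow_pos_of_pos hu0 s
  have hvs : 0 < v ^ s := Real.rpow_pos_of_pos hv0 s
  have h1 : 1/v^s ≤ 1/u^s :=
    one_div_le_one_div_of_le hus (Real.rpow_le_rpow hu0.le huv (by linarith))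
  rw [abs_of_nonpos (by linarith), neg_sub]
  set t : ℝ := u/v with ht
  have ht0 : 0 < t := by positivity
  have ht1 : t ≤ 1 := by rw [ht, div_le_one hv0]; exact huv
  have hts : t^s = u^s/v^s := by rw [ht, Real.div_rpow hu0.le hv0.le]
  have heq : 1/u^s - 1/v^s = (1/u^s) * (1 - t^s) := by
    rw [hts]; field_simp
  have ht2 : t^(2:ℝ) = t*t := by
    rw [show (2:ℝ) = ((2:ℕ):ℝ) by norm_num, Real.rpow_natCast]; ring
  have h2 : t^(2:ℝ) ≤ t^s := Real.rpow_le_rpow_of_exponent_ge ht0 ht1 hs2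
  have h4 : 1 - t^s ≤ 2*(1-t) := quad_aux ht1 (by rw [← ht2]; exact h2)
  have h3 : 1/u^s ≤ 1/u := by
    apply one_div_le_one_div_of_le hu0
    calc u = u ^ (1:ℝ) := (Real.rpow_one u).symm
    _ ≤ u ^ s := Real.rpow_le_rpow_of_exponent_le hu1 hs1
  have h5 : (1/u) * (2*(1-t)) = 2*(1/u - 1/v) := by
    rw [ht]; field_simp; try ring
  have h6 : 0 ≤ 1 - t^s := by
    have : t^s ≤ 1 := Real.rpow_le_one ht0.le ht1 (by linarith)
    linarith
  calc 1/u^s - 1/v^s = (1/u^s) * (1 - t^s) := heq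
    _ ≤ (1/u) * (2*(1-t)) := mul_le_mul h3 h4 h6 (by positivity)
    _ = 2*(1/u - 1/v) := h5

lemma summable_hz {s a : ℝ} (hs : 1 < s) (ha : 1 ≤ a) :
    Summable (fun n : ℕ ↦ 1/((n:ℝ)+a)^s) := by
  have h1 : Summable (fun n : ℕ ↦ 1/((n:ℝ)+1)^s) := by
    have := (summable_nat_add_iff 1).mpr (Real.summable_one_div_nat_rpow.mpr hs)
    apply this.congr
    intro j; push_cast; ring_nf
  apply h1.of_nonneg_of_le (fun n ↦ by positivity)
  intro n
  apply one_div_le_one_div_of_le (Real.rpow_pos_of_pos (by positivity) s)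
  exact Real.rpow_le_rpow (by positivity) (by linarith) (by linarith)

lemma hzeta_diff_eq {s a : ℝ} (hs : 1 < s) (ha : 1 ≤ a) :
    hzeta s a - hzeta s 1 = ∑' n : ℕ, (1/((n:ℝ)+a)^s - 1/((n:ℝ)+1)^s) :=
  (Summable.tsum_sub (summable_hz hs ha) (summable_hz hs le_rfl)).symm

lemma tendsto_hzeta_diff {a : ℝ} (ha : 1 ≤ a) :
    Tendsto (fun s : ℝ ↦ hzeta s a - hzeta s 1) (𝓝[>] 1) (𝓝 (-(psi a + γ))) := by
  have hbd : Summable (fun n : ℕ ↦ 2*(1/((n:ℝ)+1) - 1/((n:ℝ)+a))) := (u_summable ha).mul_left 2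
  have hmain : Tendsto (fun s : ℝ ↦ ∑' n : ℕ, (1/((n:ℝ)+a)^s - 1/((n:ℝ)+1)^s)) (𝓝[>] 1)
      (𝓝 (∑' n : ℕ, (1/((n:ℝ)+a) - 1/((n:ℝ)+1)))) := by
    apply tendsto_tsum_of_dominated_convergence hbd
    · intro n
      have hc : ∀ b : ℝ, 0 < b → Tendsto (fun s : ℝ ↦ b ^ s) (𝓝[>] 1) (𝓝 b) := by
        intro b hb
        have h := (continuousAt_const_rpow (a := b) (b := (1:ℝ)) hb.ne').tendsto
        rw [Real.rpow_one b] at h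
        exact h.mono_left nhdsWithin_le_nhds
      have h1 := (hc _ (by positivity : (0:ℝ) < (n:ℝ)+a))
      have h2 := (hc _ (by positivity : (0:ℝ) < (n:ℝ)+1))
      exact ((tendsto_const_nhds.div h1 (by positivity)).sub
        (tendsto_const_nhds.div h2 (by positivity)))
    · filter_upwards [Ioo_mem_nhdsGT_of_mem (Set.mem_Ico.mpr ⟨le_rfl, one_lt_two⟩)] with s hs n
      rw [Real.norm_eq_abs]
      exact key_ineq_s14 ha hs.1.le hs.2.le n
  have heq : ∑' n : ℕ, (1/((n:ℝ)+a) - 1/((n:ℝ)+1)) = -(psi a + γ) := by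
    rw [← (hasSum_psi ha).tsum_eq, ← tsum_neg]
    exact tsum_congr fun n ↦ by ring
  rw [heq] at hmain
  apply hmain.congr'
  filter_upwards [self_mem_nhdsWithin] with s hs
  exact (hzeta_diff_eq hs ha).symm

lemma unif_bound {a s : ℝ} (ha : 1 ≤ a) (hs1 : 1 < s) (hs2 : s ≤ 2) :
    |hzeta s a - hzeta s 1| ≤ 2*(psi a + γ) := by
  rw [hzeta_diff_eq hs1 ha]
  have hfs : Summable (fun n : ℕ ↦ 1/((n:ℝ)+a)^s - 1/((n:ℝ)+1)^s) :=
    (summable_hz hs1 ha).sub (summable_hz hs1 le_rfl)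
  have hgs : Summable (fun n : ℕ ↦ 2*(1/((n:ℝ)+1) - 1/((n:ℝ)+a))) := (u_summable ha).mul_left 2
  have hg_eq : ∑' n : ℕ, 2*(1/((n:ℝ)+1) - 1/((n:ℝ)+a)) = 2*(psi a + γ) := by
    rw [tsum_mul_left, (hasSum_psi ha).tsum_eq]
  rw [abs_le]
  constructor
  · have h := Summable.tsum_le_tsum (fun n ↦ (abs_le.mp (key_ineq_s14 ha hs1.le hs2 n)).1) hgs.neg hfs
    rw [tsum_neg, hg_eq] at h
    exact h
  · have h := Summable.tsum_le_tsum (fun n ↦ (abs_le.mp (key_ineq_s14 ha hs1.le hs2 n)).2) hfs hgs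
    rw [hg_eq] at h
    exact h


lemma tendsto_Z : Tendsto (fun s : ℝ ↦ hzeta s 1 - 1/(s-1)) (𝓝[>] 1) (𝓝 γ) := by
  suffices aux2 : Tendsto (fun s : ℝ ↦ (∑' n : ℕ, 1 / (n + 1 : ℝ) ^ s) - 1 / (s - 1))
      (𝓝[>] 1) (𝓝 (1 - ZetaAsymptotics.termTSum 1)) by
    have h := ZetaAsymptotics.term_tsum_one.tsum_eq
    rw [← ZetaAsymptotics.termTSum, eq_sub_iff_add_eq, ← eq_sub_iff_add_eq'] at h
    simpa only [hzeta, h] using aux2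
  apply Tendsto.congr'
  · filter_upwards [self_mem_nhdsWithin] with s hs using (ZetaAsymptotics.zeta_limit_aux1 hs).symm
  · apply tendsto_const_nhds.sub
    rw [← one_mul (ZetaAsymptotics.termTSum 1)]
    apply (tendsto_id.mono_left nhdsWithin_le_nhds).mul
    have := ZetaAsymptotics.continuousOn_termTSum.continuousWithinAt (Set.self_mem_Ici)
    exact Tendsto.mono_left this (nhdsWithin_mono _ Set.Ioi_subset_Ici_self)

lemma summable_pnat {f : ℕ+ → ℝ} (h : Summable (fun n : ℕ ↦ f n.succPNat)) : Summable f :=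
  Equiv.pnatEquivNat.symm.summable_iff.mp h

lemma summable_pnat_pow_s14 {r : ℕ} (hr : 2 ≤ r) : Summable (fun m : ℕ+ ↦ 1/(m:ℝ)^r) := by
  apply summable_pnat
  have h1 : Summable (fun n : ℕ ↦ 1/((n:ℝ)+1)^r) := by
    have := (summable_nat_add_iff 1).mpr (Real.summable_one_div_nat_pow.mpr (by omega : 1 < r))
    apply this.congr; intro j; push_cast; ring_nf
  apply h1.congr
  intro n
  norm_num [Nat.succPNat]

lemma summable_pnat_bound (C : ℝ) :
    Summable (fun m : ℕ+ ↦ C/(m:ℝ)^2 + 2*((m:ℝ)^(-(3/2):ℝ))) := by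
  apply summable_pnat
  have h1 : Summable (fun n : ℕ ↦ C/((n:ℝ)+1)^2) := by
    have h := (summable_nat_add_iff 1).mpr (Real.summable_one_div_nat_pow.mpr one_lt_two)
    apply (h.mul_left C).congr
    intro j; push_cast; field_simp
  have h2 : Summable (fun n : ℕ ↦ 2*(((n:ℝ)+1)^(-(3/2):ℝ))) := by
    have h := (summable_nat_add_iff 1).mpr (Real.summable_nat_rpow.mpr (by norm_num : -(3/2:ℝ) < -1))
    apply (h.mul_left 2).congr
    intro j; push_cast; ring_nf
  apply (h1.add h2).congr
  intro n
  have : ((n.succPNat : ℕ) : ℝ) = (n:ℝ)+1 := by simp [Nat.succPNat]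
  norm_num [this]


lemma hm1 (m : ℕ+) : (1:ℝ) ≤ (m:ℝ) := by exact_mod_cast m.one_le

lemma ham {x : ℝ} (hx : 0 < x) (m : ℕ+) : 1 ≤ (m:ℝ) * x + 1 := by
  have h1 : (1:ℝ) ≤ (m:ℝ) := hm1 m
  nlinarith

lemma psi_c_summable {r : ℕ} (hr : 2 ≤ r) {x : ℝ} (hx : 0 < x) :
    Summable (fun m : ℕ+ ↦ (psi ((m:ℝ)*x+1) + γ) * (1/(m:ℝ)^r)) := by
  set C : ℝ := 1 + Real.log (x + 2) with hC
  apply (summable_pnat_bound C).of_nonneg_of_le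
  · intro m
    have := psi_ge (ham hx m)
    positivity
  · intro m
    have h1 : (1:ℝ) ≤ (m:ℝ) := hm1 m
    have hm0 : (0:ℝ) < (m:ℝ) := by linarith
    -- psi bound
    have hb1 : psi ((m:ℝ)*x+1) + γ ≤ C + Real.log m := by
      have := psi_le (ham hx m)
      have h2 : Real.log ((m:ℝ)*x+1+1) ≤ Real.log (x+2) + Real.log m := by
        rw [← Real.log_mul (by positivity) (by positivity)]
        apply Real.log_le_log (by positivity)
        nlinarith
      rw [hC]; linarith
    -- power bound
    have hb2 : (1:ℝ)/(m:ℝ)^r ≤ 1/(m:ℝ)^2 := by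
      apply one_div_le_one_div_of_le (by positivity)
      exact pow_le_pow_right₀ h1 hr
    have hnn : (0:ℝ) ≤ psi ((m:ℝ)*x+1) + γ := psi_ge (ham hx m)
    have hlog : Real.log m ≤ 2*(m:ℝ)^((1:ℝ)/2) := by
      have h3 : Real.log ((m:ℝ)^((1:ℝ)/2)) = (1/2) * Real.log m := Real.log_rpow hm0 _
      have h4 : Real.log ((m:ℝ)^((1:ℝ)/2)) ≤ (m:ℝ)^((1:ℝ)/2) := by
        have := Real.log_le_sub_one_of_pos (Real.rpow_pos_of_pos hm0 ((1:ℝ)/2))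
        linarith
      linarith
    have hCpos : 0 ≤ C := by
      have : (0:ℝ) ≤ Real.log (x+2) := Real.log_nonneg (by linarith)
      rw [hC]; linarith
    calc (psi ((m:ℝ)*x+1) + γ) * (1/(m:ℝ)^r)
        ≤ (C + Real.log m) * (1/(m:ℝ)^2) := by
          exact mul_le_mul hb1 hb2 (by positivity) (add_nonneg hCpos (Real.log_nonneg h1))
      _ ≤ (C + 2*(m:ℝ)^((1:ℝ)/2)) * (1/(m:ℝ)^2) := by
          apply mul_le_mul_of_nonneg_right (by linarith) (by positivity)
      _ = C/(m:ℝ)^2 + 2*((m:ℝ)^((1:ℝ)/2) / (m:ℝ)^2) := by ring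
      _ = C/(m:ℝ)^2 + 2*((m:ℝ)^(-(3/2):ℝ)) := by
          congr 1
          congr 1
          rw [show ((m:ℝ)^2 : ℝ) = (m:ℝ)^((2:ℕ):ℝ) by rw [Real.rpow_natCast],
            ← Real.rpow_sub hm0]
          norm_num


theorem stmt14 (r : ℕ) (hr : 2 ≤ r) (x : ℝ) (hx : 0 < x) :
    Tendsto
      (fun s : ℝ => (∑' m : ℕ+, hzeta s ((m : ℝ) * x + 1) / (m : ℝ) ^ r) - zetaR r / (s - 1))
      (𝓝[>] 1)
      (𝓝 (-∑' m : ℕ+, psi ((m : ℝ) * x + 1) / (m : ℝ) ^ r)) := by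
  set c : ℕ+ → ℝ := fun m ↦ 1/(m:ℝ)^r with hc
  have hc_nonneg : ∀ m, 0 ≤ c m := fun m ↦ by positivity
  have hc_sum : Summable c := summable_pnat_pow_s14 hr
  have hzetaRr : zetaR r = ∑' m : ℕ+, c m := by
    rw [zetaR]
    exact tsum_congr fun m ↦ by rw [hc, Real.rpow_natCast]
  have hpsic := psi_c_summable hr hx
  have hgc_sum : Summable (fun m : ℕ+ ↦ γ * c m) := hc_sum.mul_left γ
  have hpsic' : Summable (fun m : ℕ+ ↦ psi ((m:ℝ)*x+1) * c m) := by
    apply (hpsic.sub hgc_sum).congr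
    intro m; ring
  -- nonnegativity / monotonicity of hzeta
  have hz_le : ∀ s : ℝ, 1 < s → ∀ m : ℕ+, |hzeta s ((m:ℝ)*x+1)| ≤ hzeta s 1 := by
    intro s hs m
    have h1 : 0 ≤ hzeta s ((m:ℝ)*x+1) := tsum_nonneg fun n ↦ by positivity
    rw [abs_of_nonneg h1, hzeta, hzeta]
    apply Summable.tsum_le_tsum _ (summable_hz hs (ham hx m)) (summable_hz hs le_rfl)
    intro n
    apply one_div_le_one_div_of_le (Real.rpow_pos_of_pos (by positivity) s)
    apply Real.rpow_le_rpow (by positivity) _ (by linarith)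
    have := ham hx m
    linarith
  have hz_summ : ∀ s : ℝ, 1 < s → Summable (fun m : ℕ+ ↦ hzeta s ((m:ℝ)*x+1) * c m) := by
    intro s hs
    apply (hc_sum.mul_left (hzeta s 1)).of_norm_bounded
    intro m
    rw [norm_mul, Real.norm_eq_abs, Real.norm_eq_abs, abs_of_nonneg (hc_nonneg m)]
    exact mul_le_mul_of_nonneg_right (hz_le s hs m) (hc_nonneg m)
  have hdiff_summ : ∀ s : ℝ, 1 < s →
      Summable (fun m : ℕ+ ↦ (hzeta s ((m:ℝ)*x+1) - hzeta s 1) * c m) := by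
    intro s hs
    apply ((hz_summ s hs).sub (hc_sum.mul_left (hzeta s 1))).congr
    intro m; ring
  -- main pointwise identity
  have key : ∀ s : ℝ, 1 < s →
      (∑' m : ℕ+, hzeta s ((m : ℝ) * x + 1) / (m : ℝ) ^ r) - zetaR r / (s - 1)
      = (∑' m : ℕ+, (hzeta s ((m:ℝ)*x+1) - hzeta s 1) * c m)
        + (hzeta s 1 - 1/(s-1)) * (∑' m : ℕ+, c m) := by
    intro s hs
    have e0 : (∑' m : ℕ+, hzeta s ((m : ℝ) * x + 1) / (m : ℝ) ^ r)
        = ∑' m : ℕ+, hzeta s ((m:ℝ)*x+1) * c m :=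
      tsum_congr fun m ↦ by rw [hc]; ring
    have e1 : ∑' m : ℕ+, (hzeta s ((m:ℝ)*x+1) - hzeta s 1) * c m
        = (∑' m : ℕ+, hzeta s ((m:ℝ)*x+1) * c m) - hzeta s 1 * ∑' m : ℕ+, c m := by
      rw [← tsum_mul_left, ← Summable.tsum_sub (hz_summ s hs) (hc_sum.mul_left (hzeta s 1))]
      exact tsum_congr fun m ↦ by ring
    rw [e0, e1, hzetaRr]
    ring
  -- limits
  have lim1 : Tendsto (fun s : ℝ ↦ ∑' m : ℕ+, (hzeta s ((m:ℝ)*x+1) - hzeta s 1) * c m)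
      (𝓝[>] 1) (𝓝 (∑' m : ℕ+, (-(psi ((m:ℝ)*x+1) + γ)) * c m)) := by
    apply tendsto_tsum_of_dominated_convergence (hpsic.mul_left 2).abs
    · intro m
      exact (tendsto_hzeta_diff (ham hx m)).mul_const (c m)
    · filter_upwards [Ioo_mem_nhdsGT_of_mem (Set.mem_Ico.mpr ⟨le_rfl, one_lt_two⟩)] with s hs m
      rw [norm_mul, Real.norm_eq_abs, Real.norm_eq_abs, abs_of_nonneg (hc_nonneg m)]
      have h := unif_bound (ham hx m) hs.1 hs.2.le
      have h2 : (0 :ℝ) ≤ 2 * ((psi ((m:ℝ)*x+1) + γ) * c m) := by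
        have := psi_ge (ham hx m); have := hc_nonneg m; positivity
      rw [abs_of_nonneg h2]
      calc |hzeta s ((m:ℝ)*x+1) - hzeta s 1| * c m ≤ (2*(psi ((m:ℝ)*x+1) + γ)) * c m :=
            mul_le_mul_of_nonneg_right h (hc_nonneg m)
        _ = 2 * ((psi ((m:ℝ)*x+1) + γ) * c m) := by ring
  have lim2 : Tendsto (fun s : ℝ ↦ (hzeta s 1 - 1/(s-1)) * (∑' m : ℕ+, c m))
      (𝓝[>] 1) (𝓝 (γ * (∑' m : ℕ+, c m))) := tendsto_Z.mul_const _
  have hval : (∑' m : ℕ+, (-(psi ((m:ℝ)*x+1) + γ)) * c m) + γ * (∑' m : ℕ+, c m)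
      = -∑' m : ℕ+, psi ((m : ℝ) * x + 1) / (m : ℝ) ^ r := by
    have e2 : ∑' m : ℕ+, (-(psi ((m:ℝ)*x+1) + γ)) * c m
        = -(∑' m : ℕ+, psi ((m:ℝ)*x+1) * c m) - γ * (∑' m : ℕ+, c m) := by
      rw [← tsum_mul_left (a := γ), ← tsum_neg, ← Summable.tsum_sub (hpsic'.neg) (hc_sum.mul_left γ)]
      exact tsum_congr fun m ↦ by ring
    have e3 : ∑' m : ℕ+, psi ((m : ℝ) * x + 1) / (m : ℝ) ^ r
        = ∑' m : ℕ+, psi ((m:ℝ)*x+1) * c m := tsum_congr fun m ↦ by rw [hc]; ring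
    rw [e2, e3]
    ring
  have := lim1.add lim2
  rw [hval] at this
  apply this.congr'
  filter_upwards [self_mem_nhdsWithin] with s hs
  exact (key s hs).symm
end
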